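/- arXiv:2009.06769 — 6 statements merged into one kernel-verified Lean document; each statement's English description precedes it below -/
import Mathlib

section
/- Let A be a diagonalizable d×d real matrix with eigenvalues 0 < Λ₁ ≤ … ≤ Λ_d, and let F : [0,∞) × ℝᵈ → ℝᵈ be continuous and satisfy |F(t,x)| ≤ c*·|x|^{1+α} for all t ≥ 0 and |x| ≤ ε*, for some constants c*, ε*, α > 0. Suppose y ∈ C¹([0,∞), ℝᵈ) solves y' + A y = F(t,y) and y(t) → 0 as t → ∞. Then there exists C₁ > 0 such that |y(t)| ≤ C₁ e^{-Λ₁ t} for all t ≥ 0. -/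
open Matrix Set

lemma auxExpDeriv (c t : ℝ) : HasDerivAt (fun s => Real.exp (c*s)) (c * Real.exp (c*t)) t := by
  have h := ((hasDerivAt_id t).const_mul c).exp
  simpa [mul_comm] using h

lemma auxAnti {T : ℝ} {f g : ℝ → ℝ} (hf : ∀ t ∈ Ici T, HasDerivWithinAt f (g t) (Ici T) t)
    (hg : ∀ t ∈ Ici T, g t ≤ 0) : AntitoneOn f (Ici T) := by
  apply antitoneOn_of_deriv_nonpos (convex_Ici T)
  · exact fun t ht => (hf t ht).continuousWithinAt
  · intro t ht
    rw [interior_Ici] at ht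
    exact (((hf t (mem_Ici.mpr (le_of_lt (mem_Ioi.mp ht)))).hasDerivAt (Ici_mem_nhds ht)).differentiableAt).differentiableWithinAt
  · intro t ht
    rw [interior_Ici] at ht
    rw [((hf t (mem_Ici.mpr (le_of_lt (mem_Ioi.mp ht)))).hasDerivAt (Ici_mem_nhds ht)).deriv]
    exact hg t (mem_Ici.mpr (le_of_lt (mem_Ioi.mp ht)))

lemma auxMulVec {d : ℕ} (M : Matrix (Fin d) (Fin d) ℝ) (x : EuclideanSpace ℝ (Fin d)) (i : Fin d) :
    Matrix.toEuclideanLin M x i = (M *ᵥ x) i := rfl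

lemma auxComp {d : ℕ} (M N : Matrix (Fin d) (Fin d) ℝ) (x : EuclideanSpace ℝ (Fin d)) :
    Matrix.toEuclideanLin M (Matrix.toEuclideanLin N x) = Matrix.toEuclideanLin (M*N) x := by
  ext i
  show (M *ᵥ (N *ᵥ x)) i = ((M * N) *ᵥ x) i
  rw [Matrix.mulVec_mulVec]

lemma auxInnerDiag {d : ℕ} (d₀ : Fin d → ℝ) (Λ₁ : ℝ) (h : ∀ i, Λ₁ ≤ d₀ i)
    (x : EuclideanSpace ℝ (Fin d)) :
    Λ₁ * ‖x‖^2 ≤ (inner ℝ (Matrix.toEuclideanLin (Matrix.diagonal d₀) x) x : ℝ) := by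
  have h1 : (inner ℝ (Matrix.toEuclideanLin (Matrix.diagonal d₀) x) x : ℝ)
      = ∑ i, d₀ i * (x i * x i) := by
    rw [PiLp.inner_apply]
    refine Finset.sum_congr rfl fun i _ => ?_
    simp [auxMulVec, Matrix.mulVec_diagonal, RCLike.inner_apply]
    ring
  have h2 : ‖x‖^2 = ∑ i, x i * x i := by
    rw [← real_inner_self_eq_norm_sq, PiLp.inner_apply]
    exact Finset.sum_congr rfl fun i _ => by simp [RCLike.inner_apply]; ring
  rw [h1, h2, Finset.mul_sum]
  exact Finset.sum_le_sum fun i _ => by nlinarith [mul_self_nonneg (x i), h i]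

set_option maxHeartbeats 1600000 in
/-- Upper bound `|y(t)| ≤ C₁ e^{-Λ₁ t}` for a decaying solution of `y' + Ay = F(t,y)`,
where `A` is diagonalizable with positive eigenvalues and smallest eigenvalue `Λ₁`. -/
theorem stmt_7 {d : ℕ} (A S : Matrix (Fin d) (Fin d) ℝ) (hS : IsUnit S.det)
    (d₀ : Fin d → ℝ) (hpos : ∀ i, 0 < d₀ i)
    (hA : A = S⁻¹ * Matrix.diagonal d₀ * S)
    (Λ₁ : ℝ) (hΛ₁ : (∀ i, Λ₁ ≤ d₀ i) ∧ ∃ i, d₀ i = Λ₁)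
    (F : ℝ → EuclideanSpace ℝ (Fin d) → EuclideanSpace ℝ (Fin d))
    (hFcont : ContinuousOn (fun p : ℝ × EuclideanSpace ℝ (Fin d) => F p.1 p.2)
      (Ici (0 : ℝ) ×ˢ univ))
    (cstar εstar α : ℝ) (hc : 0 < cstar) (hε : 0 < εstar) (hα : 0 < α)
    (hFbound : ∀ t ≥ (0 : ℝ), ∀ x : EuclideanSpace ℝ (Fin d), ‖x‖ ≤ εstar →
      ‖F t x‖ ≤ cstar * ‖x‖ ^ (1 + α))
    (y : ℝ → EuclideanSpace ℝ (Fin d))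
    (hy : ∀ t ∈ Ici (0 : ℝ),
      HasDerivWithinAt y (F t (y t) - Matrix.toEuclideanLin A (y t)) (Ici (0 : ℝ)) t)
    (hdecay : Filter.Tendsto y Filter.atTop (nhds 0)) :
    ∃ C₁ > 0, ∀ t ≥ (0 : ℝ), ‖y t‖ ≤ C₁ * Real.exp (-Λ₁ * t) := by
  classical
  obtain ⟨hlb, i₀, hi₀⟩ := hΛ₁
  have hΛpos : 0 < Λ₁ := hi₀ ▸ hpos i₀
  set E : EuclideanSpace ℝ (Fin d) →L[ℝ] EuclideanSpace ℝ (Fin d) :=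
    LinearMap.toContinuousLinearMap (Matrix.toEuclideanLin S) with hE
  set E' : EuclideanSpace ℝ (Fin d) →L[ℝ] EuclideanSpace ℝ (Fin d) :=
    LinearMap.toContinuousLinearMap (Matrix.toEuclideanLin S⁻¹) with hE'
  have hEapp : ∀ x, E x = Matrix.toEuclideanLin S x := fun x => rfl
  have hE'app : ∀ x, E' x = Matrix.toEuclideanLin S⁻¹ x := fun x => rfl
  set u : ℝ → EuclideanSpace ℝ (Fin d) := fun t => E (y t) with hu
  have hyu : ∀ t, y t = E' (u t) := by
    intro t
    show y t = E' (E (y t))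
    rw [hEapp, hE'app, auxComp, Matrix.nonsing_inv_mul S hS]
    ext i
    show y t i = ((1 : Matrix (Fin d) (Fin d) ℝ) *ᵥ y t) i
    rw [Matrix.one_mulVec]
  have hnormy : ∀ t, ‖y t‖ ≤ ‖E'‖ * ‖u t‖ := fun t => by
    conv_lhs => rw [hyu t]
    exact E'.le_opNorm _
  set K : ℝ := ‖E‖ * cstar * ‖E'‖ ^ (1+α) with hK
  have hK0 : 0 ≤ K := by
    have := norm_nonneg E; have := norm_nonneg E'
    positivity
  have hconj : ∀ z, Matrix.toEuclideanLin S (Matrix.toEuclideanLin A z)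
      = Matrix.toEuclideanLin (Matrix.diagonal d₀) (E z) := by
    intro z
    rw [auxComp, hEapp z, auxComp]
    congr 1
    rw [hA, ← Matrix.mul_assoc, ← Matrix.mul_assoc, Matrix.mul_nonsing_inv S hS, Matrix.one_mul]
  set w : ℝ → EuclideanSpace ℝ (Fin d) :=
    fun t => E (F t (y t)) - Matrix.toEuclideanLin (Matrix.diagonal d₀) (u t) with hw
  have hu' : ∀ t ∈ Ici (0:ℝ), HasDerivWithinAt u (w t) (Ici 0) t := by
    intro t ht
    have h1 := (E.hasFDerivAt (x := y t)).comp_hasDerivWithinAt t (hy t ht)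
    have h2 : E (F t (y t) - Matrix.toEuclideanLin A (y t)) = w t := by
      rw [map_sub]
      show _ - E (Matrix.toEuclideanLin A (y t)) = _ - _
      rw [hEapp (Matrix.toEuclideanLin A (y t)), hconj (y t)]
    rw [← h2]
    exact h1
  set φ : ℝ → ℝ := fun t => (inner ℝ (u t) (u t) : ℝ) with hφ
  set φ' : ℝ → ℝ := fun t => (inner ℝ (u t) (w t) : ℝ) + (inner ℝ (w t) (u t) : ℝ) with hφ'
  have hφd : ∀ t ∈ Ici (0:ℝ), HasDerivWithinAt φ (φ' t) (Ici 0) t :=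
    fun t ht => HasDerivWithinAt.inner ℝ (hu' t ht) (hu' t ht)
  have hφnorm : ∀ t, φ t = ‖u t‖^2 := fun t => real_inner_self_eq_norm_sq _
  have hφ0 : ∀ t, 0 ≤ φ t := fun t => by rw [hφnorm]; positivity
  -- key pointwise bound
  have hkey : ∀ t, 0 ≤ t → ‖y t‖ ≤ εstar →
      φ' t ≤ 2 * (K * ‖u t‖ ^ (1+α) * ‖u t‖ - Λ₁ * ‖u t‖^2) := by
    intro t ht hyt
    have h1 : φ' t = 2 * (inner ℝ (w t) (u t) : ℝ) := by
      simp only [hφ']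
      linarith [real_inner_comm (u t) (w t)]
    have h2 : (inner ℝ (w t) (u t) : ℝ)
        = (inner ℝ (E (F t (y t))) (u t) : ℝ)
          - (inner ℝ (Matrix.toEuclideanLin (Matrix.diagonal d₀) (u t)) (u t) : ℝ) := by
      rw [hw]; rw [inner_sub_left]
    have h3 : (inner ℝ (E (F t (y t))) (u t) : ℝ) ≤ ‖E (F t (y t))‖ * ‖u t‖ :=
      real_inner_le_norm _ _
    have h4 : Λ₁ * ‖u t‖^2 ≤ (inner ℝ (Matrix.toEuclideanLin (Matrix.diagonal d₀) (u t)) (u t) : ℝ) :=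
      auxInnerDiag d₀ Λ₁ hlb (u t)
    have h5 : ‖E (F t (y t))‖ ≤ K * ‖u t‖ ^ (1+α) := by
      have hb := hFbound t ht (y t) hyt
      have h6 : ‖y t‖ ^ (1+α) ≤ (‖E'‖ * ‖u t‖) ^ (1+α) :=
        Real.rpow_le_rpow (norm_nonneg _) (hnormy t) (by positivity)
      have h7 : (‖E'‖ * ‖u t‖) ^ (1+α) = ‖E'‖ ^ (1+α) * ‖u t‖ ^ (1+α) :=
        Real.mul_rpow (norm_nonneg _) (norm_nonneg _)
      have h8 : ‖E (F t (y t))‖ ≤ ‖E‖ * ‖F t (y t)‖ := E.le_opNorm _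
      have h9 : ‖E‖ * ‖F t (y t)‖ ≤ ‖E‖ * (cstar * ‖y t‖ ^ (1+α)) :=
        mul_le_mul_of_nonneg_left hb (norm_nonneg _)
      have h10 : 0 ≤ ‖E‖ := norm_nonneg _
      calc ‖E (F t (y t))‖ ≤ ‖E‖ * ‖F t (y t)‖ := h8
        _ ≤ ‖E‖ * (cstar * ‖y t‖ ^ (1+α)) := h9
        _ ≤ ‖E‖ * (cstar * (‖E'‖ ^ (1+α) * ‖u t‖ ^ (1+α))) := by
            rw [h7] at h6
            exact mul_le_mul_of_nonneg_left (mul_le_mul_of_nonneg_left h6 hc.le) h10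
        _ = K * ‖u t‖ ^ (1+α) := by rw [hK]; ring
    have h12 : 0 ≤ ‖u t‖ := norm_nonneg _
    have h13 : ‖E (F t (y t))‖ * ‖u t‖ ≤ K * ‖u t‖ ^ (1+α) * ‖u t‖ :=
      mul_le_mul_of_nonneg_right h5 h12
    have h14 : (inner ℝ (E (F t (y t))) (u t) : ℝ) ≤ K * ‖u t‖ ^ (1+α) * ‖u t‖ := le_trans h3 h13
    linarith [h1, h2, h4, h14]
  -- rate constants
  set lam : ℝ := Λ₁ * (4+α) / (2*(2+α)) with hlam
  have hlam0 : 0 < lam := by rw [hlam]; positivity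
  have hlamlt : lam < Λ₁ := by
    rw [hlam, div_lt_iff₀ (by positivity : (0:ℝ) < 2*(2+α))]
    ring_nf
    nlinarith [mul_pos hΛpos hα]
  set δ : ℝ := α * Λ₁ / 2 with hδdef
  have hδ0 : 0 < δ := by rw [hδdef]; positivity
  have hδeq : (2+α) * lam - 2*Λ₁ = δ := by
    rw [hlam, hδdef]; field_simp; ring
  set ρ : ℝ := ((Λ₁ - lam)/(K+1)) ^ (1/α) with hρ
  have hρ0 : 0 < ρ := by
    rw [hρ]
    exact Real.rpow_pos_of_pos (div_pos (by linarith) (by linarith)) _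
  have hρα : (K+1) * ρ^α = Λ₁ - lam := by
    have hbase : (0:ℝ) ≤ (Λ₁ - lam)/(K+1) := le_of_lt (div_pos (by linarith) (by linarith))
    have h : ρ^α = (Λ₁ - lam)/(K+1) := by
      rw [hρ, ← Real.rpow_mul hbase, one_div, inv_mul_cancel₀ (ne_of_gt hα), Real.rpow_one]
    rw [h]
    field_simp
  -- choose T₀
  have hynorm0 : Filter.Tendsto (fun t => ‖y t‖) Filter.atTop (nhds 0) := by
    simpa using hdecay.norm
  have hu0 : Filter.Tendsto (fun t => ‖u t‖) Filter.atTop (nhds 0) := by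
    have h := (E.continuous.tendsto 0).comp hdecay
    rw [map_zero] at h
    simpa using h.norm
  obtain ⟨T₁, hT₁⟩ := Filter.eventually_atTop.mp
    ((hynorm0.eventually_lt_const hε).and (hu0.eventually_lt_const hρ0))
  set T₀ : ℝ := max 0 T₁ with hT₀
  have hT₀0 : (0:ℝ) ≤ T₀ := le_max_left _ _
  have hsub : Ici T₀ ⊆ Ici (0:ℝ) := Ici_subset_Ici.mpr hT₀0
  have hsmall : ∀ t ∈ Ici T₀, ‖y t‖ ≤ εstar ∧ ‖u t‖ ≤ ρ := by
    intro t ht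
    have h := hT₁ t (le_trans (le_max_right 0 T₁) ht)
    exact ⟨h.1.le, h.2.le⟩
  have hφdT : ∀ t ∈ Ici T₀, HasDerivWithinAt φ (φ' t) (Ici T₀) t :=
    fun t ht => (hφd t (hsub ht)).mono hsub
  -- Step 1 : decay at rate lam
  set ψ : ℝ → ℝ := fun t => Real.exp (2*lam*t) * φ t with hψ
  set ψ' : ℝ → ℝ := fun t => 2*lam*Real.exp (2*lam*t) * φ t + Real.exp (2*lam*t) * φ' t with hψ'd
  have hψd : ∀ t ∈ Ici T₀, HasDerivWithinAt ψ (ψ' t) (Ici T₀) t := by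
    intro t ht
    exact ((auxExpDeriv (2*lam) t).hasDerivWithinAt).mul (hφdT t ht)
  have hψ'le : ∀ t ∈ Ici T₀, ψ' t ≤ 0 := by
    intro t ht
    obtain ⟨hyε, huρ⟩ := hsmall t ht
    have ht0 : 0 ≤ t := le_trans hT₀0 ht
    have hk := hkey t ht0 hyε
    have hexp : (0:ℝ) < Real.exp (2*lam*t) := Real.exp_pos _
    have hsplit : ‖u t‖ ^ ((1:ℝ)+α) = ‖u t‖ * ‖u t‖^α := by
      rw [Real.rpow_add' (norm_nonneg (u t)) (by positivity : (1:ℝ)+α ≠ 0), Real.rpow_one]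
    have hα1 : K * ‖u t‖^α ≤ Λ₁ - lam := by
      have h := Real.rpow_le_rpow (norm_nonneg (u t)) huρ hα.le
      have hρnn : (0:ℝ) ≤ ρ^α := Real.rpow_nonneg hρ0.le _
      linarith [mul_le_mul_of_nonneg_left h hK0, hρα, hρnn, hK0]
    have hmain : φ' t + 2*lam*φ t ≤ 0 := by
      rw [hφnorm t]
      rw [hsplit] at hk
      nlinarith [mul_le_mul_of_nonneg_right hα1 (sq_nonneg ‖u t‖), norm_nonneg (u t),
        Real.rpow_nonneg (norm_nonneg (u t)) α]
    have hfinal := mul_le_mul_of_nonneg_left hmain hexp.le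
    simp only [hψ'd]
    nlinarith [hfinal]
  have hψanti := auxAnti hψd hψ'le
  set B₁ : ℝ := ψ T₀ with hB₁
  have hB₁0 : (0:ℝ) ≤ B₁ := mul_nonneg (Real.exp_pos _).le (hφ0 T₀)
  set Cu : ℝ := Real.sqrt B₁ with hCu
  have hCu0 : (0:ℝ) ≤ Cu := Real.sqrt_nonneg _
  have hstep1 : ∀ t ∈ Ici T₀, ‖u t‖ ≤ Cu * Real.exp (-lam*t) := by
    intro t ht
    have h := hψanti self_mem_Ici ht ht
    have he : Real.exp (2*lam*t) * Real.exp (-(2*lam)*t) = 1 := by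
      rw [← Real.exp_add]; ring_nf; exact Real.exp_zero
    have hφle : φ t ≤ B₁ * Real.exp (-(2*lam)*t) := by
      have h2 := mul_le_mul_of_nonneg_right h (Real.exp_pos (-(2*lam)*t)).le
      calc φ t = Real.exp (2*lam*t) * φ t * Real.exp (-(2*lam)*t) := by
            rw [mul_comm (Real.exp (2*lam*t)) (φ t), mul_assoc, he, mul_one]
        _ ≤ B₁ * Real.exp (-(2*lam)*t) := h2
    have h2 : ‖u t‖ = Real.sqrt (φ t) := by rw [hφnorm t, Real.sqrt_sq (norm_nonneg _)]
    have h3 : B₁ * Real.exp (-(2*lam)*t) = (Cu * Real.exp (-lam*t))^2 := by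
      rw [mul_pow, hCu, Real.sq_sqrt hB₁0, pow_two, ← Real.exp_add]
      ring_nf
    rw [h2]
    calc Real.sqrt (φ t) ≤ Real.sqrt (B₁ * Real.exp (-(2*lam)*t)) := Real.sqrt_le_sqrt hφle
      _ = Cu * Real.exp (-lam*t) := by rw [h3, Real.sqrt_sq (by positivity)]
  -- Step 2 : decay at rate Λ₁
  set M : ℝ := 2*K*Cu^((2:ℝ)+α) with hM
  have hM0 : (0:ℝ) ≤ M := by
    have := Real.rpow_nonneg hCu0 ((2:ℝ)+α)
    nlinarith
  set ζ : ℝ → ℝ := fun t => Real.exp (2*Λ₁*t) * φ t + (M/δ) * Real.exp (-δ*t) with hζ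
  set ζ' : ℝ → ℝ := fun t => (2*Λ₁*Real.exp (2*Λ₁*t) * φ t + Real.exp (2*Λ₁*t) * φ' t)
      + (M/δ) * (-δ * Real.exp (-δ*t)) with hζ'd
  have hζd : ∀ t ∈ Ici T₀, HasDerivWithinAt ζ (ζ' t) (Ici T₀) t := by
    intro t ht
    exact (((auxExpDeriv (2*Λ₁) t).hasDerivWithinAt).mul (hφdT t ht)).add
      (HasDerivWithinAt.const_mul (M/δ) ((auxExpDeriv (-δ) t).hasDerivWithinAt))
  have hζ'le : ∀ t ∈ Ici T₀, ζ' t ≤ 0 := by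
    intro t ht
    obtain ⟨hyε, _⟩ := hsmall t ht
    have ht0 : 0 ≤ t := le_trans hT₀0 ht
    have hk := hkey t ht0 hyε
    set X : ℝ := Cu * Real.exp (-lam*t) with hX
    have hX0 : (0:ℝ) ≤ X := by positivity
    have hUb : ‖u t‖ ≤ X := hstep1 t ht
    have r1 : ‖u t‖ ^ ((1:ℝ)+α) ≤ X ^ ((1:ℝ)+α) :=
      Real.rpow_le_rpow (norm_nonneg _) hUb (by linarith)
    have r2 : ‖u t‖ ^ ((1:ℝ)+α) * ‖u t‖ ≤ X ^ ((1:ℝ)+α) * X :=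
      mul_le_mul r1 hUb (norm_nonneg _) (Real.rpow_nonneg hX0 _)
    have r3 : X ^ (((1:ℝ)+α)+1) = X ^ ((1:ℝ)+α) * X ^ (1:ℝ) :=
      Real.rpow_add' hX0 (by linarith)
    have r3' : X ^ ((1:ℝ)+α) * X = X ^ ((2:ℝ)+α) := by
      have he : ((1:ℝ)+α)+1 = (2:ℝ)+α := by ring
      rw [he] at r3
      rw [Real.rpow_one] at r3
      linarith
    have r4 : X ^ ((2:ℝ)+α) = Cu ^ ((2:ℝ)+α) * Real.exp (-lam*t*((2:ℝ)+α)) := by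
      rw [hX, Real.mul_rpow hCu0 (Real.exp_pos _).le, ← Real.exp_mul]
    have r5 : Real.exp (2*Λ₁*t) * Real.exp (-lam*t*((2:ℝ)+α)) = Real.exp (-δ*t) := by
      rw [← Real.exp_add]
      congr 1
      linear_combination (-t) * hδeq
    have hδne : δ ≠ 0 := ne_of_gt hδ0
    have hζ'eq : ζ' t = Real.exp (2*Λ₁*t) * (φ' t + 2*Λ₁*φ t) - M * Real.exp (-δ*t) := by
      simp only [hζ'd]
      field_simp
      ring
    have e0 : (0:ℝ) < Real.exp (2*Λ₁*t) := Real.exp_pos _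
    have step : φ' t + 2*Λ₁*φ t ≤ 2*K*(X^((2:ℝ)+α)) := by
      rw [hφnorm t]
      nlinarith [mul_le_mul_of_nonneg_left r2 (by linarith : (0:ℝ) ≤ 2*K), r3']
    have hmain : Real.exp (2*Λ₁*t) * (φ' t + 2*Λ₁*φ t) ≤ M * Real.exp (-δ*t) := by
      calc Real.exp (2*Λ₁*t) * (φ' t + 2*Λ₁*φ t)
          ≤ Real.exp (2*Λ₁*t) * (2*K*(X^((2:ℝ)+α))) := mul_le_mul_of_nonneg_left step e0.le
        _ = M * Real.exp (-δ*t) := by rw [r4, hM, ← r5]; ring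
    rw [hζ'eq]
    linarith
  have hζanti := auxAnti hζd hζ'le
  set B₂ : ℝ := ζ T₀ with hB₂
  have hB₂0 : (0:ℝ) ≤ B₂ := by
    have h1 : (0:ℝ) ≤ Real.exp (2*Λ₁*T₀) * φ T₀ := mul_nonneg (Real.exp_pos _).le (hφ0 T₀)
    have h2 : (0:ℝ) ≤ (M/δ) * Real.exp (-δ*T₀) := by positivity
    rw [hB₂, hζ]
    dsimp only
    linarith
  have hχB : ∀ t ∈ Ici T₀, Real.exp (2*Λ₁*t) * φ t ≤ B₂ := by
    intro t ht
    have h := hζanti self_mem_Ici ht ht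
    have h2 : (0:ℝ) ≤ (M/δ) * Real.exp (-δ*t) := by positivity
    simp only [hζ] at h
    simp only [hB₂, hζ]
    linarith
  set Cy : ℝ := ‖E'‖ * Real.sqrt B₂ with hCy
  have hCy0 : (0:ℝ) ≤ Cy := mul_nonneg (norm_nonneg _) (Real.sqrt_nonneg _)
  have htail : ∀ t ∈ Ici T₀, ‖y t‖ ≤ Cy * Real.exp (-Λ₁*t) := by
    intro t ht
    have h := hχB t ht
    have he : Real.exp (2*Λ₁*t) * Real.exp (-(2*Λ₁)*t) = 1 := by
      rw [← Real.exp_add]; ring_nf; exact Real.exp_zero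
    have hφle : φ t ≤ B₂ * Real.exp (-(2*Λ₁)*t) := by
      have h2 := mul_le_mul_of_nonneg_right h (Real.exp_pos (-(2*Λ₁)*t)).le
      calc φ t = Real.exp (2*Λ₁*t) * φ t * Real.exp (-(2*Λ₁)*t) := by
            rw [mul_comm (Real.exp (2*Λ₁*t)) (φ t), mul_assoc, he, mul_one]
        _ ≤ B₂ * Real.exp (-(2*Λ₁)*t) := h2
    have h2 : ‖u t‖ = Real.sqrt (φ t) := by rw [hφnorm t, Real.sqrt_sq (norm_nonneg _)]
    have h3 : B₂ * Real.exp (-(2*Λ₁)*t) = (Real.sqrt B₂ * Real.exp (-Λ₁*t))^2 := by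
      rw [mul_pow, Real.sq_sqrt hB₂0, pow_two, ← Real.exp_add]
      ring_nf
    have hus : ‖u t‖ ≤ Real.sqrt B₂ * Real.exp (-Λ₁*t) := by
      rw [h2]
      calc Real.sqrt (φ t) ≤ Real.sqrt (B₂ * Real.exp (-(2*Λ₁)*t)) := Real.sqrt_le_sqrt hφle
        _ = Real.sqrt B₂ * Real.exp (-Λ₁*t) := by
            rw [h3, Real.sqrt_sq (by positivity)]
    calc ‖y t‖ ≤ ‖E'‖ * ‖u t‖ := hnormy t
      _ ≤ ‖E'‖ * (Real.sqrt B₂ * Real.exp (-Λ₁*t)) :=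
        mul_le_mul_of_nonneg_left hus (norm_nonneg _)
      _ = Cy * Real.exp (-Λ₁*t) := by rw [hCy]; ring
  -- Step 3 : compact interval [0, T₀]
  have hycont : ContinuousOn y (Ici 0) := fun t ht => (hy t ht).continuousWithinAt
  have hgcont : ContinuousOn (fun t => Real.exp (Λ₁*t) * ‖y t‖) (Icc 0 T₀) := by
    apply ContinuousOn.mul
    · exact (Real.continuous_exp.comp (continuous_const.mul continuous_id)).continuousOn
    · exact (hycont.mono Icc_subset_Ici_self).norm
  obtain ⟨tm, htm, hmax⟩ := isCompact_Icc.exists_isMaxOn (nonempty_Icc.mpr hT₀0) hgcont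
  set B₃ : ℝ := Real.exp (Λ₁*tm) * ‖y tm‖ with hB₃
  have hB₃0 : (0:ℝ) ≤ B₃ := mul_nonneg (Real.exp_pos _).le (norm_nonneg _)
  refine ⟨max Cy B₃ + 1, by
    have := le_max_left Cy B₃
    linarith, ?_⟩
  intro t ht
  have hgoalexp : Real.exp (-Λ₁ * t) = Real.exp (-Λ₁*t) := rfl
  have e2 : (0:ℝ) < Real.exp (-Λ₁*t) := Real.exp_pos _
  rcases le_total t T₀ with hcase | hcase
  · have hg : Real.exp (Λ₁*t) * ‖y t‖ ≤ B₃ := hmax ⟨ht, hcase⟩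
    have e1 : Real.exp (Λ₁*t) * Real.exp (-Λ₁*t) = 1 := by
      rw [← Real.exp_add]; ring_nf; exact Real.exp_zero
    have h3 : ‖y t‖ ≤ B₃ * Real.exp (-Λ₁*t) := by
      calc ‖y t‖ = (Real.exp (Λ₁*t) * ‖y t‖) * Real.exp (-Λ₁*t) := by
            rw [mul_comm (Real.exp (Λ₁*t)) ‖y t‖, mul_assoc, e1, mul_one]
        _ ≤ B₃ * Real.exp (-Λ₁*t) := mul_le_mul_of_nonneg_right hg e2.le
    have h4 : B₃ ≤ max Cy B₃ + 1 := le_trans (le_max_right _ _) (by linarith)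
    calc ‖y t‖ ≤ B₃ * Real.exp (-Λ₁*t) := h3
      _ ≤ (max Cy B₃ + 1) * Real.exp (-Λ₁*t) := mul_le_mul_of_nonneg_right h4 e2.le
  · have h3 := htail t hcase
    have h4 : Cy ≤ max Cy B₃ + 1 := le_trans (le_max_left _ _) (by linarith)
    calc ‖y t‖ ≤ Cy * Real.exp (-Λ₁*t) := h3
      _ ≤ (max Cy B₃ + 1) * Real.exp (-Λ₁*t) := mul_le_mul_of_nonneg_right h4 e2.le
end

section
/- Let A be a diagonalizable d×d real matrix with eigenvalues 0 < Λ₁ ≤ … ≤ Λ_d, and let F : [0,∞) × ℝᵈ → ℝᵈ be continuous, locally Lipschitz in x, with F(t,0) = 0 for all t, and satisfy |F(t,x)| ≤ c*·|x|^{1+α} for all t ≥ 0 and |x| ≤ ε*, where c*, ε*, α > 0. Suppose y ∈ C¹([0,∞), ℝᵈ) solves y' + A y = F(t,y), with y(0) ≠ 0 and y(t) → 0 as t → ∞. Then for every ε > 0 there exists C₂ > 0 such that |y(t)| ≥ C₂ e^{-(Λ_d + ε)t} for all t ≥ 0. -/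
open Matrix Set

-- reversed Gronwall: lower bound
lemma rev_gronwall {E : Type*} [NormedAddCommGroup E] [NormedSpace ℝ E]
    {z z' : ℝ → E} {L a b : ℝ} (hab : a ≤ b)
    (hz : ContinuousOn z (Icc a b))
    (hderiv : ∀ t ∈ Ioc a b, HasDerivAt z (z' t) t)
    (hbound : ∀ t ∈ Ioc a b, ‖z' t‖ ≤ L * ‖z t‖) :
    ‖z a‖ ≤ ‖z b‖ * Real.exp (L * (b - a)) := by
  set w : ℝ → E := fun s => z (b - s) with hw
  have hmaps : MapsTo (fun s => b - s) (Icc 0 (b - a)) (Icc a b) := by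
    intro s hs; simp only [mem_Icc] at *; constructor <;> linarith [hs.1, hs.2]
  have hwc : ContinuousOn w (Icc 0 (b - a)) :=
    hz.comp ((continuous_const.sub continuous_id).continuousOn) hmaps
  have hwd : ∀ s ∈ Ico 0 (b - a),
      HasDerivWithinAt w (-(z' (b - s))) (Ici s) s := by
    intro s hs
    have ht : b - s ∈ Ioc a b := ⟨by linarith [hs.2], by linarith [hs.1]⟩
    have h1 : HasDerivAt (fun s : ℝ => b - s) (-1) s := by
      exact (hasDerivAt_id' s).const_sub b
    have := (hderiv _ ht).scomp s h1
    have h2 : HasDerivWithinAt w ((-1 : ℝ) • z' (b - s)) (Ici s) s := this.hasDerivWithinAt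
    simpa using h2
  have := norm_le_gronwallBound_of_norm_deriv_right_le (f := w)
    (f' := fun s => -(z' (b - s))) (δ := ‖z b‖) (K := L) (ε := 0)
    hwc hwd (by simp [hw]) ?_ (b - a) ⟨by linarith, le_rfl⟩
  · simpa [hw, gronwallBound_ε0] using this
  · intro s hs
    have ht : b - s ∈ Ioc a b := ⟨by linarith [hs.2], by linarith [hs.1]⟩
    simpa using (hbound _ ht)

lemma diag_norm_bound {d : ℕ} (d₀ : Fin d → ℝ) (Λd : ℝ) (hΛ : 0 ≤ Λd)
    (h : ∀ i, |d₀ i| ≤ Λd) (z : EuclideanSpace ℝ (Fin d)) :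
    ‖Matrix.toEuclideanLin (Matrix.diagonal d₀) z‖ ≤ Λd * ‖z‖ := by
  rw [EuclideanSpace.norm_eq, EuclideanSpace.norm_eq]
  rw [← Real.sqrt_sq hΛ, ← Real.sqrt_mul (sq_nonneg Λd), Finset.mul_sum]
  apply Real.sqrt_le_sqrt
  apply Finset.sum_le_sum
  intro i _
  have : (Matrix.toEuclideanLin (Matrix.diagonal d₀) z) i = d₀ i * z i := by
    simp [Matrix.toEuclideanLin_apply, Matrix.mulVec_diagonal]
  rw [this]
  have h1 : |d₀ i * z i| ≤ Λd * |z i| := by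
    rw [abs_mul]
    exact mul_le_mul_of_nonneg_right (h i) (abs_nonneg _)
  calc ‖d₀ i * z i‖ ^ 2 = |d₀ i * z i| ^ 2 := by rw [Real.norm_eq_abs]
    _ ≤ (Λd * |z i|) ^ 2 := by
        apply pow_le_pow_left₀ (abs_nonneg _) h1
    _ = Λd ^ 2 * ‖z i‖ ^ 2 := by rw [mul_pow, Real.norm_eq_abs, sq_abs]

lemma toEuc_mul {d : ℕ} (M N : Matrix (Fin d) (Fin d) ℝ) (x : EuclideanSpace ℝ (Fin d)) :
    Matrix.toEuclideanLin (M * N) x = Matrix.toEuclideanLin M (Matrix.toEuclideanLin N x) := by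
  simp [Matrix.toEuclideanLin_apply, Matrix.mulVec_mulVec]

lemma lip_sub {E : Type*} [NormedAddCommGroup E] {f g : E → E} {s : Set E}
    {K1 K2 : NNReal} (hf : LipschitzOnWith K1 f s) (hg : LipschitzOnWith K2 g s) :
    LipschitzOnWith (K1 + K2) (fun x => f x - g x) s := by
  rw [lipschitzOnWith_iff_dist_le_mul]
  intro x hx y hy
  calc dist (f x - g x) (f y - g y) ≤ dist (f x) (f y) + dist (g x) (g y) :=
        dist_sub_sub_le _ _ _ _
    _ ≤ K1 * dist x y + K2 * dist x y :=
        add_le_add (hf.dist_le_mul x hx y hy) (hg.dist_le_mul x hx y hy)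
    _ = (K1 + K2 : NNReal) * dist x y := by push_cast; ring

lemma nonvanish {d : ℕ} (F : ℝ → EuclideanSpace ℝ (Fin d) → EuclideanSpace ℝ (Fin d))
    (AL : EuclideanSpace ℝ (Fin d) →L[ℝ] EuclideanSpace ℝ (Fin d))
    (r : ℝ) (K : NNReal) (hr : 0 < r)
    (hFlip0 : ∀ t ≥ (0:ℝ), LipschitzOnWith K (F t) (Metric.ball 0 r))
    (hF0 : ∀ t ≥ (0:ℝ), F t 0 = 0)
    (y : ℝ → EuclideanSpace ℝ (Fin d))
    (hy : ∀ t ∈ Ici (0:ℝ), HasDerivWithinAt y (F t (y t) - AL (y t)) (Ici (0:ℝ)) t)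
    (hy0 : y 0 ≠ 0) : ∀ t ≥ (0:ℝ), y t ≠ 0 := by
  have hcont : ContinuousOn y (Ici 0) := fun t ht => (hy t ht).continuousWithinAt
  by_contra hcon
  push_neg at hcon
  obtain ⟨τ, hτ0, hτ⟩ := hcon
  -- the zero set
  set Z : Set ℝ := {t | t ∈ Ici (0:ℝ) ∧ y t = 0} with hZ
  have hZne : Z.Nonempty := ⟨τ, hτ0, hτ⟩
  have hZbdd : BddBelow Z := ⟨0, fun t ht => ht.1⟩
  have hZclosed : IsClosed Z := by
    have : Z = Ici 0 ∩ y ⁻¹' {0} := by ext t; simp [hZ]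
    rw [this]
    exact ContinuousOn.preimage_isClosed_of_isClosed hcont isClosed_Ici isClosed_singleton
  set t₀ := sInf Z with ht₀def
  have ht₀Z : t₀ ∈ Z := hZclosed.csInf_mem hZne hZbdd
  have ht₀0 : 0 ≤ t₀ := ht₀Z.1
  have hyt₀ : y t₀ = 0 := ht₀Z.2
  have ht₀pos : 0 < t₀ := by
    rcases lt_or_eq_of_le ht₀0 with h | h
    · exact h
    · exact absurd (h ▸ hyt₀) hy0
  -- find δ: y stays in ball 0 r near t₀
  have htend : ∀ᶠ t in nhdsWithin t₀ (Ici 0), y t ∈ Metric.ball (0:EuclideanSpace ℝ (Fin d)) r := by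
    have := (hcont t₀ (mem_Ici.2 ht₀0)).tendsto
    rw [hyt₀] at this
    exact this (Metric.ball_mem_nhds 0 hr)
  rw [Filter.eventually_iff, Metric.mem_nhdsWithin_iff] at htend
  obtain ⟨δ, hδpos, hδ⟩ := htend
  set a := max 0 (max (t₀ - δ / 2) (t₀ / 2)) with ha
  have ha0 : 0 ≤ a := le_max_left _ _
  have halt : a < t₀ := by
    apply max_lt ht₀pos (max_lt (by linarith) (by linarith))
  have hball : ∀ t ∈ Icc a t₀, y t ∈ Metric.ball (0:EuclideanSpace ℝ (Fin d)) r := by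
    intro t ht
    apply hδ
    refine ⟨?_, le_trans ha0 ht.1⟩
    rw [Metric.mem_ball, Real.dist_eq, abs_lt]
    have h1 : t₀ - δ / 2 ≤ a := le_trans (le_max_left _ _) (le_max_right _ _)
    constructor <;> [linarith [ht.1]; linarith [ht.2]]
  -- ODE uniqueness on [a, t₀] with right endpoint
  set v : ℝ → EuclideanSpace ℝ (Fin d) → EuclideanSpace ℝ (Fin d) :=
    fun t x => F (max t 0) x - AL x with hv
  have hvlip : ∀ t : ℝ, LipschitzOnWith (K + ‖AL‖₊) (v t)
      (Metric.ball (0:EuclideanSpace ℝ (Fin d)) r) := by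
    intro t
    exact lip_sub (hFlip0 _ (le_max_right _ _)) (AL.lipschitz.lipschitzOnWith)
  have hderivs : ∀ t ∈ Ioc a t₀, HasDerivWithinAt y (v t (y t)) (Iic t) t := by
    intro t ht
    have htpos : (0:ℝ) < t := lt_of_le_of_lt ha0 ht.1
    have h1 : HasDerivAt y (F t (y t) - AL (y t)) t :=
      (hy t (le_of_lt htpos)).hasDerivAt (Ici_mem_nhds htpos)
    have h2 : v t (y t) = F t (y t) - AL (y t) := by
      rw [hv]; simp [max_eq_left (le_of_lt htpos)]
    rw [h2]
    exact h1.hasDerivWithinAt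
  have hzero : EqOn y (fun _ => (0:EuclideanSpace ℝ (Fin d))) (Icc a t₀) := by
    apply ODE_solution_unique_of_mem_Icc_left (s := fun _ => Metric.ball (0:EuclideanSpace ℝ (Fin d)) r) (fun t _ => hvlip t)
      (hcont.mono (fun t ht => le_trans ha0 ht.1)) hderivs
      (fun t ht => hball t (Ioc_subset_Icc_self ht))
      continuousOn_const
    · intro t ht
      have : v t 0 = 0 := by
        rw [hv]; simp [hF0 _ (le_max_right t 0)]
      rw [this]
      exact hasDerivWithinAt_const _ _ _
    · intro t ht
      exact Metric.mem_ball_self hr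
    · exact hyt₀
  have : a ∈ Z := ⟨ha0, hzero ⟨le_refl a, le_of_lt halt⟩⟩
  exact absurd (csInf_le hZbdd this) (not_le.2 halt)

/-- Lower bound `|y(t)| ≥ C₂ e^{-(Λ_d+ε)t}` for a non-trivial decaying solution of
`y' + Ay = F(t,y)`, where `Λ_d` is the largest eigenvalue of the diagonalizable
matrix `A` with positive eigenvalues. -/
theorem stmt_8 {d : ℕ} (A S : Matrix (Fin d) (Fin d) ℝ) (hS : IsUnit S.det)
    (d₀ : Fin d → ℝ) (hpos : ∀ i, 0 < d₀ i)
    (hA : A = S⁻¹ * Matrix.diagonal d₀ * S)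
    (Λd : ℝ) (hΛd : (∀ i, d₀ i ≤ Λd) ∧ ∃ i, d₀ i = Λd)
    (F : ℝ → EuclideanSpace ℝ (Fin d) → EuclideanSpace ℝ (Fin d))
    (hFcont : ContinuousOn (fun p : ℝ × EuclideanSpace ℝ (Fin d) => F p.1 p.2)
      (Ici (0 : ℝ) ×ˢ univ))
    (hFlip : ∀ x₀ : EuclideanSpace ℝ (Fin d), ∃ (r : ℝ) (K : NNReal), 0 < r ∧
      ∀ t ≥ (0 : ℝ), LipschitzOnWith K (F t) (Metric.ball x₀ r))
    (hF0 : ∀ t ≥ (0 : ℝ), F t 0 = 0)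
    (cstar εstar α : ℝ) (hc : 0 < cstar) (hε : 0 < εstar) (hα : 0 < α)
    (hFbound : ∀ t ≥ (0 : ℝ), ∀ x : EuclideanSpace ℝ (Fin d), ‖x‖ ≤ εstar →
      ‖F t x‖ ≤ cstar * ‖x‖ ^ (1 + α))
    (y : ℝ → EuclideanSpace ℝ (Fin d))
    (hy : ∀ t ∈ Ici (0 : ℝ),
      HasDerivWithinAt y (F t (y t) - Matrix.toEuclideanLin A (y t)) (Ici (0 : ℝ)) t)
    (hy0 : y 0 ≠ 0)
    (hdecay : Filter.Tendsto y Filter.atTop (nhds 0)) :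
    ∀ ε > (0 : ℝ), ∃ C₂ > 0, ∀ t ≥ (0 : ℝ),
      C₂ * Real.exp (-(Λd + ε) * t) ≤ ‖y t‖ := by
  intro ε hεpos
  -- continuous linear maps
  set SL : EuclideanSpace ℝ (Fin d) →L[ℝ] EuclideanSpace ℝ (Fin d) :=
    LinearMap.toContinuousLinearMap (Matrix.toEuclideanLin S) with hSLdef
  set SLi : EuclideanSpace ℝ (Fin d) →L[ℝ] EuclideanSpace ℝ (Fin d) :=
    LinearMap.toContinuousLinearMap (Matrix.toEuclideanLin S⁻¹) with hSLidef
  set DL : EuclideanSpace ℝ (Fin d) →L[ℝ] EuclideanSpace ℝ (Fin d) :=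
    LinearMap.toContinuousLinearMap (Matrix.toEuclideanLin (Matrix.diagonal d₀)) with hDLdef
  set AL : EuclideanSpace ℝ (Fin d) →L[ℝ] EuclideanSpace ℝ (Fin d) :=
    LinearMap.toContinuousLinearMap (Matrix.toEuclideanLin A) with hALdef
  have hSLapp : ∀ x, SL x = Matrix.toEuclideanLin S x := fun _ => rfl
  have hSLiapp : ∀ x, SLi x = Matrix.toEuclideanLin S⁻¹ x := fun _ => rfl
  have hDLapp : ∀ x, DL x = Matrix.toEuclideanLin (Matrix.diagonal d₀) x := fun _ => rfl
  have hALapp : ∀ x, AL x = Matrix.toEuclideanLin A x := fun _ => rfl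
  have hone : ∀ x : EuclideanSpace ℝ (Fin d), Matrix.toEuclideanLin (1 : Matrix (Fin d) (Fin d) ℝ) x = x := by
    intro x
    simp [Matrix.toEuclideanLin_apply, Matrix.one_mulVec]
  have hSLi_SL : ∀ x, SLi (SL x) = x := by
    intro x
    rw [hSLapp, hSLiapp, ← toEuc_mul, Matrix.nonsing_inv_mul S hS, hone]
  have hSA : S * A = Matrix.diagonal d₀ * S := by
    rw [hA, ← Matrix.mul_assoc, ← Matrix.mul_assoc, Matrix.mul_nonsing_inv S hS, Matrix.one_mul]
  have hcomm : ∀ x, SL (Matrix.toEuclideanLin A x) = DL (SL x) := by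
    intro x
    rw [hSLapp, hDLapp, hSLapp, ← toEuc_mul, ← toEuc_mul, hSA]
  -- positivity facts
  obtain ⟨hΛle, i₀, hi₀⟩ := hΛd
  have hΛpos : 0 < Λd := hi₀ ▸ hpos i₀
  have habs : ∀ i, |d₀ i| ≤ Λd := fun i => by
    rw [abs_of_pos (hpos i)]; exact hΛle i
  have hDLnorm : ∀ x, ‖DL x‖ ≤ Λd * ‖x‖ := fun x => by
    rw [hDLapp]; exact diag_norm_bound d₀ Λd (le_of_lt hΛpos) habs x
  -- nonvanishing
  obtain ⟨r, K, hr, hFlip0⟩ := hFlip 0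
  have hy' : ∀ t ∈ Ici (0:ℝ), HasDerivWithinAt y (F t (y t) - AL (y t)) (Ici (0:ℝ)) t := by
    intro t ht; rw [hALapp]; exact hy t ht
  have hnv : ∀ t ≥ (0:ℝ), y t ≠ 0 := nonvanish F AL r K hr hFlip0 hF0 y hy' hy0
  have hcont : ContinuousOn y (Ici 0) := fun t ht => (hy t ht).continuousWithinAt
  -- constants
  set Mx : ℝ := max ‖SL‖ 1 with hMxdef
  set Mi : ℝ := max ‖SLi‖ 1 with hMidef
  have hMx : (0:ℝ) < Mx := lt_of_lt_of_le one_pos (le_max_right _ _)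
  have hMi : (0:ℝ) < Mi := lt_of_lt_of_le one_pos (le_max_right _ _)
  set cC : ℝ := cstar * Mx * Mi with hcCdef
  have hcC : 0 < cC := by positivity
  set η : ℝ := min εstar ((ε / cC) ^ (α⁻¹ : ℝ)) with hηdef
  have hη : 0 < η := by
    apply lt_min hε
    apply Real.rpow_pos_of_pos
    positivity
  -- choose T
  have hnorm0 : Filter.Tendsto (fun t => ‖y t‖) Filter.atTop (nhds 0) := by
    simpa using hdecay.norm
  have hev : ∀ᶠ t in Filter.atTop, ‖y t‖ < η :=
    hnorm0.eventually_lt_const hη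
  obtain ⟨T₀, hT₀⟩ := Filter.eventually_atTop.1 hev
  set T : ℝ := max T₀ 0 with hTdef
  have hT0 : (0:ℝ) ≤ T := le_max_right _ _
  have hTsmall : ∀ t ≥ T, ‖y t‖ ≤ η := fun t ht =>
    le_of_lt (hT₀ t (le_trans (le_max_left _ _) ht))
  -- z and its derivative
  set z : ℝ → EuclideanSpace ℝ (Fin d) := fun t => SL (y t) with hzdef
  have hzval : ∀ t, ‖z t‖ ≤ Mx * ‖y t‖ := fun t =>
    le_trans (SL.le_opNorm (y t)) (mul_le_mul_of_nonneg_right (le_max_left _ _) (norm_nonneg _))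
  have hyval : ∀ t, ‖y t‖ ≤ Mi * ‖z t‖ := fun t => by
    calc ‖y t‖ = ‖SLi (z t)‖ := by rw [hzdef]; simp [hSLi_SL]
      _ ≤ ‖SLi‖ * ‖z t‖ := SLi.le_opNorm _
      _ ≤ Mi * ‖z t‖ := mul_le_mul_of_nonneg_right (le_max_left _ _) (norm_nonneg _)
  have hzderiv : ∀ t > (0:ℝ), HasDerivAt z (SL (F t (y t)) - DL (z t)) t := by
    intro t ht
    have h1 : HasDerivAt y (F t (y t) - Matrix.toEuclideanLin A (y t)) t :=
      (hy t (le_of_lt ht)).hasDerivAt (Ici_mem_nhds ht)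
    have h2 := SL.hasFDerivAt.comp_hasDerivAt t h1
    have h3 : SL (F t (y t) - Matrix.toEuclideanLin A (y t)) = SL (F t (y t)) - DL (z t) := by
      rw [map_sub, hcomm]
    rw [← h3]
    exact h2
  -- the derivative bound for t ≥ T
  have hbnd : ∀ t, T ≤ t → ‖SL (F t (y t)) - DL (z t)‖ ≤ (Λd + ε) * ‖z t‖ := by
    intro t ht
    have htnn : (0:ℝ) ≤ t := le_trans hT0 ht
    have hsm : ‖y t‖ ≤ η := hTsmall t ht
    have hFb : ‖F t (y t)‖ ≤ cstar * ‖y t‖ ^ (1 + α) :=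
      hFbound t htnn (y t) (le_trans hsm (min_le_left _ _))
    have hpow : ‖y t‖ ^ ((1:ℝ) + α) = ‖y t‖ * ‖y t‖ ^ (α : ℝ) := by
      rw [Real.rpow_add' (norm_nonneg _) (by positivity), Real.rpow_one]
    have hpowle : ‖y t‖ ^ (α:ℝ) ≤ ε / cC := by
      calc ‖y t‖ ^ (α:ℝ) ≤ η ^ (α:ℝ) :=
            Real.rpow_le_rpow (norm_nonneg _) hsm (le_of_lt hα)
        _ ≤ ((ε / cC) ^ (α⁻¹:ℝ)) ^ (α:ℝ) :=
            Real.rpow_le_rpow (le_of_lt hη) (min_le_right _ _) (le_of_lt hα)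
        _ = ε / cC := Real.rpow_inv_rpow (by positivity) (ne_of_gt hα)
    have hstep : ‖SL (F t (y t))‖ ≤ ε * ‖z t‖ := by
      calc ‖SL (F t (y t))‖ ≤ ‖SL‖ * ‖F t (y t)‖ := SL.le_opNorm _
        _ ≤ Mx * (cstar * (‖y t‖ * ‖y t‖ ^ (α:ℝ))) := by
            apply mul_le_mul (le_max_left _ _) (by rw [← hpow]; exact hFb)
              (norm_nonneg _) (le_of_lt hMx)
        _ = cstar * Mx * ‖y t‖ ^ (α:ℝ) * ‖y t‖ := by ring
        _ ≤ cstar * Mx * (ε / cC) * (Mi * ‖z t‖) := by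
            apply mul_le_mul _ (hyval t) (norm_nonneg _) (by positivity)
            exact mul_le_mul_of_nonneg_left hpowle (by positivity)
        _ = (cC * (ε / cC)) * ‖z t‖ := by rw [hcCdef]; ring
        _ = ε * ‖z t‖ := by rw [mul_div_cancel₀ _ (ne_of_gt hcC)]
    calc ‖SL (F t (y t)) - DL (z t)‖ ≤ ‖SL (F t (y t))‖ + ‖DL (z t)‖ := norm_sub_le _ _
      _ ≤ ε * ‖z t‖ + Λd * ‖z t‖ := add_le_add hstep (hDLnorm _)
      _ = (Λd + ε) * ‖z t‖ := by ring
  -- Gronwall lower bound for t ≥ T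
  have hgron : ∀ t, T ≤ t → ‖z T‖ ≤ ‖z t‖ * Real.exp ((Λd + ε) * (t - T)) := by
    intro t ht
    apply rev_gronwall ht
    · exact SL.continuous.comp_continuousOn
        (hcont.mono (fun s hs => le_trans hT0 hs.1))
    · intro s hs
      exact hzderiv s (lt_of_le_of_lt hT0 hs.1)
    · intro s hs
      exact hbnd s (le_of_lt hs.1)
  -- min on [0, T]
  have hTne : (Icc (0:ℝ) T).Nonempty := ⟨0, le_refl 0, hT0⟩
  obtain ⟨tm, htm, htmmin⟩ := isCompact_Icc.exists_isMinOn hTne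
    (continuous_norm.comp_continuousOn (hcont.mono (fun s hs => hs.1)))
  have hm : 0 < ‖y tm‖ := norm_pos_iff.2 (hnv tm htm.1)
  -- z T nonzero
  have hzT : 0 < ‖z T‖ := by
    rw [norm_pos_iff]
    intro h
    apply hnv T hT0
    have h' : SL (y T) = 0 := h
    rw [← hSLi_SL (y T), h', map_zero]
  -- the constant
  set C₂ : ℝ := min ‖y tm‖ (‖z T‖ * Real.exp ((Λd + ε) * T) / Mx) with hC₂def
  have hC₂pos : 0 < C₂ := lt_min hm (by positivity)
  refine ⟨C₂, hC₂pos, ?_⟩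
  intro t ht
  rcases le_total t T with hcase | hcase
  · -- t ∈ [0, T]
    have h1 : C₂ * Real.exp (-(Λd + ε) * t) ≤ C₂ := by
      nth_rewrite 2 [← mul_one C₂]
      apply mul_le_mul_of_nonneg_left _ (le_of_lt hC₂pos)
      rw [Real.exp_le_one_iff]
      nlinarith
    calc C₂ * Real.exp (-(Λd + ε) * t) ≤ C₂ := h1
      _ ≤ ‖y tm‖ := min_le_left _ _
      _ ≤ ‖y t‖ := htmmin ⟨ht, hcase⟩
  · -- t ≥ T
    have key := hgron t hcase
    have h1 : C₂ * Real.exp (-(Λd + ε) * t) ≤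
        (‖z T‖ * Real.exp ((Λd + ε) * T) / Mx) * Real.exp (-(Λd + ε) * t) :=
      mul_le_mul_of_nonneg_right (min_le_right _ _) (Real.exp_nonneg _)
    refine h1.trans ?_
    rw [div_mul_eq_mul_div, div_le_iff₀ hMx]
    have hEq : Real.exp ((Λd + ε) * (t - T)) *
        (Real.exp ((Λd + ε) * T) * Real.exp (-(Λd + ε) * t)) = 1 := by
      rw [← Real.exp_add, ← Real.exp_add,
        show (Λd + ε) * (t - T) + ((Λd + ε) * T + -(Λd + ε) * t) = 0 by ring, Real.exp_zero]
    have key2 : ‖z T‖ ≤ Mx * Real.exp ((Λd + ε) * (t - T)) * ‖y t‖ := by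
      calc ‖z T‖ ≤ ‖z t‖ * Real.exp ((Λd + ε) * (t - T)) := key
        _ ≤ (Mx * ‖y t‖) * Real.exp ((Λd + ε) * (t - T)) :=
            mul_le_mul_of_nonneg_right (hzval t) (Real.exp_nonneg _)
        _ = Mx * Real.exp ((Λd + ε) * (t - T)) * ‖y t‖ := by ring
    calc ‖z T‖ * Real.exp ((Λd + ε) * T) * Real.exp (-(Λd + ε) * t)
        = ‖z T‖ * (Real.exp ((Λd + ε) * T) * Real.exp (-(Λd + ε) * t)) := by ring
      _ ≤ (Mx * Real.exp ((Λd + ε) * (t - T)) * ‖y t‖) *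
          (Real.exp ((Λd + ε) * T) * Real.exp (-(Λd + ε) * t)) :=
          mul_le_mul_of_nonneg_right key2 (by positivity)
      _ = (‖y t‖ * Mx) * (Real.exp ((Λd + ε) * (t - T)) *
          (Real.exp ((Λd + ε) * T) * Real.exp (-(Λd + ε) * t))) := by ring
      _ = ‖y t‖ * Mx := by rw [hEq, mul_one]
end

section
/- Let A be a diagonalizable d×d real matrix with positive eigenvalues and let F : [0,∞) × ℝᵈ → ℝᵈ be continuous, locally Lipschitz in x, satisfying |F(t,x)| ≤ c*·|x|^{1+α} for all t ≥ 0 and |x| ≤ ε*, for some c*, ε*, α > 0. If y ∈ C¹([0,∞), ℝᵈ) solves y' + A y = F(t,y), with y(0) ≠ 0 and y(t) → 0 as t → ∞, then there exist an eigenvalue λ* of A, a corresponding eigenvector ξ* ≠ 0 with Aξ* = λ*ξ*, and δ > 0 such that |y(t) − e^{-λ* t} ξ*| = O(e^{-(λ* + δ)t}) as t → ∞. -/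
open Matrix Set


open Matrix Set MeasureTheory Real

private lemma aux_exp_deriv (c : ℝ) (t : ℝ) :
    HasDerivAt (fun s => Real.exp (c * s)) (c * Real.exp (c * t)) t := by
  exact ((Real.hasDerivAt_exp (c * t)).comp t ((hasDerivAt_id t).const_mul c)).congr_deriv (by simp only [mul_one]; ring)

private lemma aux_exp_lower {h h' : ℝ → ℝ} {a b c : ℝ} (hab : a ≤ b)
    (hcont : ContinuousOn h (Icc a b))
    (hderiv : ∀ t ∈ Ioo a b, HasDerivWithinAt h (h' t) (Ioo a b) t)
    (hge : ∀ t ∈ Ioo a b, -c * h t ≤ h' t) :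
    h a * Real.exp (-c * (b - a)) ≤ h b := by
  have hmono : MonotoneOn (fun t => h t * Real.exp (c * t)) (Icc a b) := by
    apply monotoneOn_of_hasDerivWithinAt_nonneg (convex_Icc a b)
      (hcont.mul (Continuous.continuousOn (by continuity)))
      (f' := fun t => h' t * Real.exp (c * t) + h t * (c * Real.exp (c * t)))
    · intro t ht
      rw [interior_Icc] at *
      exact (hderiv t ht).mul ((aux_exp_deriv c t).hasDerivWithinAt)
    · intro t ht
      rw [interior_Icc] at ht
      have h1 := hge t ht
      have h3 := (Real.exp_pos (c * t)).le
      nlinarith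
  have hle := hmono (left_mem_Icc.2 hab) (right_mem_Icc.2 hab) hab
  simp only at hle
  have h2 : h a * Real.exp (c * a) * Real.exp (-(c * b)) ≤
      h b * Real.exp (c * b) * Real.exp (-(c * b)) :=
    mul_le_mul_of_nonneg_right hle (Real.exp_pos _).le
  calc h a * Real.exp (-c * (b - a)) = h a * Real.exp (c * a) * Real.exp (-(c * b)) := by
        rw [mul_assoc, ← Real.exp_add]; ring_nf
    _ ≤ h b * Real.exp (c * b) * Real.exp (-(c * b)) := h2
    _ = h b := by rw [mul_assoc, ← Real.exp_add]; simp

private lemma aux_exp_upper {h h' : ℝ → ℝ} {a b c : ℝ} (hab : a ≤ b)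
    (hcont : ContinuousOn h (Icc a b))
    (hderiv : ∀ t ∈ Ioo a b, HasDerivWithinAt h (h' t) (Ioo a b) t)
    (hle : ∀ t ∈ Ioo a b, h' t ≤ -c * h t) :
    h b ≤ h a * Real.exp (-c * (b - a)) := by
  have key := aux_exp_lower (h := fun t => -h t) (h' := fun t => -h' t) (c := c) hab
    hcont.neg (fun t ht => (hderiv t ht).neg)
    (fun t ht => by have := hle t ht; simp only [mul_neg, neg_le_neg_iff]; linarith)
  linarith [key]

private lemma aux_integral_exp {γ : ℝ} (hγ : γ ≠ 0) (a b : ℝ) :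
    ∫ s in a..b, Real.exp (γ * s) = (Real.exp (γ * b) - Real.exp (γ * a)) / γ := by
  have h : ∀ t ∈ Set.uIcc a b, HasDerivAt (fun s => Real.exp (γ * s) / γ) (Real.exp (γ * t)) t := by
    intro t _
    simpa [mul_comm, mul_div_assoc, mul_div_cancel_left₀ _ hγ] using (aux_exp_deriv γ t).div_const γ
  rw [intervalIntegral.integral_eq_sub_of_hasDerivAt h
    ((Continuous.continuousOn (by continuity)).intervalIntegrable)]
  ring

private lemma aux_integral_exp_Ioi {γ : ℝ} (hγ : 0 < γ) (a : ℝ) :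
    ∫ s in Set.Ioi a, Real.exp (-γ * s) = Real.exp (-γ * a) / γ := by
  have hderiv : ∀ t ∈ Set.Ioi a, HasDerivAt (fun s => -(Real.exp (-γ * s) / γ))
      (Real.exp (-γ * t)) t := by
    intro t _
    have := ((aux_exp_deriv (-γ) t).div_const γ).fun_neg
    simpa [mul_comm, mul_div_assoc, neg_div, mul_div_cancel_left₀ _ hγ.ne'] using this
  have htend : Filter.Tendsto (fun s => -(Real.exp (-γ * s) / γ)) Filter.atTop (nhds 0) := by
    have h1 : Filter.Tendsto (fun s : ℝ => -γ * s) Filter.atTop Filter.atBot :=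
      Filter.Tendsto.const_mul_atTop_of_neg (neg_neg_iff_pos.mpr hγ) Filter.tendsto_id
    have h2 := Real.tendsto_exp_atBot.comp h1
    have := (h2.div_const γ).neg
    simpa using this
  have := MeasureTheory.integral_Ioi_of_hasDerivAt_of_tendsto
    (Continuous.continuousWithinAt (by continuity)) hderiv
    ((exp_neg_integrableOn_Ioi a hγ)) htend
  rw [this]; ring

private lemma aux_norm_le_sum {d : ℕ} (w : EuclideanSpace ℝ (Fin d)) : ‖w‖ ≤ ∑ i, |w i| := by
  rw [EuclideanSpace.norm_eq]
  have h1 : ∑ i, ‖w i‖ ^ 2 ≤ (∑ i, |w i|) ^ 2 := by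
    simpa [Real.norm_eq_abs] using
      Finset.sum_sq_le_sq_sum_of_nonneg (f := fun i => |w i|) (s := Finset.univ)
        (fun i _ => abs_nonneg _)
  calc √(∑ i, ‖w i‖ ^ 2) ≤ √((∑ i, |w i|) ^ 2) := Real.sqrt_le_sqrt h1
    _ = ∑ i, |w i| := by
        rw [Real.sqrt_sq (Finset.sum_nonneg fun i _ => abs_nonneg _)]

private lemma aux_abs_coord {d : ℕ} (w : EuclideanSpace ℝ (Fin d)) (i : Fin d) : |w i| ≤ ‖w‖ := by
  rw [EuclideanSpace.norm_eq]
  calc |w i| = √(‖w i‖ ^ 2) := by rw [Real.sqrt_sq_eq_abs, Real.norm_eq_abs, abs_abs]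
    _ ≤ √(∑ j, ‖w j‖ ^ 2) := Real.sqrt_le_sqrt
        (Finset.single_le_sum (f := fun j => ‖w j‖ ^ 2) (fun j _ => sq_nonneg _)
          (Finset.mem_univ i))

private lemma aux_tEL_mul {d : ℕ} (M N : Matrix (Fin d) (Fin d) ℝ) (v : EuclideanSpace ℝ (Fin d)) :
    Matrix.toEuclideanLin (M * N) v = Matrix.toEuclideanLin M (Matrix.toEuclideanLin N v) := by
  simp [Matrix.toEuclideanLin_apply, Matrix.mulVec_mulVec]

private lemma aux_tEL_coord {d : ℕ} (M : Matrix (Fin d) (Fin d) ℝ) (v : EuclideanSpace ℝ (Fin d))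
    (i : Fin d) : Matrix.toEuclideanLin M v i = ∑ j, M i j * v j := by
  simp [Matrix.toEuclideanLin_apply, Matrix.mulVec, dotProduct]

private lemma aux_exp_tendsto_zero {β : ℝ} (hβ : 0 < β) (K : ℝ) :
    Filter.Tendsto (fun t => K * Real.exp (-β * t)) Filter.atTop (nhds 0) := by
  have h1 : Filter.Tendsto (fun t : ℝ => -β * t) Filter.atTop Filter.atBot :=
    Filter.Tendsto.const_mul_atTop_of_neg (neg_neg_iff_pos.mpr hβ) Filter.tendsto_id
  simpa using (Real.tendsto_exp_atBot.comp h1).const_mul K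

set_option maxHeartbeats 16000000 in
/-- First asymptotic approximation: a non-trivial decaying solution of
`y' + Ay = F(t,y)` satisfies `|y(t) - e^{-λ* t} ξ*| = O(e^{-(λ*+δ)t})` for some
eigenvalue `λ*` of `A` with eigenvector `ξ* ≠ 0`. -/
theorem stmt_9 {d : ℕ} (A S : Matrix (Fin d) (Fin d) ℝ) (hS : IsUnit S.det)
    (d₀ : Fin d → ℝ) (hpos : ∀ i, 0 < d₀ i)
    (hA : A = S⁻¹ * Matrix.diagonal d₀ * S)
    (F : ℝ → EuclideanSpace ℝ (Fin d) → EuclideanSpace ℝ (Fin d))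
    (hFcont : ContinuousOn (fun p : ℝ × EuclideanSpace ℝ (Fin d) => F p.1 p.2)
      (Ici (0 : ℝ) ×ˢ univ))
    (hFlip : ∀ x₀ : EuclideanSpace ℝ (Fin d), ∃ (r : ℝ) (K : NNReal), 0 < r ∧
      ∀ t ≥ (0 : ℝ), LipschitzOnWith K (F t) (Metric.ball x₀ r))
    (cstar εstar α : ℝ) (hc : 0 < cstar) (hε : 0 < εstar) (hα : 0 < α)
    (hFbound : ∀ t ≥ (0 : ℝ), ∀ x : EuclideanSpace ℝ (Fin d), ‖x‖ ≤ εstar →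
      ‖F t x‖ ≤ cstar * ‖x‖ ^ (1 + α))
    (y : ℝ → EuclideanSpace ℝ (Fin d))
    (hy : ∀ t ∈ Ici (0 : ℝ),
      HasDerivWithinAt y (F t (y t) - Matrix.toEuclideanLin A (y t)) (Ici (0 : ℝ)) t)
    (hy0 : y 0 ≠ 0)
    (hdecay : Filter.Tendsto y Filter.atTop (nhds 0)) :
    ∃ (lam : ℝ) (ξ : EuclideanSpace ℝ (Fin d)) (δ C T : ℝ), ξ ≠ 0 ∧
      Matrix.toEuclideanLin A ξ = lam • ξ ∧ 0 < δ ∧ 0 < C ∧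
      ∀ t ≥ T, ‖y t - Real.exp (-lam * t) • ξ‖ ≤ C * Real.exp (-(lam + δ) * t) := by
  classical
  -- d is positive
  have hdne : Nonempty (Fin d) := by
    by_contra hne
    have : IsEmpty (Fin d) := not_nonempty_iff.mp hne
    exact hy0 (Subsingleton.elim _ _)
  have huniv : (Finset.univ : Finset (Fin d)).Nonempty := Finset.univ_nonempty
  set lmin : ℝ := Finset.univ.inf' huniv d₀ with hlmin_def
  set lmax : ℝ := Finset.univ.sup' huniv d₀ with hlmax_def
  obtain ⟨imin, -, hlmin_eq⟩ := Finset.exists_mem_eq_inf' huniv d₀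
  have hlmin : 0 < lmin := by
    show (0:ℝ) < Finset.univ.inf' huniv d₀
    rw [hlmin_eq]; exact hpos imin
  have hlminle : ∀ i, lmin ≤ d₀ i := fun i => Finset.inf'_le d₀ (Finset.mem_univ i)
  have hlmaxle : ∀ i, d₀ i ≤ lmax := fun i => Finset.le_sup' d₀ (Finset.mem_univ i)
  -- linear maps
  set LS : EuclideanSpace ℝ (Fin d) →L[ℝ] EuclideanSpace ℝ (Fin d) :=
    LinearMap.toContinuousLinearMap (Matrix.toEuclideanLin S) with hLS_def
  set LSi : EuclideanSpace ℝ (Fin d) →L[ℝ] EuclideanSpace ℝ (Fin d) :=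
    LinearMap.toContinuousLinearMap (Matrix.toEuclideanLin S⁻¹) with hLSi_def
  have hSiS : S⁻¹ * S = 1 := Matrix.nonsing_inv_mul S hS
  have hSSi : S * S⁻¹ = 1 := Matrix.mul_nonsing_inv S hS
  have hLSiLS : ∀ v, LSi (LS v) = v := by
    intro v
    show Matrix.toEuclideanLin S⁻¹ (Matrix.toEuclideanLin S v) = v
    rw [← aux_tEL_mul, hSiS]
    simp [Matrix.toEuclideanLin_apply, Matrix.one_mulVec]
  have hLSLSi : ∀ v, LS (LSi v) = v := by
    intro v
    show Matrix.toEuclideanLin S (Matrix.toEuclideanLin S⁻¹ v) = v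
    rw [← aux_tEL_mul, hSSi]
    simp [Matrix.toEuclideanLin_apply, Matrix.one_mulVec]
  set z : ℝ → EuclideanSpace ℝ (Fin d) := fun t => LS (y t) with hz_def
  set g : ℝ → EuclideanSpace ℝ (Fin d) := fun t => LS (F t (y t)) with hg_def
  have hyz : ∀ t, y t = LSi (z t) := fun t => (hLSiLS (y t)).symm
  have hynorm : ∀ t, ‖y t‖ ≤ ‖LSi‖ * ‖z t‖ := by
    intro t; rw [hyz t]; exact LSi.le_opNorm (z t)
  have hznorm : ∀ t, ‖z t‖ ≤ ‖LS‖ * ‖y t‖ := fun t => LS.le_opNorm (y t)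
  -- derivative of z
  have hz' : ∀ t ∈ Ici (0:ℝ), HasDerivWithinAt z
      (g t - Matrix.toEuclideanLin (Matrix.diagonal d₀) (z t)) (Ici 0) t := by
    intro t ht
    have h1 := (LS.hasFDerivAt).comp_hasDerivWithinAt t (hy t ht)
    have h2 : LS (F t (y t) - Matrix.toEuclideanLin A (y t))
        = g t - Matrix.toEuclideanLin (Matrix.diagonal d₀) (z t) := by
      rw [map_sub]
      congr 1
      show Matrix.toEuclideanLin S (Matrix.toEuclideanLin A (y t)) = _
      rw [← aux_tEL_mul]
      have : S * A = Matrix.diagonal d₀ * S := by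
        rw [hA, ← Matrix.mul_assoc, ← Matrix.mul_assoc, hSSi, Matrix.one_mul]
      rw [this, aux_tEL_mul]
      rfl
    rw [h2] at h1
    exact h1
  -- coordinates
  have hdiag_coord : ∀ (v : EuclideanSpace ℝ (Fin d)) i,
      Matrix.toEuclideanLin (Matrix.diagonal d₀) v i = d₀ i * v i := by
    intro v i
    rw [aux_tEL_coord]
    simp [Matrix.diagonal]
  have hzc : ∀ i, ∀ t ∈ Ici (0:ℝ),
      HasDerivWithinAt (fun s => z s i) (g t i - d₀ i * z t i) (Ici 0) t := by
    intro i t ht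
    have h1 := (EuclideanSpace.proj (𝕜 := ℝ) i).hasFDerivAt.comp_hasDerivWithinAt t (hz' t ht)
    have h2 : (EuclideanSpace.proj (𝕜 := ℝ) i)
        (g t - Matrix.toEuclideanLin (Matrix.diagonal d₀) (z t)) = g t i - d₀ i * z t i := by
      rw [map_sub]
      simp only [PiLp.proj_apply]
      rw [hdiag_coord]
    rw [h2] at h1
    exact h1
  -- continuity
  have ycont : ContinuousOn y (Ici 0) := fun t ht => (hy t ht).continuousWithinAt
  have zcont : ContinuousOn z (Ici 0) := LS.continuous.comp_continuousOn ycont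
  have gcont : ContinuousOn g (Ici 0) := by
    apply LS.continuous.comp_continuousOn
    exact hFcont.comp (continuousOn_id.prodMk ycont) (fun t ht => ⟨ht, mem_univ _⟩)
  have zcontc : ∀ i, ContinuousOn (fun t => z t i) (Ici 0) := by
    intro i
    exact (EuclideanSpace.proj (𝕜 := ℝ) i).continuous.comp_continuousOn zcont
  have gcontc : ∀ i, ContinuousOn (fun t => g t i) (Ici 0) := by
    intro i
    exact (EuclideanSpace.proj (𝕜 := ℝ) i).continuous.comp_continuousOn gcont
  -- bound on g
  set c₁ : ℝ := (‖LS‖ + 1) * cstar with hc₁_def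
  have hc₁ : 0 < c₁ := by positivity
  have hgb : ∀ t ≥ (0:ℝ), ‖y t‖ ≤ εstar → ‖g t‖ ≤ c₁ * ‖y t‖ ^ (1 + α) := by
    intro t ht hyt
    calc ‖g t‖ ≤ ‖LS‖ * ‖F t (y t)‖ := LS.le_opNorm _
      _ ≤ ‖LS‖ * (cstar * ‖y t‖ ^ (1 + α)) := by
          apply mul_le_mul_of_nonneg_left (hFbound t ht (y t) hyt) (norm_nonneg _)
      _ ≤ c₁ * ‖y t‖ ^ (1 + α) := by
          rw [hc₁_def]
          have h1 : (0:ℝ) ≤ cstar * ‖y t‖ ^ (1 + α) := by positivity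
          nlinarith [norm_nonneg LS, Real.rpow_nonneg (norm_nonneg (y t)) (1 + α)]
  -- LSi has positive norm
  have hLSine : LSi ≠ 0 := by
    intro h0
    apply hy0
    have := hLSiLS (y 0)
    rw [h0] at this
    simpa using this.symm
  have hLSi0 : 0 < ‖LSi‖ := norm_pos_iff.mpr hLSine
  -- smallness of g relative to z
  have hsmall : ∀ ε₀ > (0:ℝ), ∃ η, 0 < η ∧ η ≤ εstar ∧
      ∀ t ≥ (0:ℝ), ‖y t‖ ≤ η → ‖g t‖ ≤ ε₀ * ‖z t‖ := by
    intro ε₀ hε₀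
    set B : ℝ := c₁ * (‖LSi‖ + 1) with hB_def
    have hB : 0 < B := by positivity
    refine ⟨min εstar ((ε₀ / B) ^ (1/α)), lt_min hε (Real.rpow_pos_of_pos (by positivity) _),
      min_le_left _ _, ?_⟩
    intro t ht hyt
    have hyε : ‖y t‖ ≤ εstar := le_trans hyt (min_le_left _ _)
    have h1 : ‖g t‖ ≤ c₁ * ‖y t‖ ^ (1 + α) := hgb t ht hyε
    have h2 : ‖y t‖ ^ (1 + α) = ‖y t‖ ^ (1:ℝ) * ‖y t‖ ^ α :=
      Real.rpow_add' (norm_nonneg _) (by positivity)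
    have h3 : ‖y t‖ ^ α ≤ ((ε₀ / B) ^ (1/α)) ^ α :=
      Real.rpow_le_rpow (norm_nonneg _) (le_trans hyt (min_le_right _ _)) hα.le
    have h4 : (((ε₀ / B) ^ (1/α) : ℝ)) ^ α = ε₀ / B := by
      rw [← Real.rpow_mul (by positivity), one_div, inv_mul_cancel₀ hα.ne', Real.rpow_one]
    have h5 : ‖y t‖ ^ (1:ℝ) ≤ (‖LSi‖ + 1) * ‖z t‖ := by
      rw [Real.rpow_one]
      refine le_trans (hynorm t) ?_
      nlinarith [norm_nonneg (z t)]
    calc ‖g t‖ ≤ c₁ * (‖y t‖ ^ (1:ℝ) * ‖y t‖ ^ α) := by rw [← h2]; exact h1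
      _ ≤ c₁ * (((‖LSi‖ + 1) * ‖z t‖) * (ε₀ / B)) := by
          apply mul_le_mul_of_nonneg_left _ hc₁.le
          exact mul_le_mul h5 (le_trans h3 (le_of_eq h4))
            (Real.rpow_nonneg (norm_nonneg _) _) (by positivity)
      _ = ε₀ * ‖z t‖ := by
          rw [hB_def]; field_simp
  -- energy function
  set hfun : ℝ → ℝ := fun t => ∑ i, z t i * z t i with hfun_def
  set Dsum : ℝ → ℝ := fun t => ∑ i, 2 * z t i * (g t i - d₀ i * z t i) with hDsum_def
  have hfun_nonneg : ∀ t, 0 ≤ hfun t := fun t => Finset.sum_nonneg fun i _ => mul_self_nonneg _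
  have hfun_eq : ∀ t, hfun t = ‖z t‖ ^ 2 := by
    intro t
    rw [EuclideanSpace.norm_eq, Real.sq_sqrt (Finset.sum_nonneg fun i _ => sq_nonneg _)]
    exact Finset.sum_congr rfl fun i _ => by rw [Real.norm_eq_abs, sq_abs, sq]
  have hfun_cont : ContinuousOn hfun (Ici 0) := by
    apply continuousOn_finset_sum
    intro i _
    exact (zcontc i).mul (zcontc i)
  have hfun_deriv : ∀ t ∈ Ici (0:ℝ), HasDerivWithinAt hfun (Dsum t) (Ici 0) t := by
    intro t ht
    have h1 : HasDerivWithinAt hfun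
        (∑ i, ((g t i - d₀ i * z t i) * z t i + z t i * (g t i - d₀ i * z t i))) (Ici 0) t :=
      HasDerivWithinAt.fun_sum (fun i _ => (hzc i t ht).mul (hzc i t ht))
    convert h1 using 1
    rw [hDsum_def]
    exact Finset.sum_congr rfl fun i _ => by ring
  -- derivative bounds
  have hDb : ∀ ε₀ > (0:ℝ), ∀ t ≥ (0:ℝ), ‖g t‖ ≤ ε₀ * ‖z t‖ →
      (-(2*lmax + 2*ε₀) * hfun t ≤ Dsum t ∧ Dsum t ≤ -(2*lmin - 2*ε₀) * hfun t) := by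
    intro ε₀ hε₀ t ht hgz
    have hinner : (∑ i, z t i * g t i) = inner ℝ (z t) (g t) := by
      rw [PiLp.inner_apply]
      exact Finset.sum_congr rfl fun i _ => by
        simp [RCLike.inner_apply, starRingEnd_apply]; ring
    have hcs : |∑ i, z t i * g t i| ≤ ε₀ * hfun t := by
      rw [hinner]
      refine le_trans (abs_real_inner_le_norm _ _) ?_
      rw [hfun_eq]
      calc ‖z t‖ * ‖g t‖ ≤ ‖z t‖ * (ε₀ * ‖z t‖) :=
            mul_le_mul_of_nonneg_left hgz (norm_nonneg _)
        _ = ε₀ * ‖z t‖ ^ 2 := by ring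
    have hsum1 : lmin * hfun t ≤ ∑ i, d₀ i * (z t i * z t i) := by
      rw [hfun_def, Finset.mul_sum]
      exact Finset.sum_le_sum fun i _ =>
        mul_le_mul_of_nonneg_right (hlminle i) (mul_self_nonneg _)
    have hsum2 : (∑ i, d₀ i * (z t i * z t i)) ≤ lmax * hfun t := by
      rw [hfun_def, Finset.mul_sum]
      exact Finset.sum_le_sum fun i _ =>
        mul_le_mul_of_nonneg_right (hlmaxle i) (mul_self_nonneg _)
    have hD : Dsum t = 2 * (∑ i, z t i * g t i) - 2 * (∑ i, d₀ i * (z t i * z t i)) := by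
      rw [hDsum_def, Finset.mul_sum, Finset.mul_sum, ← Finset.sum_sub_distrib]
      exact Finset.sum_congr rfl fun i _ => by ring
    obtain ⟨hcs1, hcs2⟩ := abs_le.mp hcs
    constructor <;> (rw [hD]; nlinarith)
  -- monotonicity consequences
  have keyL : ∀ ε₀ > (0:ℝ), ∀ a b : ℝ, 0 ≤ a → a ≤ b →
      (∀ s ∈ Icc a b, ‖g s‖ ≤ ε₀ * ‖z s‖) →
      hfun a * Real.exp (-(2*lmax + 2*ε₀) * (b - a)) ≤ hfun b := by
    intro ε₀ hε₀ a b ha hab hsm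
    have hsub : Icc a b ⊆ Ici (0:ℝ) := fun s hs => le_trans ha hs.1
    have hsub2 : Ioo a b ⊆ Ici (0:ℝ) := fun s hs => Ioo_subset_Icc_self hs |> hsub
    exact aux_exp_lower hab (hfun_cont.mono hsub)
      (fun t htt => ((hfun_deriv t (hsub2 htt)).mono hsub2))
      (fun t htt => (hDb ε₀ hε₀ t (hsub2 htt)
        (hsm t (Ioo_subset_Icc_self htt))).1)
  have keyU : ∀ ε₀ > (0:ℝ), ∀ a b : ℝ, 0 ≤ a → a ≤ b →
      (∀ s ∈ Icc a b, ‖g s‖ ≤ ε₀ * ‖z s‖) →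
      hfun b ≤ hfun a * Real.exp (-(2*lmin - 2*ε₀) * (b - a)) := by
    intro ε₀ hε₀ a b ha hab hsm
    have hsub : Icc a b ⊆ Ici (0:ℝ) := fun s hs => le_trans ha hs.1
    have hsub2 : Ioo a b ⊆ Ici (0:ℝ) := fun s hs => Ioo_subset_Icc_self hs |> hsub
    exact aux_exp_upper hab (hfun_cont.mono hsub)
      (fun t htt => ((hfun_deriv t (hsub2 htt)).mono hsub2))
      (fun t htt => (hDb ε₀ hε₀ t (hsub2 htt)
        (hsm t (Ioo_subset_Icc_self htt))).2)
  -- z vanishing iff y vanishing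
  have hzne : ∀ t, y t ≠ 0 → z t ≠ 0 := by
    intro t hyt h0
    apply hyt
    rw [hyz t, h0, map_zero]
  have hzzero : ∀ t, y t = 0 → z t = 0 := by
    intro t hyt
    rw [hz_def]; simp only [hyt, map_zero]
  -- the solution never vanishes
  have hyne : ∀ t ≥ (0:ℝ), y t ≠ 0 := by
    intro t₀ ht₀ hzero
    set bad : Set ℝ := Ici 0 ∩ y ⁻¹' {0} with hbad_def
    have hbadne : bad.Nonempty := ⟨t₀, ht₀, by simp [hzero]⟩
    have hbadclosed : IsClosed bad :=
      ycont.preimage_isClosed_of_isClosed isClosed_Ici isClosed_singleton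
    have hbdd : BddBelow bad := ⟨0, fun x hx => hx.1⟩
    set t₁ := sInf bad with ht₁_def
    have ht₁mem : t₁ ∈ bad := hbadclosed.csInf_mem hbadne hbdd
    have ht₁zero : y t₁ = 0 := ht₁mem.2
    have ht₁pos : 0 < t₁ := by
      rcases lt_or_eq_of_le (mem_Ici.mp ht₁mem.1) with h | h
      · exact h
      · exact absurd (h ▸ ht₁zero) hy0
    obtain ⟨η, hη, hηε, hηprop⟩ := hsmall 1 one_pos
    have hcw : ContinuousWithinAt y (Ici 0) t₁ := ycont t₁ ht₁mem.1
    rw [ContinuousWithinAt, ht₁zero] at hcw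
    obtain ⟨ρ, hρ, hρprop⟩ := (Metric.tendsto_nhdsWithin_nhds).mp hcw η hη
    set a : ℝ := max 0 (t₁ - ρ/2) with ha_def
    have ha0 : 0 ≤ a := le_max_left _ _
    have hat₁ : a < t₁ := max_lt ht₁pos (by linarith)
    have hIcc : ∀ s ∈ Icc a t₁, ‖y s‖ ≤ η := by
      intro s hs
      have hs0 : 0 ≤ s := le_trans ha0 hs.1
      have hd : dist s t₁ < ρ := by
        rw [Real.dist_eq, abs_sub_lt_iff]
        constructor
        · linarith [hs.2]
        · have : t₁ - ρ/2 ≤ a := le_max_right _ _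
          have := hs.1
          linarith
      have := hρprop hs0 hd
      rw [dist_zero_right] at this
      exact this.le
    have hya : y a ≠ 0 := by
      intro h
      have hmem : a ∈ bad := ⟨ha0, by simp [h]⟩
      exact absurd (csInf_le hbdd hmem) (not_le.mpr hat₁)
    have hfa : 0 < hfun a := by
      rw [hfun_eq]
      exact pow_pos (norm_pos_iff.mpr (hzne a hya)) 2
    have hlow := keyL 1 one_pos a t₁ ha0 hat₁.le
      (fun s hs => hηprop s (le_trans ha0 hs.1) (hIcc s hs))
    have hft₁ : hfun t₁ = 0 := by
      rw [hfun_eq, hzzero t₁ ht₁zero]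
      simp
    rw [hft₁] at hlow
    nlinarith [Real.exp_pos (-(2*lmax + 2*1) * (t₁ - a))]
  have hLSne : LS ≠ 0 := by
    intro h0
    apply hy0
    have := hLSiLS (y 0)
    rw [h0] at this
    simpa using this.symm
  have hLS0 : 0 < ‖LS‖ := norm_pos_iff.mpr hLSne
  -- decay predicate
  set P : ℝ → Prop := fun μ => ∃ C > (0:ℝ), ∃ T ≥ (0:ℝ), ∀ t ≥ T,
    ‖y t‖ ≤ C * Real.exp (-μ * t) with hP_def
  -- eventual smallness
  have hev : ∀ η > (0:ℝ), ∃ T ≥ (0:ℝ), ∀ t ≥ T, ‖y t‖ ≤ η := by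
    intro η hη
    obtain ⟨T, hT⟩ := (Metric.tendsto_atTop.mp hdecay) η hη
    refine ⟨max T 0, le_max_right _ _, fun t ht => ?_⟩
    have := hT t (le_trans (le_max_left _ _) ht)
    rw [dist_zero_right] at this
    exact this.le
  -- initial decay rate
  have hP0 : P (lmin/2) := by
    obtain ⟨η, hη, hηε, hηprop⟩ := hsmall (lmin/2) (by positivity)
    obtain ⟨T₁, hT₁0, hT₁⟩ := hev η hη
    have hdecayh : ∀ t ≥ T₁, hfun t ≤ hfun T₁ * Real.exp (-lmin * (t - T₁)) := by
      intro t ht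
      have h := keyU (lmin/2) (by positivity) T₁ t hT₁0 ht
        (fun s hs => hηprop s (le_trans hT₁0 hs.1) (hT₁ s hs.1))
      have he : -(2*lmin - 2*(lmin/2)) = -lmin := by ring
      rw [he] at h
      exact h
    set C : ℝ := ‖LSi‖ * (Real.sqrt (hfun T₁) * Real.exp (lmin/2 * T₁)) + 1 with hC_def
    have hC : 0 < C := by positivity
    refine ⟨C, hC, T₁, hT₁0, ?_⟩
    intro t ht
    have h1 : ‖z t‖ ≤ Real.sqrt (hfun T₁) * Real.exp (-(lmin/2) * (t - T₁)) := by
      have h2 : ‖z t‖ = Real.sqrt (hfun t) := by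
        rw [hfun_eq, Real.sqrt_sq (norm_nonneg _)]
      rw [h2]
      refine le_trans (Real.sqrt_le_sqrt (hdecayh t ht)) (le_of_eq ?_)
      rw [Real.sqrt_mul (hfun_nonneg T₁)]
      congr 1
      rw [show Real.exp (-lmin * (t - T₁)) = (Real.exp (-(lmin/2) * (t - T₁)))^2 by
        rw [sq, ← Real.exp_add]; congr 1; ring]
      exact Real.sqrt_sq (Real.exp_pos _).le
    have hsplit : Real.exp (-(lmin/2) * (t - T₁))
        = Real.exp (lmin/2 * T₁) * Real.exp (-(lmin/2) * t) := by
      rw [← Real.exp_add]; congr 1; ring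
    calc ‖y t‖ ≤ ‖LSi‖ * ‖z t‖ := hynorm t
      _ ≤ ‖LSi‖ * (Real.sqrt (hfun T₁) * Real.exp (-(lmin/2) * (t - T₁))) :=
          mul_le_mul_of_nonneg_left h1 (norm_nonneg _)
      _ = ‖LSi‖ * (Real.sqrt (hfun T₁) * Real.exp (lmin/2 * T₁)) * Real.exp (-(lmin/2) * t) := by
          rw [hsplit]; ring
      _ ≤ C * Real.exp (-(lmin/2) * t) := by
          apply mul_le_mul_of_nonneg_right _ (Real.exp_pos _).le
          rw [hC_def]; linarith
  -- no rate beyond lmax + 1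
  have hPbound : ∀ μ, P μ → μ ≤ lmax + 1 := by
    intro μ hPμ
    obtain ⟨C, hC, T, hT0, hbound⟩ := hPμ
    by_contra hgt
    push_neg at hgt
    obtain ⟨η, hη, hηε, hηprop⟩ := hsmall 1 one_pos
    obtain ⟨T₂, hT₂0, hT₂⟩ := hev η hη
    have hlow : ∀ t ≥ T₂, hfun T₂ * Real.exp (-(2*lmax+2) * (t - T₂)) ≤ hfun t := by
      intro t ht
      have h := keyL 1 one_pos T₂ t hT₂0 ht
        (fun s hs => hηprop s (le_trans hT₂0 hs.1) (hT₂ s hs.1))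
      have he : -(2*lmax + 2*1) = -(2*lmax+2) := by ring
      rw [he] at h
      exact h
    set c₀ : ℝ := hfun T₂ * Real.exp ((2*lmax+2) * T₂) with hc₀_def
    have hfT₂ : 0 < hfun T₂ := by
      rw [hfun_eq]
      exact pow_pos (norm_pos_iff.mpr (hzne T₂ (hyne T₂ hT₂0))) 2
    have hc₀ : 0 < c₀ := by positivity
    set K : ℝ := (‖LS‖ * C)^2 with hK_def
    set β : ℝ := 2*μ - 2*lmax - 2 with hβ_def
    have hβ : 0 < β := by rw [hβ_def]; linarith
    obtain ⟨t, ht2, ht1⟩ := (((aux_exp_tendsto_zero hβ K).eventually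
      (gt_mem_nhds hc₀)).and (Filter.eventually_ge_atTop (max T T₂))).exists
    have htT : t ≥ T := le_trans (le_max_left _ _) ht1
    have htT₂ : t ≥ T₂ := le_trans (le_max_right _ _) ht1
    have hup : hfun t ≤ K * Real.exp (-(2*μ) * t) := by
      rw [hfun_eq]
      have h3 : ‖z t‖ ≤ ‖LS‖ * (C * Real.exp (-μ * t)) :=
        le_trans (hznorm t) (mul_le_mul_of_nonneg_left (hbound t htT) (norm_nonneg _))
      calc ‖z t‖^2 ≤ (‖LS‖ * (C * Real.exp (-μ * t)))^2 :=
            pow_le_pow_left₀ (norm_nonneg _) h3 2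
        _ = K * Real.exp (-(2*μ) * t) := by
            rw [hK_def, show Real.exp (-(2*μ)*t) = (Real.exp (-μ*t))^2 by
              rw [sq, ← Real.exp_add]; congr 1; ring]
            ring
    have hl2 : c₀ * Real.exp (-(2*lmax+2) * t) ≤ hfun t := by
      have hl := hlow t htT₂
      rw [hc₀_def]
      calc hfun T₂ * Real.exp ((2*lmax+2)*T₂) * Real.exp (-(2*lmax+2)*t)
          = hfun T₂ * Real.exp (-(2*lmax+2) * (t - T₂)) := by
            rw [mul_assoc, ← Real.exp_add]; congr 2; ring
        _ ≤ hfun t := hl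
    have heq : K * Real.exp (-(2*μ) * t)
        = (K * Real.exp (-β * t)) * Real.exp (-(2*lmax+2) * t) := by
      rw [mul_assoc, ← Real.exp_add]; congr 2; rw [hβ_def]; ring
    have hlt : K * Real.exp (-(2*μ) * t) < c₀ * Real.exp (-(2*lmax+2) * t) := by
      rw [heq]
      exact mul_lt_mul_of_pos_right ht2 (Real.exp_pos _)
    linarith
  -- ==================== bootstrap step ====================
  have hboot : ∀ μ, 0 < μ → P μ →
      ((∃ (lam : ℝ) (ξ : EuclideanSpace ℝ (Fin d)) (δ C T : ℝ), ξ ≠ 0 ∧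
        Matrix.toEuclideanLin A ξ = lam • ξ ∧ 0 < δ ∧ 0 < C ∧
        ∀ t ≥ T, ‖y t - Real.exp (-lam * t) • ξ‖ ≤ C * Real.exp (-(lam + δ) * t)) ∨
       (∀ μ'', 0 < μ'' → μ'' < (1+α)*μ → P μ'')) := by
    intro μ hμ hPμ
    obtain ⟨C, hC, T, hT0, hbound⟩ := hPμ
    obtain ⟨Tε, hTε0, hTεprop⟩ := hev εstar hε
    set T' : ℝ := max T Tε with hT'_def
    have hT'0 : 0 ≤ T' := le_trans hTε0 (le_max_right _ _)
    have hT'T : T ≤ T' := le_max_left _ _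
    set ν : ℝ := (1+α)*μ with hν_def
    have hν : 0 < ν := by rw [hν_def]; positivity
    have hμν : μ < ν := by rw [hν_def]; nlinarith
    set c₂ : ℝ := c₁ * C ^ ((1:ℝ)+α) with hc₂_def
    have hc₂ : 0 < c₂ := by
      rw [hc₂_def]
      exact mul_pos hc₁ (Real.rpow_pos_of_pos hC _)
    have hgbd : ∀ t ≥ T', ‖g t‖ ≤ c₂ * Real.exp (-ν * t) := by
      intro t ht
      have ht0 : (0:ℝ) ≤ t := le_trans hT'0 ht
      have h1 : ‖y t‖ ≤ εstar := hTεprop t (le_trans (le_max_right _ _) ht)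
      have h2 := hgb t ht0 h1
      have h3 : ‖y t‖ ^ ((1:ℝ)+α) ≤ (C * Real.exp (-μ * t)) ^ ((1:ℝ)+α) :=
        Real.rpow_le_rpow (norm_nonneg _) (hbound t (le_trans hT'T ht)) (by positivity)
      have h4 : (C * Real.exp (-μ * t)) ^ ((1:ℝ)+α) = C ^ ((1:ℝ)+α) * Real.exp (-ν * t) := by
        rw [Real.mul_rpow hC.le (Real.exp_pos _).le, ← Real.exp_mul]
        congr 2
        rw [hν_def]; ring
      calc ‖g t‖ ≤ c₁ * ‖y t‖ ^ ((1:ℝ)+α) := h2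
        _ ≤ c₁ * (C ^ ((1:ℝ)+α) * Real.exp (-ν*t)) := by
            rw [← h4]; exact mul_le_mul_of_nonneg_left h3 hc₁.le
        _ = c₂ * Real.exp (-ν*t) := by rw [hc₂_def]; ring
    -- rescaled components
    set u : Fin d → ℝ → ℝ := fun i t => Real.exp (d₀ i * t) * z t i with hu_def
    set φ : Fin d → ℝ → ℝ := fun i s => Real.exp (d₀ i * s) * g s i with hφ_def
    have hzu : ∀ i t, z t i = Real.exp (-(d₀ i) * t) * u i t := by
      intro i t
      rw [hu_def]
      simp only [← mul_assoc, ← Real.exp_add]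
      rw [show -(d₀ i) * t + d₀ i * t = 0 by ring, Real.exp_zero, one_mul]
    have hu' : ∀ i, ∀ t ∈ Ici (0:ℝ), HasDerivWithinAt (u i) (φ i t) (Ici 0) t := by
      intro i t ht
      have h1 := ((aux_exp_deriv (d₀ i) t).hasDerivWithinAt).fun_mul (hzc i t ht)
      refine h1.congr_deriv (Eq.symm ?_)
      show Real.exp (d₀ i * t) * g t i = _
      ring
    have hexpcont : ∀ c : ℝ, Continuous (fun s : ℝ => Real.exp (c * s)) := fun c =>
      Real.continuous_exp.comp (continuous_const.mul continuous_id)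
    have hφcont : ∀ i, ContinuousOn (φ i) (Ici 0) := fun i =>
      ((hexpcont (d₀ i)).continuousOn).mul (gcontc i)
    have hucont : ∀ i, ContinuousOn (u i) (Ici 0) := fun i =>
      ((hexpcont (d₀ i)).continuousOn).mul (zcontc i)
    have hftc : ∀ i, ∀ t ≥ T', u i t - u i T' = ∫ s in T'..t, φ i s := by
      intro i t ht
      rw [intervalIntegral.integral_eq_sub_of_hasDeriv_right_of_le ht
        ((hucont i).mono (fun s hs => le_trans hT'0 hs.1))
        (fun x hx => ((hu' i x (le_trans hT'0 hx.1.le)).mono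
          (fun s hs => le_trans (le_trans hT'0 hx.1.le) hs.le)))
        (((hφcont i).mono (fun s hs => by
          rw [uIcc_of_le ht] at hs
          exact le_trans hT'0 hs.1)).intervalIntegrable)]
    have hφb : ∀ i, ∀ s ≥ T', |φ i s| ≤ c₂ * Real.exp ((d₀ i - ν) * s) := by
      intro i s hs
      have h1 : |φ i s| = Real.exp (d₀ i * s) * |g s i| := by
        rw [hφ_def]
        rw [abs_mul, abs_of_pos (Real.exp_pos _)]
      rw [h1]
      have h2 : |g s i| ≤ c₂ * Real.exp (-ν * s) :=
        le_trans (aux_abs_coord _ i) (hgbd s hs)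
      calc Real.exp (d₀ i * s) * |g s i| ≤ Real.exp (d₀ i * s) * (c₂ * Real.exp (-ν*s)) :=
            mul_le_mul_of_nonneg_left h2 (Real.exp_pos _).le
        _ = c₂ * Real.exp ((d₀ i - ν)*s) := by
            rw [show Real.exp (d₀ i * s) * (c₂ * Real.exp (-ν*s))
              = c₂ * (Real.exp (d₀ i * s) * Real.exp (-ν*s)) from by ring, ← Real.exp_add]
            congr 2
            ring
    set ℓ : Fin d → ℝ := fun i => if d₀ i < ν then u i T' + ∫ s in Ioi T', φ i s else 0
      with hℓ_def
    have hφint : ∀ i, d₀ i < ν → ∀ t₀, t₀ ≥ T' → IntegrableOn (φ i) (Ioi t₀) := by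
      intro i hi t₀ ht₀
      have hβi : 0 < ν - d₀ i := by linarith
      have hmaj : Integrable (fun s => c₂ * Real.exp ((d₀ i - ν) * s))
          (volume.restrict (Ioi t₀)) := by
        have hm := (exp_neg_integrableOn_Ioi t₀ hβi).const_mul c₂
        have heq : (fun s => c₂ * Real.exp (-(ν - d₀ i) * s))
            = fun s => c₂ * Real.exp ((d₀ i - ν) * s) := by
          funext s; congr 2; ring
        rwa [heq] at hm
      apply Integrable.mono' hmaj
      · exact ((hφcont i).mono
          (fun s hs => le_trans (le_trans hT'0 ht₀) (le_of_lt hs))).aestronglyMeasurable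
          measurableSet_Ioi
      · refine (ae_restrict_iff' measurableSet_Ioi).mpr (Filter.Eventually.of_forall ?_)
        intro s hs
        rw [Real.norm_eq_abs]
        exact hφb i s (le_trans ht₀ (le_of_lt hs))
    have htail : ∀ i, d₀ i < ν → ∀ t ≥ T',
        |u i t - ℓ i| ≤ (c₂/(ν - d₀ i)) * Real.exp (-(ν - d₀ i) * t) := by
      intro i hi t ht
      have hβi : 0 < ν - d₀ i := by linarith
      have hsplit : (∫ s in Ioi T', φ i s) = (∫ s in T'..t, φ i s) + ∫ s in Ioi t, φ i s := by
        rw [intervalIntegral.integral_of_le ht,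
          ← MeasureTheory.setIntegral_union (Ioc_disjoint_Ioi le_rfl) measurableSet_Ioi
          ((hφint i hi T' le_rfl).mono_set Ioc_subset_Ioi_self) (hφint i hi t ht),
          Ioc_union_Ioi_eq_Ioi ht]
      have hu_eq : u i t = u i T' + ∫ s in T'..t, φ i s := by
        have := hftc i t ht; linarith
      have hdiff : ℓ i - u i t = ∫ s in Ioi t, φ i s := by
        rw [hℓ_def]
        simp only [if_pos hi]
        rw [hsplit, hu_eq]; ring
      rw [abs_sub_comm, ← Real.norm_eq_abs, hdiff]
      have hmaj : Integrable (fun s => c₂ * Real.exp (-(ν - d₀ i) * s))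
          (volume.restrict (Ioi t)) := (exp_neg_integrableOn_Ioi t hβi).const_mul c₂
      have hbnd := MeasureTheory.norm_integral_le_of_norm_le hmaj
        ((ae_restrict_iff' measurableSet_Ioi).mpr (Filter.Eventually.of_forall (fun s hs => by
          rw [Real.norm_eq_abs]
          have hb := hφb i s (le_trans ht (le_of_lt hs))
          have heq : (d₀ i - ν) * s = -(ν - d₀ i) * s := by ring
          rwa [heq] at hb)))
      refine le_trans hbnd ?_
      rw [MeasureTheory.integral_const_mul, aux_integral_exp_Ioi hβi t]
      exact le_of_eq (by ring)
    have hcaseA : ∀ i, d₀ i < ν → ∀ t ≥ T',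
        |z t i - Real.exp (-(d₀ i) * t) * ℓ i| ≤ (c₂/(ν - d₀ i)) * Real.exp (-ν * t) := by
      intro i hi t ht
      have hcomb : Real.exp (-(d₀ i)*t) * Real.exp (-(ν - d₀ i)*t) = Real.exp (-ν*t) := by
        rw [← Real.exp_add]; congr 1; ring
      calc |z t i - Real.exp (-(d₀ i)*t) * ℓ i|
          = Real.exp (-(d₀ i)*t) * |u i t - ℓ i| := by
            rw [hzu i t, ← mul_sub, abs_mul, abs_of_pos (Real.exp_pos _)]
        _ ≤ Real.exp (-(d₀ i)*t) * ((c₂/(ν - d₀ i)) * Real.exp (-(ν - d₀ i) * t)) :=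
            mul_le_mul_of_nonneg_left (htail i hi t ht) (Real.exp_pos _).le
        _ = (c₂/(ν - d₀ i)) * (Real.exp (-(d₀ i)*t) * Real.exp (-(ν - d₀ i)*t)) := by ring
        _ = (c₂/(ν - d₀ i)) * Real.exp (-ν * t) := by rw [hcomb]
    have hcaseB : ∀ i, ¬(d₀ i < ν) → ∀ μ'', 0 < μ'' → μ'' < ν →
        ∃ K, 0 ≤ K ∧ ∀ t ≥ T', |z t i| ≤ K * Real.exp (-μ'' * t) := by
      intro i hi μ'' hμ''0 hμ''ν
      push_neg at hi
      set γ : ℝ := d₀ i - μ'' with hγ_def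
      have hγ : 0 < γ := by rw [hγ_def]; linarith
      refine ⟨|u i T'| + c₂ * Real.exp ((μ'' - ν) * T') / γ, by positivity, ?_⟩
      intro t ht
      have ht0 : (0:ℝ) ≤ t := le_trans hT'0 ht
      have h1 : |u i t| ≤ |u i T'| + |∫ s in T'..t, φ i s| := by
        have h := hftc i t ht
        have heq : u i t = u i T' + ∫ s in T'..t, φ i s := by linarith
        rw [heq]
        exact abs_add_le _ _
      have h2 : |∫ s in T'..t, φ i s|
          ≤ |∫ s in T'..t, c₂ * Real.exp ((μ'' - ν) * T') * Real.exp (γ * s)| := by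
        rw [← Real.norm_eq_abs]
        apply intervalIntegral.norm_integral_le_abs_of_norm_le
        · refine (ae_restrict_iff' measurableSet_uIoc).mpr (Filter.Eventually.of_forall ?_)
          intro s hs
          rw [uIoc_of_le ht] at hs
          have hsT : s ≥ T' := le_of_lt hs.1
          rw [Real.norm_eq_abs]
          refine le_trans (hφb i s hsT) ?_
          have hdec : (d₀ i - ν) * s = (μ'' - ν) * s + γ * s := by rw [hγ_def]; ring
          rw [hdec, Real.exp_add, ← mul_assoc]
          apply mul_le_mul_of_nonneg_right _ (Real.exp_pos _).le
          apply mul_le_mul_of_nonneg_left _ hc₂.le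
          exact Real.exp_le_exp.mpr (by nlinarith)
        · exact (Continuous.intervalIntegrable (by
            exact (continuous_const.mul (hexpcont γ))) _ _)
      have h3 : |∫ s in T'..t, c₂ * Real.exp ((μ'' - ν) * T') * Real.exp (γ * s)|
          ≤ c₂ * Real.exp ((μ'' - ν) * T') / γ * Real.exp (γ * t) := by
        rw [abs_of_nonneg (intervalIntegral.integral_nonneg ht (fun s _ => by positivity))]
        rw [intervalIntegral.integral_const_mul, aux_integral_exp hγ.ne']
        have hexp : (Real.exp (γ*t) - Real.exp (γ*T'))/γ ≤ Real.exp (γ*t)/γ :=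
          (div_le_div_iff_of_pos_right hγ).mpr (by nlinarith [Real.exp_pos (γ*T')])
        calc c₂ * Real.exp ((μ'' - ν) * T') * ((Real.exp (γ*t) - Real.exp (γ*T'))/γ)
            ≤ c₂ * Real.exp ((μ'' - ν) * T') * (Real.exp (γ*t)/γ) :=
              mul_le_mul_of_nonneg_left hexp (by positivity)
          _ = c₂ * Real.exp ((μ'' - ν) * T') / γ * Real.exp (γ * t) := by ring
      have h5 : |u i t| ≤ |u i T'| + c₂ * Real.exp ((μ''-ν)*T')/γ * Real.exp (γ*t) := by
        refine le_trans h1 ?_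
        have := le_trans h2 h3
        linarith
      have h6 : Real.exp (-(d₀ i)*t) ≤ Real.exp (-μ''*t) :=
        Real.exp_le_exp.mpr (by nlinarith)
      have h7 : Real.exp (-(d₀ i)*t) * Real.exp (γ*t) = Real.exp (-μ''*t) := by
        rw [← Real.exp_add]; congr 1; rw [hγ_def]; ring
      have h4 : |z t i| = Real.exp (-(d₀ i)*t) * |u i t| := by
        rw [hzu i t, abs_mul, abs_of_pos (Real.exp_pos _)]
      rw [h4]
      calc Real.exp (-(d₀ i)*t) * |u i t|
          ≤ Real.exp (-(d₀ i)*t) * (|u i T'| + c₂ * Real.exp ((μ''-ν)*T')/γ * Real.exp (γ*t)) :=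
            mul_le_mul_of_nonneg_left h5 (Real.exp_pos _).le
        _ = |u i T'| * Real.exp (-(d₀ i)*t)
            + c₂ * Real.exp ((μ''-ν)*T')/γ * (Real.exp (-(d₀ i)*t) * Real.exp (γ*t)) := by ring
        _ ≤ |u i T'| * Real.exp (-μ''*t) + c₂ * Real.exp ((μ''-ν)*T')/γ * Real.exp (-μ''*t) := by
            rw [h7]
            exact add_le_add (mul_le_mul_of_nonneg_left h6 (abs_nonneg _)) le_rfl
        _ = (|u i T'| + c₂ * Real.exp ((μ''-ν)*T')/γ) * Real.exp (-μ''*t) := by ring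
    rcases Classical.em (∃ i, d₀ i < ν ∧ ℓ i ≠ 0) with hex | hex
    · -- some limit coefficient is nonzero: build the eigen-approximation
      left
      set NZ : Finset (Fin d) := Finset.univ.filter (fun i => d₀ i < ν ∧ ℓ i ≠ 0) with hNZ_def
      have hNZne : NZ.Nonempty := by
        obtain ⟨i, hi1, hi2⟩ := hex
        exact ⟨i, Finset.mem_filter.mpr ⟨Finset.mem_univ _, hi1, hi2⟩⟩
      set lam : ℝ := (NZ.image d₀).min' (hNZne.image d₀) with hlam_def
      obtain ⟨i₀, hi₀NZ, hi₀⟩ : ∃ i ∈ NZ, d₀ i = lam := by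
        have hmem := (NZ.image d₀).min'_mem (hNZne.image d₀)
        obtain ⟨i, hiNZ, heq⟩ := Finset.mem_image.mp hmem
        exact ⟨i, hiNZ, heq⟩
      have hi₀ν : lam < ν := hi₀ ▸ (Finset.mem_filter.mp hi₀NZ).2.1
      have hlam0 : 0 < lam := hi₀ ▸ hpos i₀
      have hlammin : ∀ i ∈ NZ, lam ≤ d₀ i := fun i hi =>
        Finset.min'_le _ _ (Finset.mem_image_of_mem d₀ hi)
      set GF : Finset (Fin d) := Finset.univ.filter (fun i => lam < d₀ i) with hGF_def
      set gap : ℝ := if hGFne : GF.Nonempty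
        then (GF.image (fun i => d₀ i - lam)).min' (hGFne.image _) else 1 with hgap_def
      have hgap0 : 0 < gap := by
        rw [hgap_def]
        split_ifs with hGFne
        · have hmem := (GF.image (fun i => d₀ i - lam)).min'_mem (hGFne.image _)
          obtain ⟨i, hiGF, heq⟩ := Finset.mem_image.mp hmem
          rw [← heq]
          have := (Finset.mem_filter.mp hiGF).2
          linarith
        · exact one_pos
      have hgaple : ∀ i, lam < d₀ i → gap ≤ d₀ i - lam := by
        intro i hi
        have hiGF : i ∈ GF := Finset.mem_filter.mpr ⟨Finset.mem_univ _, hi⟩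
        rw [hgap_def, dif_pos ⟨i, hiGF⟩]
        exact Finset.min'_le _ _ (Finset.mem_image_of_mem _ hiGF)
      set δ : ℝ := min ((ν - lam)/2) (gap/2) with hδ_def
      have hδ0 : 0 < δ := lt_min (by linarith) (by linarith)
      have hδν : lam + δ ≤ ν := by
        have := min_le_left ((ν - lam)/2) (gap/2)
        rw [hδ_def]; linarith [this]
      have hδgap : ∀ i, lam < d₀ i → lam + δ ≤ d₀ i := by
        intro i hi
        have h1 : δ ≤ gap/2 := min_le_right _ _
        have h2 := hgaple i hi
        linarith
      set μ'' : ℝ := lam + (ν - lam)/2 with hμ''_def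
      have hμ''0 : 0 < μ'' := by rw [hμ''_def]; linarith
      have hμ''ν : μ'' < ν := by rw [hμ''_def]; linarith
      have hδμ'' : lam + δ ≤ μ'' := by
        have := min_le_left ((ν - lam)/2) (gap/2)
        rw [hμ''_def]; linarith [this]
      set ξz : EuclideanSpace ℝ (Fin d) := (WithLp.equiv 2 (Fin d → ℝ)).symm
        (fun i => if d₀ i = lam then ℓ i else 0) with hξz_def
      have hξz_coord : ∀ i, ξz i = if d₀ i = lam then ℓ i else 0 := by
        intro i
        rw [hξz_def, WithLp.equiv_symm_apply, PiLp.toLp_apply]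
      have hξzne : ξz ≠ 0 := by
        intro h0
        have h1 : ξz i₀ = 0 := by rw [h0]; rfl
        rw [hξz_coord, if_pos hi₀] at h1
        exact (Finset.mem_filter.mp hi₀NZ).2.2 h1
      have hDξz : Matrix.toEuclideanLin (Matrix.diagonal d₀) ξz = lam • ξz := by
        refine (WithLp.equiv 2 (Fin d → ℝ)).injective (funext fun i => ?_)
        show Matrix.toEuclideanLin (Matrix.diagonal d₀) ξz i = (lam • ξz) i
        rw [hdiag_coord, PiLp.smul_apply, smul_eq_mul, hξz_coord i]
        split_ifs with hdi
        · rw [hdi]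
        · rw [mul_zero, mul_zero]
      set ξ : EuclideanSpace ℝ (Fin d) := LSi ξz with hξ_def
      have hξne : ξ ≠ 0 := by
        intro h0
        apply hξzne
        have : LS ξ = ξz := by rw [hξ_def]; exact hLSLSi ξz
        rw [h0, map_zero] at this
        exact this.symm
      have hAξ : Matrix.toEuclideanLin A ξ = lam • ξ := by
        have h1 : ξ = Matrix.toEuclideanLin S⁻¹ ξz := rfl
        have h2 : A * S⁻¹ = S⁻¹ * Matrix.diagonal d₀ := by
          rw [hA, Matrix.mul_assoc (S⁻¹ * Matrix.diagonal d₀) S S⁻¹, hSSi, Matrix.mul_one]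
        rw [h1, ← aux_tEL_mul, h2, aux_tEL_mul, hDξz, LinearMap.map_smul]
      have hib : ∀ i, ∃ K, 0 ≤ K ∧ ∀ t ≥ T',
          |z t i - Real.exp (-lam * t) * ξz i| ≤ K * Real.exp (-(lam + δ) * t) := by
        intro i
        by_cases hiA : d₀ i < ν
        · have hβi : 0 < ν - d₀ i := by linarith
          by_cases hdi : d₀ i = lam
          · refine ⟨c₂/(ν - d₀ i), (div_pos hc₂ hβi).le, ?_⟩
            intro t ht
            have ht0 : (0:ℝ) ≤ t := le_trans hT'0 ht
            have h := hcaseA i hiA t ht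
            rw [hξz_coord i, if_pos hdi, ← hdi]
            refine le_trans h ?_
            apply mul_le_mul_of_nonneg_left _ (div_pos hc₂ hβi).le
            exact Real.exp_le_exp.mpr (by nlinarith)
          · refine ⟨c₂/(ν - d₀ i) + |ℓ i|, by positivity, ?_⟩
            intro t ht
            have ht0 : (0:ℝ) ≤ t := le_trans hT'0 ht
            rw [hξz_coord i, if_neg hdi, mul_zero, sub_zero]
            have h := hcaseA i hiA t ht
            have hlami : ℓ i ≠ 0 → lam < d₀ i := by
              intro hne
              have hiNZ : i ∈ NZ := Finset.mem_filter.mpr ⟨Finset.mem_univ _, hiA, hne⟩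
              exact lt_of_le_of_ne (hlammin i hiNZ) (fun h => hdi h.symm)
            have hterm2 : |ℓ i| * Real.exp (-(d₀ i) * t) ≤ |ℓ i| * Real.exp (-(lam+δ)*t) := by
              rcases eq_or_ne (ℓ i) 0 with h0 | h0
              · rw [h0]; simp
              · apply mul_le_mul_of_nonneg_left _ (abs_nonneg _)
                apply Real.exp_le_exp.mpr
                have := hδgap i (hlami h0)
                nlinarith
            calc |z t i|
                ≤ |z t i - Real.exp (-(d₀ i)*t) * ℓ i| + |Real.exp (-(d₀ i)*t) * ℓ i| := by
                  simpa using abs_add_le (z t i - Real.exp (-(d₀ i)*t) * ℓ i)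
                    (Real.exp (-(d₀ i)*t) * ℓ i)
              _ ≤ (c₂/(ν - d₀ i)) * Real.exp (-ν*t) + |ℓ i| * Real.exp (-(lam+δ)*t) := by
                  apply add_le_add h
                  rw [abs_mul, abs_of_pos (Real.exp_pos _), mul_comm]
                  exact hterm2
              _ ≤ (c₂/(ν - d₀ i)) * Real.exp (-(lam+δ)*t) + |ℓ i| * Real.exp (-(lam+δ)*t) := by
                  apply add_le_add _ le_rfl
                  apply mul_le_mul_of_nonneg_left _ (div_pos hc₂ hβi).le
                  exact Real.exp_le_exp.mpr (by nlinarith)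
              _ = (c₂/(ν - d₀ i) + |ℓ i|) * Real.exp (-(lam+δ)*t) := by ring
        · obtain ⟨K, hK0, hK⟩ := hcaseB i hiA μ'' hμ''0 hμ''ν
          have hd₀lam : d₀ i ≠ lam := by
            intro h
            rw [h] at hiA
            exact hiA hi₀ν
          refine ⟨K, hK0, ?_⟩
          intro t ht
          have ht0 : (0:ℝ) ≤ t := le_trans hT'0 ht
          rw [hξz_coord i, if_neg hd₀lam, mul_zero, sub_zero]
          refine le_trans (hK t ht) ?_
          apply mul_le_mul_of_nonneg_left _ hK0
          exact Real.exp_le_exp.mpr (by nlinarith)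
      choose K hK0 hK using hib
      have hsum0 : 0 ≤ ∑ i, K i := Finset.sum_nonneg fun i _ => hK0 i
      refine ⟨lam, ξ, δ, ‖LSi‖ * (∑ i, K i) + 1, T', hξne, hAξ, hδ0,
        by nlinarith [norm_nonneg LSi, mul_nonneg (norm_nonneg LSi) hsum0], ?_⟩
      intro t ht
      have hyξ : y t - Real.exp (-lam*t) • ξ = LSi (z t - Real.exp (-lam*t) • ξz) := by
        rw [map_sub, _root_.map_smul, ← hyz t, ← hξ_def]
      rw [hyξ]
      calc ‖LSi (z t - Real.exp (-lam*t) • ξz)‖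
          ≤ ‖LSi‖ * ‖z t - Real.exp (-lam*t) • ξz‖ := LSi.le_opNorm _
        _ ≤ ‖LSi‖ * (∑ i, |(z t - Real.exp (-lam*t) • ξz) i|) :=
            mul_le_mul_of_nonneg_left (aux_norm_le_sum _) (norm_nonneg _)
        _ ≤ ‖LSi‖ * (∑ i, K i * Real.exp (-(lam+δ)*t)) := by
            apply mul_le_mul_of_nonneg_left _ (norm_nonneg _)
            apply Finset.sum_le_sum
            intro i _
            have hcoord : (z t - Real.exp (-lam*t) • ξz) i
                = z t i - Real.exp (-lam*t) * ξz i := by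
              rw [PiLp.sub_apply, PiLp.smul_apply, smul_eq_mul]
            rw [hcoord]
            exact hK i t ht
        _ = ‖LSi‖ * (∑ i, K i) * Real.exp (-(lam+δ)*t) := by rw [← Finset.sum_mul]; ring
        _ ≤ (‖LSi‖ * (∑ i, K i) + 1) * Real.exp (-(lam+δ)*t) := by
            apply mul_le_mul_of_nonneg_right _ (Real.exp_pos _).le
            linarith
    · -- all limit coefficients vanish: improve the decay rate
      right
      push_neg at hex
      intro μ'' hμ''0 hμ''ν
      have hib : ∀ i, ∃ K, 0 ≤ K ∧ ∀ t ≥ T', |z t i| ≤ K * Real.exp (-μ'' * t) := by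
        intro i
        by_cases hiA : d₀ i < ν
        · have hβi : 0 < ν - d₀ i := by linarith
          refine ⟨c₂/(ν - d₀ i), (div_pos hc₂ hβi).le, ?_⟩
          intro t ht
          have ht0 : (0:ℝ) ≤ t := le_trans hT'0 ht
          have h := hcaseA i hiA t ht
          rw [hex i hiA, mul_zero, sub_zero] at h
          refine le_trans h ?_
          apply mul_le_mul_of_nonneg_left _ (div_pos hc₂ hβi).le
          exact Real.exp_le_exp.mpr (by nlinarith)
        · exact hcaseB i hiA μ'' hμ''0 hμ''ν
      choose K hK0 hK using hib
      have hsum0 : 0 ≤ ∑ i, K i := Finset.sum_nonneg fun i _ => hK0 i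
      refine ⟨‖LSi‖ * (∑ i, K i) + 1,
        by nlinarith [norm_nonneg LSi, mul_nonneg (norm_nonneg LSi) hsum0], T', hT'0, ?_⟩
      intro t ht
      calc ‖y t‖ ≤ ‖LSi‖ * ‖z t‖ := hynorm t
        _ ≤ ‖LSi‖ * (∑ i, |z t i|) :=
            mul_le_mul_of_nonneg_left (aux_norm_le_sum _) (norm_nonneg _)
        _ ≤ ‖LSi‖ * (∑ i, K i * Real.exp (-μ'' * t)) := by
            apply mul_le_mul_of_nonneg_left _ (norm_nonneg _)
            exact Finset.sum_le_sum (fun i _ => hK i t ht)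
        _ = ‖LSi‖ * (∑ i, K i) * Real.exp (-μ'' * t) := by rw [← Finset.sum_mul]; ring
        _ ≤ (‖LSi‖ * (∑ i, K i) + 1) * Real.exp (-μ'' * t) := by
            apply mul_le_mul_of_nonneg_right _ (Real.exp_pos _).le
            linarith
  -- ==================== driver ====================
  set q : ℝ := 1 + α/2 with hq_def
  have hq1 : 1 < q := by rw [hq_def]; linarith
  set μseq : ℕ → ℝ := fun n => (lmin/2) * q^n with hμseq_def
  have hμseq0 : ∀ n, 0 < μseq n := by
    intro n
    have hq0 : (0:ℝ) < q := lt_trans one_pos hq1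
    simp only [hμseq_def]
    positivity
  have hμsucc : ∀ n, μseq (n+1) = q * μseq n := by
    intro n
    simp only [hμseq_def, pow_succ]
    ring
  have hmain : ∀ n : ℕ, (∃ (lam : ℝ) (ξ : EuclideanSpace ℝ (Fin d)) (δ C T : ℝ), ξ ≠ 0 ∧
      Matrix.toEuclideanLin A ξ = lam • ξ ∧ 0 < δ ∧ 0 < C ∧
      ∀ t ≥ T, ‖y t - Real.exp (-lam * t) • ξ‖ ≤ C * Real.exp (-(lam + δ) * t)) ∨
      P (μseq n) := by
    intro n
    induction n with
    | zero =>
      right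
      have h0 : μseq 0 = lmin/2 := by simp [hμseq_def]
      rw [h0]
      exact hP0
    | succ n ih =>
      rcases ih with h | h
      · exact Or.inl h
      · rcases hboot (μseq n) (hμseq0 n) h with h2 | h2
        · exact Or.inl h2
        · right
          rw [hμsucc n]
          refine h2 (q * μseq n) (mul_pos (lt_trans one_pos hq1) (hμseq0 n)) ?_
          have : q < 1 + α := by rw [hq_def]; linarith
          nlinarith [hμseq0 n]
  obtain ⟨n, hn⟩ : ∃ n : ℕ, lmax + 1 < μseq n := by
    obtain ⟨n, hn⟩ := pow_unbounded_of_one_lt ((lmax+1)/(lmin/2)) hq1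
    refine ⟨n, ?_⟩
    have hl2 : (0:ℝ) < lmin/2 := by linarith
    have hc2 : lmax + 1 = ((lmax+1)/(lmin/2)) * (lmin/2) := by field_simp
    simp only [hμseq_def]
    calc lmax + 1 = ((lmax+1)/(lmin/2)) * (lmin/2) := hc2
      _ < q^n * (lmin/2) := mul_lt_mul_of_pos_right hn hl2
      _ = lmin/2 * q^n := by ring
  rcases hmain n with h | h
  · exact h
  · exact absurd (hPbound _ h) (not_le.mpr hn)
end

section
/- Let A be a diagonalizable d×d real matrix with positive distinct eigenvalues λ₁ < … < λ_{d*}, let λ > 0, let p(t) be an ℝᵈ-valued polynomial, and let g : [T,∞) → ℝᵈ be continuous with |g(t)| = O(e^{-αt}) for some α > 0. Suppose y ∈ C¹([T,∞), ℝᵈ) solves y' = −(A − λ I)y + p(t) + g(t), and, in case λ > λ₁, assume e^{(λ̄−λ)t}|y(t)| → 0 where λ̄ = max{λ_j : λ_j < λ}. Then there exists a unique ℝᵈ-valued polynomial q(t) such that q' = −(A − λ I)q + p on ℝ, and |y(t) − q(t)| = O(e^{-εt}) for some ε > 0. -/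
open Matrix Set

/-- `q : ℝ → E` is an `E`-valued polynomial function. -/
def IsPolyFun {E : Type*} [AddCommGroup E] [Module ℝ E] (q : ℝ → E) : Prop :=
  ∃ (n : ℕ) (c : Fin (n + 1) → E), ∀ t : ℝ, q t = ∑ i : Fin (n + 1), t ^ (i : ℕ) • c i

section Helpers

open Polynomial Filter MeasureTheory Real

lemma polyODE (μ : ℝ) (hμ : μ ≠ 0) (P : ℝ[X]) :
    ∃ Q : ℝ[X], derivative Q = C μ * Q + P := by
  refine ⟨-∑ k ∈ Finset.range (P.natDegree + 1), C (μ⁻¹ ^ (k+1)) * derivative^[k] P, ?_⟩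
  have hz : derivative^[P.natDegree + 1] P = 0 :=
    Polynomial.iterate_derivative_eq_zero (Nat.lt_succ_self _)
  have key : ∑ k ∈ Finset.range (P.natDegree + 1), C (μ⁻¹ ^ (k+1)) * derivative^[k+1] P
      = (∑ k ∈ Finset.range (P.natDegree + 1), C (μ⁻¹ ^ k) * derivative^[k] P) - P := by
    rw [Finset.sum_range_succ, hz, mul_zero, add_zero, Finset.sum_range_succ']
    simp
  have hmul : C μ * ∑ k ∈ Finset.range (P.natDegree + 1), C (μ⁻¹ ^ (k+1)) * derivative^[k] P
      = ∑ k ∈ Finset.range (P.natDegree + 1), C (μ⁻¹ ^ k) * derivative^[k] P := by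
    rw [Finset.mul_sum]
    refine Finset.sum_congr rfl fun k _ => ?_
    rw [← mul_assoc, ← C_mul]
    congr 2
    rw [pow_succ, mul_comm, mul_assoc, inv_mul_cancel₀ hμ, mul_one]
  rw [derivative_neg, derivative_sum]
  simp only [derivative_C_mul, ← Function.iterate_succ_apply' derivative]
  rw [key, mul_neg, hmul]
  ring

lemma polyAnti (P : ℝ[X]) : ∃ Q : ℝ[X], derivative Q = P := by
  refine ⟨∑ i ∈ Finset.range (P.natDegree + 1), C (P.coeff i / (i+1)) * X^(i+1), ?_⟩
  rw [derivative_sum]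
  have h1 : ∀ i ∈ Finset.range (P.natDegree+1),
      derivative (C (P.coeff i / (i+1)) * X^(i+1)) = C (P.coeff i) * X^i := by
    intro i _
    rw [derivative_C_mul, derivative_X_pow]
    rw [← mul_assoc, ← C_mul, Nat.add_sub_cancel]
    congr 2
    push_cast
    field_simp
  rw [Finset.sum_congr rfl h1]
  conv_rhs => rw [P.as_sum_range' (P.natDegree+1) (Nat.lt_succ_self _)]
  simp [Polynomial.C_mul_X_pow_eq_monomial]

lemma tendsto_exp_neg_mul_poly {μ : ℝ} (hμ : 0 < μ) (P : ℝ[X]) :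
    Tendsto (fun t => exp (-(μ * t)) * P.eval t) atTop (nhds 0) := by
  have h2 := (P.comp (C μ⁻¹ * X)).tendsto_div_exp_atTop.comp
    (tendsto_id.const_mul_atTop hμ)
  refine h2.congr fun t => ?_
  simp only [Function.comp_apply, eval_comp, eval_mul, eval_C, eval_X, id_eq]
  rw [Real.exp_neg, div_eq_mul_inv, mul_comm]
  congr 2
  field_simp

-- exact improper integral of exponential
lemma integral_exp_Ioi (β a : ℝ) (hβ : 0 < β) :
    ∫ s in Ioi a, exp (-(β * s)) = exp (-(β * a)) / β := by
  have hderiv : ∀ x ∈ Ioi a, HasDerivAt (fun s => -exp (-(β * s)) / β) (exp (-(β * x))) x := by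
    intro x _
    have h := (((hasDerivAt_id x).const_mul β).neg.exp).neg.div_const β
    refine h.congr_deriv ?_
    field_simp
    rfl
  have htend : Tendsto (fun s => -exp (-(β * s)) / β) atTop (nhds 0) := by
    have : Tendsto (fun s : ℝ => -(β * s)) atTop atBot := by
      have h := tendsto_id (α := ℝ) |>.const_mul_atTop hβ
      exact tendsto_neg_atBot_iff.mpr h
    have := (tendsto_exp_atBot.comp this).neg.div_const β
    simpa using this
  have hint : IntegrableOn (fun s => exp (-(β * s))) (Ioi a) := by
    have := exp_neg_integrableOn_Ioi a hβ
    simpa [neg_mul] using this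
  have hcont : ContinuousWithinAt (fun s => -exp (-(β * s)) / β) (Ici a) a :=
    (Continuous.continuousWithinAt (by continuity))
  have := MeasureTheory.integral_Ioi_of_hasDerivAt_of_tendsto hcont hderiv hint htend
  rw [this]; ring

lemma integral_exp_between (δ a b : ℝ) (hδ : 0 < δ) (hab : a ≤ b) :
    ∫ s in a..b, exp (-(δ * s)) ≤ exp (-(δ * a)) / δ := by
  have hderiv : ∀ x ∈ uIcc a b, HasDerivAt (fun s => -exp (-(δ * s)) / δ) (exp (-(δ * x))) x := by
    intro x _
    have h := (((hasDerivAt_id x).const_mul δ).neg.exp).neg.div_const δ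
    refine h.congr_deriv ?_
    field_simp
    rfl
  have := intervalIntegral.integral_eq_sub_of_hasDerivAt hderiv
    (ContinuousOn.intervalIntegrable (Continuous.continuousOn (by continuity)))
  rw [this]
  have h1 := exp_pos (-(δ * b))
  have h2 := exp_pos (-(δ * a))
  rw [div_sub_div_same]
  gcongr
  linarith

-- FTC representation
lemma ftc_rep (T₀ μ : ℝ) (w G : ℝ → ℝ)
    (hGc : ContinuousOn G (Ici T₀))
    (hw : ∀ t ∈ Ici T₀, HasDerivWithinAt w (μ * w t + G t) (Ici T₀) t) :
    ∀ t ≥ T₀, exp (-(μ * t)) * w t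
      = exp (-(μ * T₀)) * w T₀ + ∫ s in T₀..t, exp (-(μ * s)) * G s := by
  intro t ht
  have hu : ∀ s ∈ Ici T₀, HasDerivWithinAt (fun x => exp (-(μ * x)) * w x)
      (exp (-(μ * s)) * G s) (Ici T₀) s := by
    intro s hs
    have h1 : HasDerivAt (fun x : ℝ => exp (-(μ * x))) (exp (-(μ * s)) * -μ) s := by
      have := (((hasDerivAt_id s).const_mul μ).neg).exp
      simpa using this
    have h2 := (h1.hasDerivWithinAt (s := Ici T₀)).mul (hw s hs)
    refine h2.congr_deriv ?_
    ring
  have hwc : ContinuousOn (fun x => exp (-(μ * x)) * w x) (Ici T₀) :=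
    fun s hs => ((hu s hs).continuousWithinAt)
  have hint : IntervalIntegrable (fun s => exp (-(μ * s)) * G s) volume T₀ t := by
    apply ContinuousOn.intervalIntegrable
    apply ContinuousOn.mul (Continuous.continuousOn (by continuity))
    exact hGc.mono (by rw [uIcc_of_le ht]; exact Icc_subset_Ici_self)
  have key := intervalIntegral.integral_eq_sub_of_hasDeriv_right_of_le ht
    (hwc.mono Icc_subset_Ici_self)
    (fun x hx => ((hu x (le_of_lt hx.1)).mono (fun z hz => le_trans (le_of_lt hx.1) (le_of_lt hz))))
    hint
  rw [key]; ring

lemma corePos (T₀ β C : ℝ) (hβ : 0 < β) (u h : ℝ → ℝ)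
    (hcont : ContinuousOn h (Ici T₀))
    (hb : ∀ t ≥ T₀, |h t| ≤ C * exp (-(β * t)))
    (hrep : ∀ t ≥ T₀, u t = u T₀ + ∫ s in T₀..t, h s) :
    ∃ L, Tendsto u atTop (nhds L) ∧ ∀ t ≥ T₀, |u t - L| ≤ C / β * exp (-(β * t)) := by
  have hmeas : IntegrableOn h (Ioi T₀) := by
    apply MeasureTheory.Integrable.mono'
      (((exp_neg_integrableOn_Ioi T₀ hβ).const_mul C))
    · exact (hcont.mono Ioi_subset_Ici_self).aestronglyMeasurable measurableSet_Ioi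
    · exact (ae_restrict_iff' measurableSet_Ioi).2
        (ae_of_all _ fun t ht => by simpa [neg_mul] using hb t (le_of_lt ht))
  set L := u T₀ + ∫ s in Ioi T₀, h s with hL
  have hbound : ∀ t ≥ T₀, |u t - L| ≤ C / β * exp (-(β * t)) := by
    intro t ht
    have hsplit : (∫ s in Ioi T₀, h s) = (∫ s in T₀..t, h s) + ∫ s in Ioi t, h s := by
      rw [intervalIntegral.integral_of_le ht,
        ← MeasureTheory.setIntegral_union (Ioc_disjoint_Ioi le_rfl) measurableSet_Ioi
          (hmeas.mono_set (Ioc_subset_Ioi_self)) (hmeas.mono_set (Ioi_subset_Ioi ht)),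
        Ioc_union_Ioi_eq_Ioi ht]
    have heq : u t - L = -∫ s in Ioi t, h s := by
      rw [hrep t ht, hL, hsplit]; ring
    rw [heq, abs_neg]
    have h1 : |∫ s in Ioi t, h s| ≤ ∫ s in Ioi t, C * exp (-(β * s)) := by
      rw [← Real.norm_eq_abs]
      apply MeasureTheory.norm_integral_le_of_norm_le
      · exact ((exp_neg_integrableOn_Ioi t hβ).const_mul C).congr
          (ae_of_all _ fun s => by simp [neg_mul])
      · exact (ae_restrict_iff' measurableSet_Ioi).2
          (ae_of_all _ fun s hs => by
            simpa [Real.norm_eq_abs] using hb s (le_of_lt (lt_of_le_of_lt ht hs)))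
    have h2 : (∫ s in Ioi t, C * exp (-(β * s))) = C / β * exp (-(β * t)) := by
      rw [MeasureTheory.integral_const_mul, integral_exp_Ioi β t hβ]; ring
    calc |∫ s in Ioi t, h s| ≤ _ := h1
      _ = _ := h2
  refine ⟨L, ?_, hbound⟩
  have htend0 : Tendsto (fun t => C / β * exp (-(β * t))) atTop (nhds 0) := by
    have : Tendsto (fun t : ℝ => exp (-(β * t))) atTop (nhds 0) := by
      apply tendsto_exp_atBot.comp
      have h := tendsto_id (α := ℝ) |>.const_mul_atTop hβ
      exact tendsto_neg_atBot_iff.mpr h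
    simpa using this.const_mul (C / β)
  have h4 : Tendsto (fun t => u t - L) atTop (nhds 0) := by
    apply squeeze_zero_norm' ?_ htend0
    filter_upwards [Filter.eventually_ge_atTop T₀] with t ht
    simpa [Real.norm_eq_abs] using hbound t ht
  have := h4.add_const L
  simpa using this

lemma coreNeg (T₀ μ α C : ℝ) (hμ : μ < 0) (hα : 0 < α) (hC : 0 ≤ C) (w G : ℝ → ℝ)
    (hGc : ContinuousOn G (Ici T₀))
    (hb : ∀ t ≥ T₀, |G t| ≤ C * exp (-(α * t)))
    (hrep : ∀ t ≥ T₀, exp (-(μ * t)) * w t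
      = exp (-(μ * T₀)) * w T₀ + ∫ s in T₀..t, exp (-(μ * s)) * G s) :
    ∃ ε > 0, ∃ C', ∀ t ≥ max T₀ 0, |w t| ≤ C' * exp (-(ε * t)) := by
  set ε := min (-μ) α / 2 with hεdef
  have hε : 0 < ε := by
    rw [hεdef]
    have := lt_min (neg_pos.mpr hμ) hα
    linarith
  have hεμ : ε < -μ := by
    rcases min_cases (-μ) α with ⟨h1, h2⟩ | ⟨h1, h2⟩ <;> rw [hεdef, h1] <;> linarith
  have hεα : ε < α := by
    rcases min_cases (-μ) α with ⟨h1, h2⟩ | ⟨h1, h2⟩ <;> rw [hεdef, h1] <;> linarith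
  refine ⟨ε, hε, exp (-(μ * T₀)) * |w T₀| + C * exp ((ε - α) * T₀) / (α - ε), ?_⟩
  intro t ht
  have htT : T₀ ≤ t := le_trans (le_max_left _ _) ht
  have ht0 : (0:ℝ) ≤ t := le_trans (le_max_right _ _) ht
  -- integrand bound
  have hptwise : ∀ s ∈ Icc T₀ t, |exp (-(μ * s)) * G s|
      ≤ (C * exp ((-μ - ε) * t)) * exp (-((α - ε) * s)) := by
    intro s hs
    rw [abs_mul, abs_of_pos (exp_pos _)]
    have h1 : exp (-(μ * s)) * |G s| ≤ exp (-(μ * s)) * (C * exp (-(α * s))) := by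
      apply mul_le_mul_of_nonneg_left (hb s hs.1) (le_of_lt (exp_pos _))
    apply h1.trans
    rw [← mul_assoc, mul_comm (exp (-(μ * s))) C, mul_assoc, ← Real.exp_add,
      mul_assoc, ← Real.exp_add]
    apply mul_le_mul_of_nonneg_left _ hC
    apply Real.exp_le_exp.2
    nlinarith [hs.2, hεμ]
  -- interval integral bound
  have hintG : IntervalIntegrable (fun s => exp (-(μ * s)) * G s) volume T₀ t := by
    apply ContinuousOn.intervalIntegrable
    apply ContinuousOn.mul (Continuous.continuousOn (by continuity))
    exact hGc.mono (by rw [uIcc_of_le htT]; exact Icc_subset_Ici_self)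
  have hIbound : |∫ s in T₀..t, exp (-(μ * s)) * G s|
      ≤ (C * exp ((-μ - ε) * t)) * (exp (-((α - ε) * T₀)) / (α - ε)) := by
    have h1 := intervalIntegral.abs_integral_le_integral_abs
      (f := fun s => exp (-(μ * s)) * G s) (μ := volume) htT
    have h2 : (∫ s in T₀..t, |exp (-(μ * s)) * G s|)
        ≤ ∫ s in T₀..t, (C * exp ((-μ - ε) * t)) * exp (-((α - ε) * s)) := by
      apply intervalIntegral.integral_mono_on htT hintG.abs
      · exact (ContinuousOn.intervalIntegrable (Continuous.continuousOn (by continuity)))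
      · exact hptwise
    have h3 : (∫ s in T₀..t, (C * exp ((-μ - ε) * t)) * exp (-((α - ε) * s)))
        = (C * exp ((-μ - ε) * t)) * ∫ s in T₀..t, exp (-((α - ε) * s)) :=
      intervalIntegral.integral_const_mul _ _
    have h4 : (∫ s in T₀..t, exp (-((α - ε) * s))) ≤ exp (-((α - ε) * T₀)) / (α - ε) :=
      integral_exp_between (α - ε) T₀ t (by linarith) htT
    calc |∫ s in T₀..t, exp (-(μ * s)) * G s| ≤ _ := h1
      _ ≤ _ := h2
      _ = _ := h3
      _ ≤ _ := by
          apply mul_le_mul_of_nonneg_left h4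
          positivity
  -- assemble
  have hw : w t = exp (μ * t) * (exp (-(μ * T₀)) * w T₀)
      + exp (μ * t) * ∫ s in T₀..t, exp (-(μ * s)) * G s := by
    have := hrep t htT
    have he : exp (μ * t) * exp (-(μ * t)) = 1 := by
      rw [← Real.exp_add]; simp
    calc w t = exp (μ * t) * (exp (-(μ * t)) * w t) := by
          rw [← mul_assoc, he, one_mul]
      _ = _ := by rw [this]; ring
  rw [hw]
  have hfirst : |exp (μ * t) * (exp (-(μ * T₀)) * w T₀)|
      ≤ (exp (-(μ * T₀)) * |w T₀|) * exp (-(ε * t)) := by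
    rw [abs_mul, abs_of_pos (exp_pos _), abs_mul, abs_of_pos (exp_pos _)]
    rw [mul_comm (exp (μ * t))]
    apply mul_le_mul_of_nonneg_left _ (by positivity)
    apply Real.exp_le_exp.2
    nlinarith
  have hsecond : |exp (μ * t) * ∫ s in T₀..t, exp (-(μ * s)) * G s|
      ≤ C * exp ((ε - α) * T₀) / (α - ε) * exp (-(ε * t)) := by
    rw [abs_mul, abs_of_pos (exp_pos _)]
    calc exp (μ * t) * |∫ s in T₀..t, exp (-(μ * s)) * G s|
        ≤ exp (μ * t) * ((C * exp ((-μ - ε) * t)) * (exp (-((α - ε) * T₀)) / (α - ε))) :=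
          mul_le_mul_of_nonneg_left hIbound (le_of_lt (exp_pos _))
      _ = C * exp ((ε - α) * T₀) / (α - ε) * (exp (μ * t) * exp ((-μ - ε) * t)) := by
          rw [show -((α - ε) * T₀) = (ε - α) * T₀ by ring]; ring
      _ = C * exp ((ε - α) * T₀) / (α - ε) * exp (-(ε * t)) := by
          rw [← Real.exp_add]; congr 2; ring
  calc |exp (μ * t) * (exp (-(μ * T₀)) * w T₀)
      + exp (μ * t) * ∫ s in T₀..t, exp (-(μ * s)) * G s|
      ≤ _ + _ := abs_add_le _ _
    _ ≤ (exp (-(μ * T₀)) * |w T₀|) * exp (-(ε * t))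
        + C * exp ((ε - α) * T₀) / (α - ε) * exp (-(ε * t)) := add_le_add hfirst hsecond
    _ = _ := by ring

lemma scalar_main (T₀ μ α c : ℝ) (hα : 0 < α) (hc : 0 ≤ c) (P : ℝ[X]) (z G : ℝ → ℝ)
    (hGc : ContinuousOn G (Ici T₀))
    (hb : ∀ t ≥ T₀, |G t| ≤ c * exp (-(α * t)))
    (hz : ∀ t ∈ Ici T₀, HasDerivWithinAt z (μ * z t + P.eval t + G t) (Ici T₀) t)
    (hside : 0 < μ → Tendsto (fun t => exp (-(μ * t)) * z t) atTop (nhds 0)) :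
    ∃ Q : ℝ[X], derivative Q = C μ * Q + P ∧
      ∃ ε > 0, ∃ C', ∀ t ≥ max T₀ 0, |z t - Q.eval t| ≤ C' * exp (-(ε * t)) := by
  have mkw : ∀ Q : ℝ[X], derivative Q = C μ * Q + P →
      ∀ t ∈ Ici T₀, HasDerivWithinAt (fun s => z s - Q.eval s)
        (μ * (z t - Q.eval t) + G t) (Ici T₀) t := by
    intro Q hQ t ht
    have hQd : HasDerivAt (fun s => Q.eval s) ((derivative Q).eval t) t := Q.hasDerivAt t
    have h2 := (hz t ht).sub hQd.hasDerivWithinAt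
    refine h2.congr_deriv ?_
    rw [hQ]
    simp only [eval_add, eval_mul, eval_C]
    ring
  rcases lt_trichotomy μ 0 with hneg | hzero | hpos'
  · obtain ⟨Q, hQ⟩ := polyODE μ (ne_of_lt hneg) P
    have hw := mkw Q hQ
    have hrep := ftc_rep T₀ μ _ G hGc hw
    obtain ⟨ε, hε, C', hbnd⟩ := coreNeg T₀ μ α c hneg hα hc _ G hGc hb hrep
    exact ⟨Q, hQ, ε, hε, C', hbnd⟩
  · subst hzero
    obtain ⟨Q₀, hQ₀⟩ := polyAnti P
    have hQ₀' : derivative Q₀ = C 0 * Q₀ + P := by rw [hQ₀]; simp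
    have hw := mkw Q₀ hQ₀'
    have hrep := ftc_rep T₀ 0 _ G hGc hw
    simp only [zero_mul, neg_zero, Real.exp_zero, one_mul] at hrep
    obtain ⟨L, _, hbnd⟩ := corePos T₀ α c hα _ G hGc hb hrep
    refine ⟨Q₀ + C L, by rw [derivative_add, hQ₀]; simp, α, hα, c / α, ?_⟩
    intro t ht
    have := hbnd t (le_trans (le_max_left _ _) ht)
    simpa [sub_sub] using this
  · obtain ⟨Q, hQ⟩ := polyODE μ (ne_of_gt hpos') P
    have hw := mkw Q hQ
    have hrep := ftc_rep T₀ μ _ G hGc hw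
    have hβ : 0 < μ + α := by linarith
    obtain ⟨L, htend, hbnd⟩ := corePos T₀ (μ + α) c hβ
      (fun t => exp (-(μ * t)) * (z t - Q.eval t))
      (fun s => exp (-(μ * s)) * G s)
      (ContinuousOn.mul (Continuous.continuousOn (by continuity)) hGc)
      (fun t ht => by
        rw [abs_mul, abs_of_pos (exp_pos _)]
        calc exp (-(μ * t)) * |G t| ≤ exp (-(μ * t)) * (c * exp (-(α * t))) :=
              mul_le_mul_of_nonneg_left (hb t ht) (le_of_lt (exp_pos _))
          _ = c * exp (-((μ + α) * t)) := by
              rw [mul_comm (exp (-(μ * t))), mul_assoc, ← Real.exp_add]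
              congr 2
              ring)
      hrep
    have hL0 : L = 0 := by
      have h1 : Tendsto (fun t => exp (-(μ * t)) * (z t - Q.eval t)) atTop (nhds 0) := by
        have ha := hside hpos'
        have hb2 := tendsto_exp_neg_mul_poly hpos' Q
        have := ha.sub hb2
        simp only [sub_zero] at this
        refine this.congr fun t => ?_
        ring
      exact tendsto_nhds_unique htend h1
    refine ⟨Q, hQ, α, hα, c / (μ + α), ?_⟩
    intro t ht
    have ht0 : (0:ℝ) ≤ t := le_trans (le_max_right _ _) ht
    have h2 := hbnd t (le_trans (le_max_left _ _) ht)
    rw [hL0, sub_zero, abs_mul, abs_of_pos (exp_pos _)] at h2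
    have h3 : |z t - Q.eval t| = exp (μ * t) * (exp (-(μ * t)) * |z t - Q.eval t|) := by
      rw [← mul_assoc, ← Real.exp_add]
      simp
    rw [h3]
    calc exp (μ * t) * (exp (-(μ * t)) * |z t - Q.eval t|)
        ≤ exp (μ * t) * (c / (μ + α) * exp (-((μ + α) * t))) :=
          mul_le_mul_of_nonneg_left h2 (le_of_lt (exp_pos _))
      _ = c / (μ + α) * (exp (μ * t) * exp (-((μ + α) * t))) := by ring
      _ = c / (μ + α) * exp (-(α * t)) := by
          rw [← Real.exp_add]
          congr 2
          ring

variable {d : ℕ}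

lemma euclid_sum_apply {m : Type*} (s : Finset m) (f : m → EuclideanSpace ℝ (Fin d))
    (k : Fin d) : (∑ i ∈ s, f i) k = ∑ i ∈ s, f i k := by
  exact map_sum (EuclideanSpace.proj (𝕜 := ℝ) k) f s

lemma euclid_coord_le_norm (v : EuclideanSpace ℝ (Fin d)) (k : Fin d) : |v k| ≤ ‖v‖ := by
  rw [EuclideanSpace.norm_eq]
  simp only [Real.norm_eq_abs]
  rw [show |v k| = Real.sqrt (|v k|^2) by rw [Real.sqrt_sq (abs_nonneg _)]]
  apply Real.sqrt_le_sqrt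
  exact Finset.single_le_sum (f := fun i => |v i|^2) (fun i _ => by positivity) (Finset.mem_univ k)

lemma euclid_norm_le_sum (v : EuclideanSpace ℝ (Fin d)) : ‖v‖ ≤ ∑ k, |v k| := by
  rw [EuclideanSpace.norm_eq]
  simp only [Real.norm_eq_abs]
  have h1 : ∑ i, |v i|^2 ≤ (∑ k, |v k|)^2 := by
    have := Finset.sum_sq_le_sq_sum_of_nonneg (s := Finset.univ)
      (f := fun i : Fin d => |v i|) (fun i _ => abs_nonneg _)
    simpa using this
  have h2 := Real.sqrt_le_sqrt h1
  rwa [Real.sqrt_sq (Finset.sum_nonneg fun i _ => abs_nonneg _)] at h2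

lemma hasDerivWithinAt_coord {f : ℝ → EuclideanSpace ℝ (Fin d)} {v : EuclideanSpace ℝ (Fin d)}
    {s : Set ℝ} {t : ℝ} (h : HasDerivWithinAt f v s t) (k : Fin d) :
    HasDerivWithinAt (fun x => f x k) (v k) s t := by
  have := (EuclideanSpace.proj (𝕜 := ℝ) k).hasFDerivAt.comp_hasDerivWithinAt t h
  exact this

lemma hasDerivAt_of_coords {f : ℝ → EuclideanSpace ℝ (Fin d)} {v : EuclideanSpace ℝ (Fin d)}
    {t : ℝ} (h : ∀ k, HasDerivAt (fun x => f x k) (v k) t) : HasDerivAt f v t := by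
  have hPi : HasDerivAt (fun x (k : Fin d) => f x k) (fun k => v k) t := hasDerivAt_pi.2 h
  have := ((PiLp.continuousLinearEquiv 2 ℝ (fun _ : Fin d => ℝ)).symm.toContinuousLinearMap.hasFDerivAt).comp_hasDerivAt t hPi
  exact this

lemma continuousOn_coord {g : ℝ → EuclideanSpace ℝ (Fin d)} {s : Set ℝ}
    (h : ContinuousOn g s) (k : Fin d) : ContinuousOn (fun t => g t k) s :=
  (EuclideanSpace.proj (𝕜 := ℝ) k).continuous.comp_continuousOn h

lemma isPolyFun_iff (q : ℝ → EuclideanSpace ℝ (Fin d)) :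
    IsPolyFun q ↔ ∃ P : Fin d → ℝ[X], ∀ t k, q t k = (P k).eval t := by
  constructor
  · rintro ⟨n, c, hc⟩
    refine ⟨fun k => ∑ i : Fin (n+1), C (c i k) * X^(i:ℕ), fun t k => ?_⟩
    rw [hc t]
    simp only [eval_finset_sum, eval_mul, eval_C, eval_pow, eval_X]
    rw [show (∑ i : Fin (n + 1), t ^ (i:ℕ) • c i) k = ∑ i : Fin (n+1), t ^ (i:ℕ) * c i k by
      rw [euclid_sum_apply]
      exact Finset.sum_congr rfl fun i _ => rfl]
    exact Finset.sum_congr rfl fun i _ => by ring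
  · rintro ⟨P, hP⟩
    refine ⟨Finset.univ.sup (fun k => (P k).natDegree), fun i => WithLp.toLp 2 (fun k => (P k).coeff i), fun t => ?_⟩
    ext k
    rw [hP t k]
    rw [show (∑ i : Fin (Finset.univ.sup (fun k => (P k).natDegree) + 1),
        t ^ (i:ℕ) • WithLp.toLp 2 (fun k => (P k).coeff (i:ℕ))) k
      = ∑ i : Fin (Finset.univ.sup (fun k => (P k).natDegree) + 1),
          t ^ (i:ℕ) * (P k).coeff (i:ℕ) by
      rw [euclid_sum_apply]
      exact Finset.sum_congr rfl fun i _ => rfl]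
    rw [Polynomial.eval_eq_sum_range' (Nat.lt_succ_of_le
      (Finset.le_sup (f := fun k => (P k).natDegree) (Finset.mem_univ k)))]
    rw [Fin.sum_univ_eq_sum_range (fun i => t ^ i * (P k).coeff i)]
    exact Finset.sum_congr rfl fun i _ => by ring

lemma tendsto_cexp (c ε : ℝ) (hε : 0 < ε) :
    Tendsto (fun t => c * exp (-ε * t)) atTop (nhds 0) := by
  have h1 : Tendsto (fun t : ℝ => exp (-ε * t)) atTop (nhds 0) := by
    apply tendsto_exp_atBot.comp
    have h := tendsto_id (α := ℝ) |>.const_mul_atTop hε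
    have := tendsto_neg_atBot_iff.mpr h
    refine this.congr fun t => by simp
  simpa using h1.const_mul c

lemma polyfun_zero (q : ℝ → EuclideanSpace ℝ (Fin d)) (hq : IsPolyFun q)
    (h0 : Tendsto (fun t => ‖q t‖) atTop (nhds 0)) : ∀ t, q t = 0 := by
  rw [isPolyFun_iff] at hq
  obtain ⟨P, hP⟩ := hq
  have hk : ∀ k, P k = 0 := by
    intro k
    have h1 : Tendsto (fun t => (P k).eval t) atTop (nhds 0) := by
      apply squeeze_zero_norm' ?_ h0
      filter_upwards with t
      rw [← hP t k, Real.norm_eq_abs]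
      exact euclid_coord_le_norm (q t) k
    by_contra hne
    rcases le_or_gt (P k).degree 0 with hdeg | hdeg
    · obtain ⟨a, ha⟩ : ∃ a, P k = C a := ⟨(P k).coeff 0, (P k).eq_C_of_degree_le_zero hdeg⟩
      have h1' : Tendsto (fun _ : ℝ => a) atTop (nhds 0) := by
        refine h1.congr fun t => by rw [ha, Polynomial.eval_C]
      have ha0 : a = 0 := tendsto_nhds_unique tendsto_const_nhds h1'
      exact hne (by rw [ha, ha0, map_zero])
    · have h2 := Polynomial.abs_tendsto_atTop (P k) hdeg
      have h1a : Tendsto (fun x => |(P k).eval x|) atTop (nhds 0) := by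
        simpa using h1.abs
      exact not_tendsto_nhds_of_tendsto_atTop h2 0 h1a
  intro t
  ext k
  rw [hP t k, hk k]
  simp

lemma mulVec_coord (M : Matrix (Fin d) (Fin d) ℝ) (v : Fin d → ℝ) (i : Fin d) :
    (M *ᵥ v) i = ∑ l, M i l * v l := rfl

lemma eucl_ode_coord (A : Matrix (Fin d) (Fin d) ℝ) (lam : ℝ)
    (u pt gt : EuclideanSpace ℝ (Fin d)) (k : Fin d) :
    (-(Matrix.toEuclideanLin A u - lam • u) + pt + gt) k
      = -((∑ l, A k l * u l) - lam * u k) + pt k + gt k := rfl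

lemma eucl_ode_coord' (A : Matrix (Fin d) (Fin d) ℝ) (lam : ℝ)
    (u pt : EuclideanSpace ℝ (Fin d)) (k : Fin d) :
    (-(Matrix.toEuclideanLin A u - lam • u) + pt) k
      = -((∑ l, A k l * u l) - lam * u k) + pt k := rfl



end Helpers

set_option maxHeartbeats 1000000 in
/-- Key approximation lemma: if `y' = -(A - λI)y + p(t) + g(t)` with `p` polynomial
and `g` exponentially decaying (plus the side condition when `λ > λ₁`), then there
is a unique polynomial `q` with `q' = -(A - λI)q + p` and `|y - q| = O(e^{-εt})`. -/
theorem stmt_12 {d : ℕ} (A S : Matrix (Fin d) (Fin d) ℝ) (hS : IsUnit S.det)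
    (d₀ : Fin d → ℝ) (hpos : ∀ i, 0 < d₀ i)
    (hA : A = S⁻¹ * Matrix.diagonal d₀ * S)
    (lam : ℝ) (hlam : 0 < lam)
    (p : ℝ → EuclideanSpace ℝ (Fin d)) (hp : IsPolyFun p)
    (T : ℝ) (g : ℝ → EuclideanSpace ℝ (Fin d))
    (hgcont : ContinuousOn g (Ici T))
    (α : ℝ) (hα : 0 < α)
    (hg : ∃ C T', ∀ t ≥ T', ‖g t‖ ≤ C * Real.exp (-α * t))
    (y : ℝ → EuclideanSpace ℝ (Fin d))
    (hy : ∀ t ∈ Ici T, HasDerivWithinAt y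
      (-(Matrix.toEuclideanLin A (y t) - lam • y t) + p t + g t) (Ici T) t)
    (hside : ∀ lamBar : ℝ,
      (lamBar ∈ Finset.image d₀ Finset.univ ∧ lamBar < lam ∧
        ∀ mu ∈ Finset.image d₀ Finset.univ, mu < lam → mu ≤ lamBar) →
      Filter.Tendsto (fun t => Real.exp ((lamBar - lam) * t) * ‖y t‖)
        Filter.atTop (nhds 0)) :
    ∃! q : ℝ → EuclideanSpace ℝ (Fin d), IsPolyFun q ∧
      (∀ t : ℝ, HasDerivAt q (-(Matrix.toEuclideanLin A (q t) - lam • q t) + p t) t) ∧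
      ∃ ε > (0 : ℝ), ∃ C T', ∀ t ≥ T', ‖y t - q t‖ ≤ C * Real.exp (-ε * t) := by
  obtain ⟨Cg, T', hgb⟩ := hg
  -- global threshold
  set T₀ : ℝ := max T (max T' 0) with hT₀def
  have hT₀T : T ≤ T₀ := le_max_left _ _
  have hT₀T' : T' ≤ T₀ := le_trans (le_max_left _ _) (le_max_right _ _)
  have hT₀0 : (0:ℝ) ≤ T₀ := le_trans (le_max_right _ _) (le_max_right _ _)
  have hsub : Ici T₀ ⊆ Ici T := Ici_subset_Ici.2 hT₀T
  have hCg : 0 ≤ Cg := by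
    have h := hgb T₀ hT₀T'
    nlinarith [norm_nonneg (g T₀), Real.exp_pos (-α * T₀)]
  -- matrix identities
  have hS1 : S * S⁻¹ = 1 := Matrix.mul_nonsing_inv S hS
  have hS2 : S⁻¹ * S = 1 := Matrix.nonsing_inv_mul S hS
  have hSA : S * A = Matrix.diagonal d₀ * S := by
    rw [hA, ← Matrix.mul_assoc, ← Matrix.mul_assoc, hS1, Matrix.one_mul]
  have hAS : A * S⁻¹ = S⁻¹ * Matrix.diagonal d₀ := by
    rw [hA, Matrix.mul_assoc, Matrix.mul_assoc, hS1, Matrix.mul_one]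
  have hSinvS : ∀ v : Fin d → ℝ, S⁻¹ *ᵥ (S *ᵥ v) = v := by
    intro v; rw [Matrix.mulVec_mulVec, hS2, Matrix.one_mulVec]
  -- coordinates of p
  obtain ⟨Pp, hPp⟩ := (isPolyFun_iff p).1 hp
  set PS : Fin d → Polynomial ℝ := fun j => ∑ k, Polynomial.C (S j k) * Pp k with hPSdef
  have hPSeval : ∀ t j, (PS j).eval t = ∑ k, S j k * p t k := by
    intro t j
    rw [hPSdef]
    simp only [Polynomial.eval_finset_sum, Polynomial.eval_mul, Polynomial.eval_C]
    exact Finset.sum_congr rfl fun k _ => by rw [hPp t k]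
  -- transformed functions
  set zf : Fin d → ℝ → ℝ := fun j t => ∑ k, S j k * y t k with hzfdef
  set Gf : Fin d → ℝ → ℝ := fun j t => ∑ k, S j k * g t k with hGfdef
  set Kf : Fin d → ℝ := fun j => ∑ k, |S j k| with hKfdef
  have hKf0 : ∀ j, 0 ≤ Kf j := fun j => Finset.sum_nonneg fun k _ => abs_nonneg _
  have habs : ∀ (j) (v : EuclideanSpace ℝ (Fin d)), |∑ k, S j k * v k| ≤ Kf j * ‖v‖ := by
    intro j v
    calc |∑ k, S j k * v k| ≤ ∑ k, |S j k * v k| := Finset.abs_sum_le_sum_abs _ _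
      _ ≤ ∑ k, |S j k| * ‖v‖ := by
          apply Finset.sum_le_sum
          intro k _
          rw [abs_mul]
          exact mul_le_mul_of_nonneg_left (euclid_coord_le_norm v k) (abs_nonneg _)
      _ = Kf j * ‖v‖ := by rw [hKfdef, Finset.sum_mul]
  have hGfb : ∀ j, ∀ t ≥ T₀, |Gf j t| ≤ Kf j * Cg * Real.exp (-(α * t)) := by
    intro j t ht
    calc |Gf j t| ≤ Kf j * ‖g t‖ := habs j (g t)
      _ ≤ Kf j * (Cg * Real.exp (-α * t)) :=
          mul_le_mul_of_nonneg_left (hgb t (le_trans hT₀T' ht)) (hKf0 j)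
      _ = Kf j * Cg * Real.exp (-(α * t)) := by rw [neg_mul]; ring
  have hGfc : ∀ j, ContinuousOn (Gf j) (Ici T₀) := by
    intro j
    apply continuousOn_finset_sum
    intro k _
    exact (continuousOn_coord (hgcont.mono hsub) k).const_smul (S j k)
  -- scalar ODEs
  have hzode : ∀ j, ∀ t ∈ Ici T₀, HasDerivWithinAt (zf j)
      ((lam - d₀ j) * zf j t + (PS j).eval t + Gf j t) (Ici T₀) t := by
    intro j t ht
    have hyV := (hy t (hsub ht)).mono hsub
    have hcoord := fun k => hasDerivWithinAt_coord hyV k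
    have hsum : HasDerivWithinAt (fun x => ∑ k, S j k * y x k)
        (∑ k, S j k * ((-(Matrix.toEuclideanLin A (y t) - lam • y t) + p t + g t) k))
        (Ici T₀) t := HasDerivWithinAt.fun_sum (fun k _ => (hcoord k).const_mul (S j k))
    have hval : (∑ k, S j k * ((-(Matrix.toEuclideanLin A (y t) - lam • y t) + p t + g t) k))
        = (lam - d₀ j) * zf j t + (PS j).eval t + Gf j t := by
      have e1 : ∀ k, S j k * ((-(Matrix.toEuclideanLin A (y t) - lam • y t) + p t + g t) k)
          = -(S j k * ∑ l, A k l * y t l) + lam * (S j k * y t k)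
            + S j k * p t k + S j k * g t k := by
        intro k
        rw [eucl_ode_coord]
        ring
      rw [Finset.sum_congr rfl fun k _ => e1 k]
      rw [Finset.sum_add_distrib, Finset.sum_add_distrib, Finset.sum_add_distrib]
      have key : ∑ k, -(S j k * ∑ l, A k l * y t l) = -(d₀ j * zf j t) := by
        rw [Finset.sum_neg_distrib, neg_inj]
        have h1 : ∑ k, S j k * ∑ l, A k l * y t l = (S *ᵥ (A *ᵥ fun l => y t l)) j := by
          rw [mulVec_coord]
          exact Finset.sum_congr rfl fun k _ => by rw [mulVec_coord]
        rw [h1, Matrix.mulVec_mulVec, hSA, ← Matrix.mulVec_mulVec, Matrix.mulVec_diagonal]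
        rw [hzfdef]
        simp only [mulVec_coord]
      rw [key]
      have h2 : ∑ k, lam * (S j k * y t k) = lam * zf j t := by
        rw [hzfdef, Finset.mul_sum]
      rw [h2, hPSeval t j]
      rw [hGfdef, hzfdef]
      ring
    rw [← hval]
    exact hsum
  -- side condition per coordinate
  have hsidej : ∀ j, 0 < lam - d₀ j →
      Filter.Tendsto (fun t => Real.exp (-((lam - d₀ j) * t)) * zf j t)
        Filter.atTop (nhds 0) := by
    intro j hj
    have hjlt : d₀ j < lam := by linarith
    have hmem : d₀ j ∈ (Finset.image d₀ Finset.univ).filter (fun x => x < lam) :=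
      Finset.mem_filter.2 ⟨Finset.mem_image_of_mem d₀ (Finset.mem_univ j), hjlt⟩
    have hne : ((Finset.image d₀ Finset.univ).filter (fun x => x < lam)).Nonempty := ⟨_, hmem⟩
    set lamBar := ((Finset.image d₀ Finset.univ).filter (fun x => x < lam)).max' hne
      with hlamBardef
    have hlamBarmem : lamBar ∈ (Finset.image d₀ Finset.univ).filter (fun x => x < lam) :=
      Finset.max'_mem _ hne
    have hlamBarmem' := Finset.mem_filter.1 hlamBarmem
    have hs := hside lamBar ⟨hlamBarmem'.1, hlamBarmem'.2, fun mu hmu hmulam =>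
      Finset.le_max' ((Finset.image d₀ Finset.univ).filter (fun x => x < lam)) mu
        (Finset.mem_filter.2 ⟨hmu, hmulam⟩)⟩
    have hdjlamBar : d₀ j ≤ lamBar := Finset.le_max' _ _ hmem
    have hbnd : ∀ᶠ t in Filter.atTop, ‖Real.exp (-((lam - d₀ j) * t)) * zf j t‖
        ≤ Kf j * (Real.exp ((lamBar - lam) * t) * ‖y t‖) := by
      filter_upwards [Filter.eventually_ge_atTop (0:ℝ)] with t ht
      rw [Real.norm_eq_abs, abs_mul, abs_of_pos (Real.exp_pos _)]
      calc Real.exp (-((lam - d₀ j) * t)) * |zf j t|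
          ≤ Real.exp ((lamBar - lam) * t) * (Kf j * ‖y t‖) := by
            apply mul_le_mul
            · apply Real.exp_le_exp.2; nlinarith
            · exact habs j (y t)
            · exact abs_nonneg _
            · exact le_of_lt (Real.exp_pos _)
        _ = Kf j * (Real.exp ((lamBar - lam) * t) * ‖y t‖) := by ring
    have htnd : Filter.Tendsto (fun t => Kf j * (Real.exp ((lamBar - lam) * t) * ‖y t‖))
        Filter.atTop (nhds 0) := by simpa using hs.const_mul (Kf j)
    exact squeeze_zero_norm' hbnd htnd
  -- apply scalar machinery
  have hscal : ∀ j, ∃ Q : Polynomial ℝ,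
      Polynomial.derivative Q = Polynomial.C (lam - d₀ j) * Q + PS j ∧
      ∃ ε > 0, ∃ C', ∀ t ≥ max T₀ 0, |zf j t - Q.eval t| ≤ C' * Real.exp (-(ε * t)) := by
    intro j
    exact scalar_main T₀ (lam - d₀ j) α (Kf j * Cg) hα (by positivity) (PS j) (zf j) (Gf j)
      (hGfc j) (hGfb j) (hzode j) (hsidej j)
  choose Q hQode εf hεf Cf hCf using hscal
  -- build q
  set q : ℝ → EuclideanSpace ℝ (Fin d) :=
    fun t => (WithLp.equiv 2 (Fin d → ℝ)).symm (S⁻¹ *ᵥ fun j => (Q j).eval t) with hqdef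
  have hqcoord : ∀ t k, q t k = ∑ j, S⁻¹ k j * (Q j).eval t := by
    intro t k
    rw [hqdef]
    rfl
  have hqpoly : IsPolyFun q := by
    rw [isPolyFun_iff]
    refine ⟨fun k => ∑ j, Polynomial.C (S⁻¹ k j) * Q j, fun t k => ?_⟩
    rw [hqcoord]
    simp only [Polynomial.eval_finset_sum, Polynomial.eval_mul, Polynomial.eval_C]
  have hqode : ∀ t : ℝ, HasDerivAt q
      (-(Matrix.toEuclideanLin A (q t) - lam • q t) + p t) t := by
    intro t
    apply hasDerivAt_of_coords
    intro k
    have hderiv : HasDerivAt (fun x => q x k)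
        (∑ j, S⁻¹ k j * (Polynomial.derivative (Q j)).eval t) t := by
      have h1 : ∀ j, HasDerivAt (fun x => S⁻¹ k j * (Q j).eval x)
          (S⁻¹ k j * (Polynomial.derivative (Q j)).eval t) t :=
        fun j => ((Q j).hasDerivAt t).const_mul (S⁻¹ k j)
      have h2 := HasDerivAt.fun_sum (fun j (_ : j ∈ Finset.univ) => h1 j)
      apply h2.congr_deriv rfl |>.congr_of_eventuallyEq ?_
      filter_upwards with x
      rw [hqcoord]
    have hval : (∑ j, S⁻¹ k j * (Polynomial.derivative (Q j)).eval t)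
        = (-(Matrix.toEuclideanLin A (q t) - lam • q t) + p t) k := by
      rw [eucl_ode_coord']
      have e1 : ∀ j, S⁻¹ k j * (Polynomial.derivative (Q j)).eval t
          = lam * (S⁻¹ k j * (Q j).eval t) - S⁻¹ k j * (d₀ j * (Q j).eval t)
            + S⁻¹ k j * (PS j).eval t := by
        intro j
        rw [hQode j]
        simp only [Polynomial.eval_add, Polynomial.eval_mul, Polynomial.eval_C]
        ring
      rw [Finset.sum_congr rfl fun j _ => e1 j]
      rw [Finset.sum_add_distrib, Finset.sum_sub_distrib]
      have hA1 : ∑ j, S⁻¹ k j * (d₀ j * (Q j).eval t) = ∑ l, A k l * q t l := by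
        have h1 : ∑ j, S⁻¹ k j * (d₀ j * (Q j).eval t)
            = (S⁻¹ *ᵥ (Matrix.diagonal d₀ *ᵥ fun j => (Q j).eval t)) k := by
          rw [mulVec_coord]
          exact Finset.sum_congr rfl fun j _ => by rw [Matrix.mulVec_diagonal]
        rw [h1, Matrix.mulVec_mulVec, ← hAS, ← Matrix.mulVec_mulVec, mulVec_coord]
        exact Finset.sum_congr rfl fun l _ => by rw [hqcoord t l, mulVec_coord]
      have hp1 : ∑ j, S⁻¹ k j * (PS j).eval t = p t k := by
        have h1 : ∑ j, S⁻¹ k j * (PS j).eval t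
            = (S⁻¹ *ᵥ (S *ᵥ fun l => p t l)) k := by
          rw [mulVec_coord]
          exact Finset.sum_congr rfl fun j _ => by rw [hPSeval t j, mulVec_coord]
        rw [h1, hSinvS]
      have hq1 : ∑ j, lam * (S⁻¹ k j * (Q j).eval t) = lam * q t k := by
        rw [hqcoord, Finset.mul_sum]
      rw [hA1, hp1, hq1]
      ring
    rw [← hval]
    exact hderiv
  -- decay for q
  have hCf0 : ∀ j, 0 ≤ Cf j := by
    intro j
    have h := hCf j (max T₀ 0) le_rfl
    nlinarith [abs_nonneg (zf j (max T₀ 0) - (Q j).eval (max T₀ 0)),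
      Real.exp_pos (-(εf j * max T₀ 0))]
  set εs : Finset ℝ := insert α (Finset.image εf Finset.univ) with hεsdef
  have hεsne : εs.Nonempty := ⟨α, Finset.mem_insert_self _ _⟩
  set ε := εs.min' hεsne with hεdef
  have hε : 0 < ε := by
    have hall : ∀ x ∈ εs, 0 < x := by
      intro x hx
      rw [hεsdef, Finset.mem_insert] at hx
      rcases hx with rfl | hx
      · exact hα
      · obtain ⟨j, _, rfl⟩ := Finset.mem_image.1 hx
        exact hεf j
    exact hall _ (εs.min'_mem hεsne)
  have hεle : ∀ j, ε ≤ εf j := by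
    intro j
    apply Finset.min'_le
    rw [hεsdef]
    exact Finset.mem_insert_of_mem (Finset.mem_image_of_mem εf (Finset.mem_univ j))
  set Ctot : ℝ := ∑ k : Fin d, ∑ j : Fin d, |S⁻¹ k j| * Cf j with hCtotdef
  have hdecay : ∀ t ≥ max T₀ 0, ‖y t - q t‖ ≤ Ctot * Real.exp (-ε * t) := by
    intro t ht
    have ht0 : (0:ℝ) ≤ t := le_trans (le_max_right _ _) ht
    have hyq : ∀ k, (y t - q t) k = ∑ j, S⁻¹ k j * (zf j t - (Q j).eval t) := by
      intro k
      have h1 : (y t - q t) k = y t k - q t k := rfl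
      have h2 : y t k = (S⁻¹ *ᵥ fun j => zf j t) k := by
        have : (fun j => zf j t) = S *ᵥ fun l => y t l := by
          funext j
          rw [hzfdef, mulVec_coord]
        rw [this, hSinvS]
      rw [h1, h2, hqcoord, mulVec_coord, ← Finset.sum_sub_distrib]
      exact Finset.sum_congr rfl fun j _ => by ring
    calc ‖y t - q t‖ ≤ ∑ k, |(y t - q t) k| := euclid_norm_le_sum _
      _ ≤ ∑ k : Fin d, ∑ j : Fin d, (|S⁻¹ k j| * Cf j) * Real.exp (-ε * t) := by
          apply Finset.sum_le_sum
          intro k _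
          rw [hyq k]
          calc |∑ j, S⁻¹ k j * (zf j t - (Q j).eval t)|
              ≤ ∑ j, |S⁻¹ k j * (zf j t - (Q j).eval t)| := Finset.abs_sum_le_sum_abs _ _
            _ ≤ ∑ j : Fin d, (|S⁻¹ k j| * Cf j) * Real.exp (-ε * t) := by
                apply Finset.sum_le_sum
                intro j _
                rw [abs_mul]
                calc |S⁻¹ k j| * |zf j t - (Q j).eval t|
                    ≤ |S⁻¹ k j| * (Cf j * Real.exp (-(εf j * t))) :=
                      mul_le_mul_of_nonneg_left (hCf j t ht) (abs_nonneg _)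
                  _ ≤ |S⁻¹ k j| * (Cf j * Real.exp (-ε * t)) := by
                      apply mul_le_mul_of_nonneg_left _ (abs_nonneg _)
                      apply mul_le_mul_of_nonneg_left _ (hCf0 j)
                      apply Real.exp_le_exp.2
                      have := hεle j
                      nlinarith
                  _ = (|S⁻¹ k j| * Cf j) * Real.exp (-ε * t) := by ring
      _ = Ctot * Real.exp (-ε * t) := by
          rw [hCtotdef, Finset.sum_mul]
          exact Finset.sum_congr rfl fun k _ => by rw [Finset.sum_mul]
  -- conclusion
  refine ⟨q, ⟨hqpoly, hqode, ε, hε, Ctot, max T₀ 0, hdecay⟩, ?_⟩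
  rintro q' ⟨hq'poly, _, ε', hε', C', T₂, hq'dec⟩
  have hδpoly : IsPolyFun (fun t => q' t - q t) := by
    obtain ⟨P1, hP1⟩ := (isPolyFun_iff q').1 hq'poly
    obtain ⟨P2, hP2⟩ := (isPolyFun_iff q).1 hqpoly
    rw [isPolyFun_iff]
    refine ⟨fun k => P1 k - P2 k, fun t k => ?_⟩
    have : (q' t - q t) k = q' t k - q t k := rfl
    rw [this, hP1, hP2, Polynomial.eval_sub]
  have hδ0 : Filter.Tendsto (fun t => ‖q' t - q t‖) Filter.atTop (nhds 0) := by
    have hbnd : ∀ᶠ t in Filter.atTop, ‖‖q' t - q t‖‖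
        ≤ C' * Real.exp (-ε' * t) + Ctot * Real.exp (-ε * t) := by
      filter_upwards [Filter.eventually_ge_atTop (max (max T₀ 0) T₂)] with t ht
      have ht1 : t ≥ max T₀ 0 := le_trans (le_max_left _ _) ht
      have ht2 : t ≥ T₂ := le_trans (le_max_right _ _) ht
      rw [norm_norm]
      calc ‖q' t - q t‖ = ‖(q' t - y t) + (y t - q t)‖ := by congr 1; abel
        _ ≤ ‖q' t - y t‖ + ‖y t - q t‖ := norm_add_le _ _
        _ ≤ C' * Real.exp (-ε' * t) + Ctot * Real.exp (-ε * t) := by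
            apply add_le_add _ (hdecay t ht1)
            rw [← norm_neg]
            simpa [neg_sub] using hq'dec t ht2
    have htnd : Filter.Tendsto (fun t => C' * Real.exp (-ε' * t) + Ctot * Real.exp (-ε * t))
        Filter.atTop (nhds 0) := by
      have h1 := tendsto_cexp C' ε' hε'
      have h2 := tendsto_cexp Ctot ε hε
      simpa using h1.add h2
    exact squeeze_zero_norm' hbnd htnd
  have hzero := polyfun_zero _ hδpoly hδ0
  funext t
  have := hzero t
  rwa [sub_eq_zero] at this
end

section
/- Let A be a diagonalizable d×d real matrix with positive eigenvalues, λ > 0, and g : [T,∞) → ℝᵈ continuous with |g(t)| = O(e^{-αt}) for some α > 0. If y ∈ C¹([T,∞), ℝᵈ) solves y' = −(A − λI)y + g(t) and, in case λ exceeds the smallest eigenvalue λ₁ of A, additionally e^{(λ̄−λ)t}|y(t)| → 0 where λ̄ is the largest eigenvalue of A below λ, then there exist a vector ξ ∈ ℝᵈ with (A − λI)ξ = 0 and ε > 0 such that |y(t) − ξ| = O(e^{-εt}). -/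
set_option maxHeartbeats 1000000

open Matrix Set MeasureTheory Filter


lemma abs_apply_le_norm' {d : ℕ} (x : EuclideanSpace ℝ (Fin d)) (i : Fin d) : |x i| ≤ ‖x‖ := by
  rw [EuclideanSpace.norm_eq]
  rw [show |x i| = Real.sqrt (‖x i‖ ^ 2) by rw [Real.sqrt_sq_eq_abs]; simp]
  apply Real.sqrt_le_sqrt
  exact Finset.single_le_sum (f := fun j => ‖x j‖ ^ 2) (fun j _ => by positivity) (Finset.mem_univ i)

lemma norm_le_sum_abs' {d : ℕ} (x : EuclideanSpace ℝ (Fin d)) : ‖x‖ ≤ ∑ i, |x i| := by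
  rw [EuclideanSpace.norm_eq]
  have h1 : ∑ i, ‖x i‖ ^ 2 ≤ (∑ i, |x i|) ^ 2 := by
    simpa [Real.norm_eq_abs] using
      Finset.sum_sq_le_sq_sum_of_nonneg (f := fun i => |x i|) (s := Finset.univ)
        (fun i _ => abs_nonneg _)
  calc Real.sqrt (∑ i, ‖x i‖ ^ 2) ≤ Real.sqrt ((∑ i, |x i|) ^ 2) := Real.sqrt_le_sqrt h1
    _ = ∑ i, |x i| := by rw [Real.sqrt_sq (by positivity)]

lemma integral_exp_mul' (k : ℝ) (hk : k ≠ 0) (a b : ℝ) :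
    ∫ s in a..b, Real.exp (k * s) = (Real.exp (k * b) - Real.exp (k * a)) / k := by
  have hderiv : ∀ x ∈ uIcc a b, HasDerivAt (fun s => Real.exp (k * s) / k) (Real.exp (k * x)) x := by
    intro x _
    have h1 : HasDerivAt (fun s : ℝ => k * s) k x := by
      simpa using (hasDerivAt_id x).const_mul k
    have h2 := (Real.hasDerivAt_exp (k * x)).comp x h1
    have h3 := h2.div_const k
    have : k * Real.exp (k * x) / k = Real.exp (k * x) := by
      field_simp
    simpa [mul_comm, this] using h3
  rw [intervalIntegral.integral_eq_sub_of_hasDerivAt hderiv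
    ((Real.continuous_exp.comp (continuous_const.mul continuous_id)).continuousOn.intervalIntegrable)]
  ring

lemma integral_exp_neg_mul_Ioi' {b : ℝ} (hb : 0 < b) (a : ℝ) :
    ∫ x in Ioi a, Real.exp (-b * x) = Real.exp (-b * a) / b := by
  have hint := exp_neg_integrableOn_Ioi a hb
  have h1 := MeasureTheory.intervalIntegral_tendsto_integral_Ioi a hint (tendsto_id (α := ℝ) (x := atTop))
  have h2 : Tendsto (fun t : ℝ => ∫ x in a..t, Real.exp (-b * x)) atTop
      (nhds (Real.exp (-b * a) / b)) := by
    have heq : ∀ t : ℝ, ∫ x in a..t, Real.exp (-b * x)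
        = (Real.exp (-b * t) - Real.exp (-b * a)) / (-b) := fun t =>
      integral_exp_mul' (-b) (by linarith) a t
    simp only [heq]
    have hexp : Tendsto (fun t : ℝ => Real.exp (-b * t)) atTop (nhds 0) := by
      apply Real.tendsto_exp_atBot.comp
      exact Tendsto.const_mul_atTop_of_neg (by linarith) tendsto_id
    have := (hexp.sub (tendsto_const_nhds (x := Real.exp (-b * a)))).div_const (-b)
    simpa [neg_div, div_neg] using this
  have := tendsto_nhds_unique h1 h2
  simpa using this

lemma integrableOn_of_exp_bound' {γ C T : ℝ} (hγ : 0 < γ) (φ : ℝ → ℝ)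
    (hc : ContinuousOn φ (Ici T)) (hb : ∀ s ≥ T, |φ s| ≤ C * Real.exp (-γ * s)) :
    ∀ a ≥ T, IntegrableOn φ (Ioi a) := by
  intro a ha
  have hsub : Ioi a ⊆ Ici T := fun z hz => le_trans ha (le_of_lt hz)
  have hmeas : AEStronglyMeasurable φ (volume.restrict (Ioi a)) :=
    (hc.mono hsub).aestronglyMeasurable measurableSet_Ioi
  refine Integrable.mono' ((exp_neg_integrableOn_Ioi a hγ).const_mul C) hmeas ?_
  rw [MeasureTheory.ae_restrict_iff' measurableSet_Ioi]
  exact Filter.Eventually.of_forall fun s hs => by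
    simpa [Real.norm_eq_abs] using hb s (le_trans ha hs.le)

lemma tail_abs_le' {γ C T : ℝ} (hγ : 0 < γ) (φ : ℝ → ℝ)
    (hc : ContinuousOn φ (Ici T)) (hb : ∀ s ≥ T, |φ s| ≤ C * Real.exp (-γ * s)) :
    ∀ t ≥ T, |∫ s in Ioi t, φ s| ≤ C / γ * Real.exp (-γ * t) := by
  intro t ht
  have hint := integrableOn_of_exp_bound' hγ φ hc hb t ht
  have hbd : ∀ᵐ s ∂(volume.restrict (Ioi t)), ‖φ s‖ ≤ C * Real.exp (-γ * s) := by
    rw [MeasureTheory.ae_restrict_iff' measurableSet_Ioi]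
    exact Filter.Eventually.of_forall fun s hs => by
      simpa [Real.norm_eq_abs] using hb s (le_trans ht hs.le)
  have h1 := MeasureTheory.norm_integral_le_of_norm_le
    ((exp_neg_integrableOn_Ioi t hγ).const_mul C) hbd
  rw [Real.norm_eq_abs] at h1
  calc |∫ s in Ioi t, φ s| ≤ ∫ s in Ioi t, C * Real.exp (-γ * s) := h1
    _ = C * (Real.exp (-γ * t) / γ) := by
        rw [MeasureTheory.integral_const_mul, integral_exp_neg_mul_Ioi' hγ]
    _ = C / γ * Real.exp (-γ * t) := by ring

/-- interval integral up to `t` versus the full improper integral. -/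
lemma interval_sub_tail' {T : ℝ} (φ : ℝ → ℝ) (hint : IntegrableOn φ (Ioi T))
    {t : ℝ} (ht : T ≤ t) :
    (∫ s in Ioi T, φ s) = (∫ s in T..t, φ s) + ∫ s in Ioi t, φ s := by
  rw [intervalIntegral.integral_of_le ht]
  rw [← MeasureTheory.setIntegral_union (Set.Ioc_disjoint_Ioi le_rfl) measurableSet_Ioi
    (hint.mono_set (Set.Ioc_subset_Ioi_self)) (hint.mono_set (Set.Ioi_subset_Ioi ht)),
    Set.Ioc_union_Ioi_eq_Ioi ht]

lemma scalar_conv' {β α C T : ℝ} (hα : 0 < α) (hC : 0 ≤ C) (h u : ℝ → ℝ)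
    (hhc : ContinuousOn h (Ici T))
    (hb : ∀ t ≥ T, |h t| ≤ C * Real.exp (-α * t))
    (hu : ∀ t ∈ Ici T, HasDerivWithinAt u (-β * u t + h t) (Ici T) t)
    (hside : β < 0 → Filter.Tendsto (fun t => Real.exp (β * t) * u t) Filter.atTop (nhds 0)) :
    ∃ c ε C', 0 < ε ∧ 0 ≤ C' ∧ (∀ t ≥ T, |u t - c| ≤ C' * Real.exp (-ε * t)) ∧
      (β ≠ 0 → c = 0) := by
  have ucont : ContinuousOn u (Ici T) := fun t ht => (hu t ht).continuousWithinAt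
  set φ : ℝ → ℝ := fun s => Real.exp (β * s) * h s with hφ
  set w : ℝ → ℝ := fun t => Real.exp (β * t) * u t with hw
  have wcont : ContinuousOn w (Ici T) :=
    (Real.continuous_exp.comp (continuous_const.mul continuous_id)).continuousOn.mul ucont
  have φcont : ContinuousOn φ (Ici T) :=
    (Real.continuous_exp.comp (continuous_const.mul continuous_id)).continuousOn.mul hhc
  -- representation formula
  have rep : ∀ t ≥ T, ∫ s in T..t, φ s = w t - w T := by
    intro t ht
    apply intervalIntegral.integral_eq_sub_of_hasDeriv_right_of_le ht
    · exact wcont.mono (Icc_subset_Ici_self)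
    · intro x hx
      have hsub : Ioi x ⊆ Ici T := fun z hz => le_trans hx.1.le hz.le
      have hu' : HasDerivWithinAt u (-β * u x + h x) (Ioi x) x :=
        (hu x (le_of_lt hx.1)).mono hsub
      have hexp : HasDerivWithinAt (fun s => Real.exp (β * s)) (β * Real.exp (β * x)) (Ioi x) x := by
        have h1 : HasDerivAt (fun s : ℝ => β * s) β x := by
          simpa using (hasDerivAt_id x).const_mul β
        have h2 := (Real.hasDerivAt_exp (β * x)).comp x h1
        exact (by simpa [mul_comm, Function.comp_def] using h2 : HasDerivAt (fun s => Real.exp (β * s)) (β * Real.exp (β * x)) x).hasDerivWithinAt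
      have hmul := hexp.fun_mul hu'
      convert hmul using 1
      · rfl
      simp only [hφ]
      ring
    · exact (φcont.mono (by rw [uIcc_of_le ht]; exact Icc_subset_Ici_self)).intervalIntegrable
  have hwu : ∀ t, u t = Real.exp (-β * t) * w t := by
    intro t
    simp only [hw, ← mul_assoc, ← Real.exp_add]
    simp
  rcases lt_trichotomy β 0 with hβ | hβ | hβ
  · -- β < 0 : c = 0, ε = α
    have hγ : 0 < α - β := by linarith
    have hφb : ∀ s ≥ T, |φ s| ≤ C * Real.exp (-(α - β) * s) := by
      intro s hs
      have := hb s hs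
      have h1 : |φ s| = Real.exp (β * s) * |h s| := by
        rw [hφ, abs_mul, abs_of_pos (Real.exp_pos _)]
      rw [h1]
      calc Real.exp (β * s) * |h s| ≤ Real.exp (β * s) * (C * Real.exp (-α * s)) :=
            mul_le_mul_of_nonneg_left this (Real.exp_pos _).le
        _ = C * Real.exp (-(α - β) * s) := by
            rw [mul_left_comm, ← Real.exp_add]; congr 1; ring
    have hint := integrableOn_of_exp_bound' hγ φ φcont hφb T le_rfl
    set L := ∫ s in Ioi T, φ s with hL
    have htail := tail_abs_le' hγ φ φcont hφb
    have hwdiff : ∀ t ≥ T, |w t - (w T + L)| ≤ C / (α - β) * Real.exp (-(α - β) * t) := by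
      intro t ht
      have h1 := rep t ht
      have h2 := interval_sub_tail' φ hint ht
      have : w t - (w T + L) = -∫ s in Ioi t, φ s := by
        rw [← hL] at h2
        linarith
      rw [this, abs_neg]
      exact htail t ht
    -- w tends to w T + L
    have hexp0 : Tendsto (fun t : ℝ => C / (α - β) * Real.exp (-(α - β) * t)) atTop (nhds 0) := by
      rw [show (0:ℝ) = C / (α - β) * 0 by ring]
      apply Tendsto.const_mul
      apply Real.tendsto_exp_atBot.comp
      exact Tendsto.const_mul_atTop_of_neg (by linarith) tendsto_id
    have hwlim : Tendsto w atTop (nhds (w T + L)) := by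
      have h1 : Tendsto (fun t => w t - (w T + L)) atTop (nhds 0) := by
        apply squeeze_zero_norm' _ hexp0
        filter_upwards [eventually_ge_atTop T] with t ht
        simpa [Real.norm_eq_abs] using hwdiff t ht
      have := h1.add (tendsto_const_nhds (x := w T + L))
      simpa using this
    have hzero : w T + L = 0 := tendsto_nhds_unique hwlim (hside hβ)
    refine ⟨0, α, C / (α - β), hα, by positivity, ?_, fun _ => rfl⟩
    intro t ht
    have h1 := hwdiff t ht
    rw [hzero, sub_zero] at h1
    rw [sub_zero, hwu t]
    have h2 : |Real.exp (-β * t) * w t| = Real.exp (-β * t) * |w t| := by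
      rw [abs_mul, abs_of_pos (Real.exp_pos _)]
    rw [h2]
    calc Real.exp (-β * t) * |w t| ≤ Real.exp (-β * t) * (C / (α - β) * Real.exp (-(α - β) * t)) :=
          mul_le_mul_of_nonneg_left h1 (Real.exp_pos _).le
      _ = C / (α - β) * Real.exp (-α * t) := by
          rw [mul_comm, mul_assoc, ← Real.exp_add]; congr 1; ring
  · -- β = 0 : h integrable, c = u T + L
    subst hβ
    have hφeq : φ = h := by funext s; simp [hφ]
    have hweq : ∀ t, w t = u t := fun t => by simp [hw]
    have hint := integrableOn_of_exp_bound' hα h hhc hb T le_rfl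
    set L := ∫ s in Ioi T, h s with hL
    have htail := tail_abs_le' hα h hhc hb
    refine ⟨u T + L, α, C / α, hα, by positivity, ?_, fun hne => absurd rfl hne⟩
    intro t ht
    have h1 := rep t ht
    rw [hφeq] at h1
    have h2 := interval_sub_tail' h hint ht
    have : u t - (u T + L) = -∫ s in Ioi t, h s := by
      rw [hweq t, hweq T] at h1
      rw [← hL] at h2
      linarith
    rw [this, abs_neg]
    exact htail t ht
  · -- β > 0 : c = 0
    set ε := min β α / 2 with hε
    have hεpos : 0 < ε := by
      have : 0 < min β α := lt_min hβ hα
      positivity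
    have hεα : ε ≤ α := by
      have h1 : min β α ≤ α := min_le_right _ _
      have : 0 < min β α := lt_min hβ hα
      simp only [hε]; linarith
    have hεβ : ε < β := by
      have h1 : min β α ≤ β := min_le_left _ _
      have : 0 < min β α := lt_min hβ hα
      simp only [hε]; linarith
    set K1 := C * Real.exp ((ε - α) * T) with hK1
    have hK1pos : 0 ≤ K1 := by positivity
    have hφb : ∀ s ≥ T, |φ s| ≤ K1 * Real.exp ((β - ε) * s) := by
      intro s hs
      have h1 : |φ s| = Real.exp (β * s) * |h s| := by
        rw [hφ, abs_mul, abs_of_pos (Real.exp_pos _)]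
      rw [h1]
      calc Real.exp (β * s) * |h s| ≤ Real.exp (β * s) * (C * Real.exp (-α * s)) :=
            mul_le_mul_of_nonneg_left (hb s hs) (Real.exp_pos _).le
        _ = C * Real.exp ((β - α) * s) := by
            rw [mul_left_comm, ← Real.exp_add]; congr 2; ring
        _ ≤ K1 * Real.exp ((β - ε) * s) := by
            rw [hK1, mul_assoc, ← Real.exp_add]
            apply mul_le_mul_of_nonneg_left _ hC
            apply Real.exp_le_exp.mpr
            nlinarith [hs]
    refine ⟨0, ε, |w T| * Real.exp ((ε - β) * T) + K1 / (β - ε), hεpos,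
      add_nonneg (by positivity) (div_nonneg hK1pos (by linarith)), ?_, fun _ => rfl⟩
    intro t ht
    rw [sub_zero, hwu t]
    have hrep := rep t ht
    have hintle : |∫ s in T..t, φ s| ≤ K1 / (β - ε) * Real.exp ((β - ε) * t) := by
      have h1 : |∫ s in T..t, φ s| ≤ ∫ s in T..t, |φ s| := by
        simpa [Real.norm_eq_abs] using intervalIntegral.norm_integral_le_integral_norm (f := φ) ht
      have h2 : ∫ s in T..t, |φ s| ≤ ∫ s in T..t, K1 * Real.exp ((β - ε) * s) := by
        apply intervalIntegral.integral_mono_on ht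
        · have hca : ContinuousOn (fun s => |φ s|) (uIcc T t) :=
            (φcont.mono (by rw [uIcc_of_le ht]; exact Icc_subset_Ici_self)).abs
          exact hca.intervalIntegrable
        · exact (continuous_const.mul
            (Real.continuous_exp.comp (continuous_const.mul continuous_id))).continuousOn.intervalIntegrable
        · intro s hs
          exact hφb s hs.1
      have h3 : ∫ s in T..t, K1 * Real.exp ((β - ε) * s)
          = K1 * ((Real.exp ((β - ε) * t) - Real.exp ((β - ε) * T)) / (β - ε)) := by
        rw [intervalIntegral.integral_const_mul, integral_exp_mul' (β - ε) (by linarith)]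
      have h4 : K1 * ((Real.exp ((β - ε) * t) - Real.exp ((β - ε) * T)) / (β - ε))
          ≤ K1 / (β - ε) * Real.exp ((β - ε) * t) := by
        rw [div_mul_eq_mul_div, mul_div_assoc]
        have hd : (0:ℝ) < β - ε := by linarith
        apply mul_le_mul_of_nonneg_left _ hK1pos
        exact (div_le_div_iff_of_pos_right hd).mpr (by linarith [Real.exp_pos ((β - ε) * T)])
      linarith
    have hwt : |w t| ≤ |w T| + K1 / (β - ε) * Real.exp ((β - ε) * t) := by
      have : w t = w T + ∫ s in T..t, φ s := by linarith [hrep]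
      rw [this]
      calc |w T + ∫ s in T..t, φ s| ≤ |w T| + |∫ s in T..t, φ s| := abs_add_le _ _
        _ ≤ _ := by linarith
    have hfinal : Real.exp (-β * t) * |w t|
        ≤ (|w T| * Real.exp ((ε - β) * T) + K1 / (β - ε)) * Real.exp (-ε * t) := by
      have h5 : Real.exp (-β * t) * |w t|
          ≤ Real.exp (-β * t) * (|w T| + K1 / (β - ε) * Real.exp ((β - ε) * t)) :=
        mul_le_mul_of_nonneg_left hwt (Real.exp_pos _).le
      have h6 : Real.exp (-β * t) * (K1 / (β - ε) * Real.exp ((β - ε) * t))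
          = K1 / (β - ε) * Real.exp (-ε * t) := by
        rw [mul_comm, mul_assoc, ← Real.exp_add]; congr 1; ring
      have h7 : Real.exp (-β * t) * |w T| ≤ |w T| * Real.exp ((ε - β) * T) * Real.exp (-ε * t) := by
        rw [mul_comm, mul_assoc, ← Real.exp_add]
        apply mul_le_mul_of_nonneg_left _ (abs_nonneg _)
        apply Real.exp_le_exp.mpr
        nlinarith [ht]
      calc Real.exp (-β * t) * |w t| ≤ _ := h5
        _ = Real.exp (-β * t) * |w T| + Real.exp (-β * t) * (K1 / (β - ε) * Real.exp ((β - ε) * t)) := by ring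
        _ ≤ |w T| * Real.exp ((ε - β) * T) * Real.exp (-ε * t) + K1 / (β - ε) * Real.exp (-ε * t) := by
            rw [h6]; linarith
        _ = _ := by ring
    calc |Real.exp (-β * t) * w t| = Real.exp (-β * t) * |w t| := by
          rw [abs_mul, abs_of_pos (Real.exp_pos _)]
      _ ≤ _ := hfinal


open Matrix Set

/-- Special case `p ≡ 0` of the approximation lemma: a solution of
`y' = -(A - λI)y + g(t)` with `g` exponentially decaying (plus the side condition
when `λ > λ₁`) converges exponentially to a vector `ξ` with `(A - λI)ξ = 0`. -/
theorem stmt_13 {d : ℕ} (A S : Matrix (Fin d) (Fin d) ℝ) (hS : IsUnit S.det)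
    (d₀ : Fin d → ℝ) (hpos : ∀ i, 0 < d₀ i)
    (hA : A = S⁻¹ * Matrix.diagonal d₀ * S)
    (lam : ℝ) (hlam : 0 < lam)
    (T : ℝ) (g : ℝ → EuclideanSpace ℝ (Fin d))
    (hgcont : ContinuousOn g (Ici T))
    (α : ℝ) (hα : 0 < α)
    (hg : ∃ C T', ∀ t ≥ T', ‖g t‖ ≤ C * Real.exp (-α * t))
    (y : ℝ → EuclideanSpace ℝ (Fin d))
    (hy : ∀ t ∈ Ici T, HasDerivWithinAt y
      (-(Matrix.toEuclideanLin A (y t) - lam • y t) + g t) (Ici T) t)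
    (hside : ∀ lamBar : ℝ,
      (lamBar ∈ Finset.image d₀ Finset.univ ∧ lamBar < lam ∧
        ∀ mu ∈ Finset.image d₀ Finset.univ, mu < lam → mu ≤ lamBar) →
      Filter.Tendsto (fun t => Real.exp ((lamBar - lam) * t) * ‖y t‖)
        Filter.atTop (nhds 0)) :
    ∃ (ξ : EuclideanSpace ℝ (Fin d)) (ε : ℝ), Matrix.toEuclideanLin A ξ = lam • ξ ∧
      0 < ε ∧ ∃ C T', ∀ t ≥ T', ‖y t - ξ‖ ≤ C * Real.exp (-ε * t) := by
  classical
  obtain ⟨Cg, Tg, hg'⟩ := hg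
  rcases Nat.eq_zero_or_pos d with hd | hd
  · subst hd
    refine ⟨0, 1, ?_, one_pos, 0, T, fun t _ => ?_⟩
    · have : (Matrix.toEuclideanLin A) (0 : EuclideanSpace ℝ (Fin 0)) = 0 := map_zero _
      rw [this, smul_zero]
    · have h0 : ‖y t - 0‖ = 0 := by
        rw [EuclideanSpace.norm_eq]
        simp
      rw [h0]
      positivity
  have hCg0 : 0 ≤ Cg := by
    have h1 := hg' Tg le_rfl
    nlinarith [norm_nonneg (g Tg), Real.exp_pos (-α * Tg)]
  set T₀ := max T Tg with hT₀
  have hTT₀ : T ≤ T₀ := le_max_left _ _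
  have hIci : Ici T₀ ⊆ Ici T := Ici_subset_Ici.mpr hTT₀
  -- matrix identities
  have hSSinv : S * S⁻¹ = 1 := Matrix.mul_nonsing_inv S hS
  have hSinvS : S⁻¹ * S = 1 := Matrix.nonsing_inv_mul S hS
  have hSA : S * A = Matrix.diagonal d₀ * S := by
    rw [hA, ← Matrix.mul_assoc, ← Matrix.mul_assoc, hSSinv, Matrix.one_mul]
  -- components
  set z : Fin d → ℝ → ℝ := fun i t => ∑ j, S i j * y t j with hz
  set hf : Fin d → ℝ → ℝ := fun i t => ∑ j, S i j * g t j with hhf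
  -- derivative of components
  have hzderiv : ∀ i, ∀ t ∈ Ici T, HasDerivWithinAt (z i)
      (-(d₀ i - lam) * z i t + hf i t) (Ici T) t := by
    intro i t ht
    have hcomp : ∀ j : Fin d, HasDerivWithinAt (fun t => y t j)
        ((-(Matrix.toEuclideanLin A (y t) - lam • y t) + g t) j) (Ici T) t := by
      intro j
      have := (EuclideanSpace.proj j).hasFDerivAt.comp_hasDerivWithinAt t (hy t ht)
      simpa [EuclideanSpace.proj, Function.comp_def] using this
    have hsum : HasDerivWithinAt (fun t => ∑ j, S i j * y t j)
        (∑ j, S i j * ((-(Matrix.toEuclideanLin A (y t) - lam • y t) + g t) j)) (Ici T) t :=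
      HasDerivWithinAt.fun_sum (fun j _ => (hcomp j).const_mul (S i j))
    convert hsum using 1
    have happ : ∀ j, ((-(Matrix.toEuclideanLin A (y t) - lam • y t) + g t) j)
        = -((∑ k, A j k * y t k) - lam * y t j) + g t j := by
      intro j
      simp [PiLp.add_apply, PiLp.neg_apply, PiLp.sub_apply, PiLp.smul_apply,
        Matrix.toEuclideanLin_apply, Matrix.mulVec, dotProduct]
    have key : ∑ j, S i j * ∑ k, A j k * y t k = d₀ i * ∑ j, S i j * y t j := by
      have h1 : S *ᵥ (A *ᵥ (fun k => y t k)) = (Matrix.diagonal d₀) *ᵥ (S *ᵥ (fun k => y t k)) := by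
        rw [Matrix.mulVec_mulVec, Matrix.mulVec_mulVec, hSA]
      have h2 := congrFun h1 i
      rw [Matrix.mulVec_diagonal] at h2
      simpa [Matrix.mulVec, dotProduct] using h2
    simp only [happ]
    have expand : (∑ j, S i j * (-((∑ k, A j k * y t k) - lam * y t j) + g t j))
        = -(∑ j, S i j * ∑ k, A j k * y t k) + lam * (∑ j, S i j * y t j)
          + ∑ j, S i j * g t j := by
      calc (∑ j, S i j * (-((∑ k, A j k * y t k) - lam * y t j) + g t j))
          = ∑ j, (-(S i j * ∑ k, A j k * y t k) + lam * (S i j * y t j) + S i j * g t j) :=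
            Finset.sum_congr rfl fun j _ => by ring
        _ = _ := by
            rw [Finset.sum_add_distrib, Finset.sum_add_distrib, Finset.sum_neg_distrib,
              ← Finset.mul_sum]
    rw [expand, key]
    simp only [hz, hhf]
    ring
    -- continuity of hf components
  have hfcont : ∀ i, ContinuousOn (hf i) (Ici T) := by
    intro i
    simp only [hhf]
    apply continuousOn_finset_sum
    intro j _
    refine continuousOn_const.mul ?_
    have := (EuclideanSpace.proj j).continuous.comp_continuousOn hgcont
    simpa [EuclideanSpace.proj, Function.comp_def] using this
  -- |z i t| ≤ row-sum * ‖y t‖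
  have habs : ∀ i t, |z i t| ≤ (∑ j, |S i j|) * ‖y t‖ := by
    intro i t
    simp only [hz]
    calc |∑ j, S i j * y t j| ≤ ∑ j, |S i j * y t j| := Finset.abs_sum_le_sum_abs _ _
      _ ≤ ∑ j, |S i j| * ‖y t‖ := Finset.sum_le_sum fun j _ => by
          rw [abs_mul]
          exact mul_le_mul_of_nonneg_left (abs_apply_le_norm' _ j) (abs_nonneg _)
      _ = _ := by rw [Finset.sum_mul]
  -- exponential bound on hf
  have hfb : ∀ i, ∀ t ≥ T₀, |hf i t| ≤ ((∑ j, |S i j|) * Cg) * Real.exp (-α * t) := by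
    intro i t ht
    have htg : t ≥ Tg := le_trans (le_max_right _ _) ht
    simp only [hhf]
    calc |∑ j, S i j * g t j| ≤ ∑ j, |S i j * g t j| := Finset.abs_sum_le_sum_abs _ _
      _ ≤ ∑ j, |S i j| * ‖g t‖ := Finset.sum_le_sum fun j _ => by
          rw [abs_mul]
          exact mul_le_mul_of_nonneg_left (abs_apply_le_norm' _ j) (abs_nonneg _)
      _ = (∑ j, |S i j|) * ‖g t‖ := by rw [Finset.sum_mul]
      _ ≤ (∑ j, |S i j|) * (Cg * Real.exp (-α * t)) :=
          mul_le_mul_of_nonneg_left (hg' t htg) (by positivity)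
      _ = _ := by ring
  -- side condition transfer
  have hsidez : ∀ i, d₀ i - lam < 0 →
      Tendsto (fun t => Real.exp ((d₀ i - lam) * t) * z i t) atTop (nhds 0) := by
    intro i hbi
    have hdi : d₀ i < lam := by linarith
    have hne : ((Finset.image d₀ Finset.univ).filter (fun mu => mu < lam)).Nonempty :=
      ⟨d₀ i, Finset.mem_filter.mpr ⟨Finset.mem_image_of_mem d₀ (Finset.mem_univ i), hdi⟩⟩
    set lb := ((Finset.image d₀ Finset.univ).filter (fun mu => mu < lam)).max' hne with hlb
    have hmem := Finset.max'_mem _ hne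
    rw [Finset.mem_filter] at hmem
    have h3 : ∀ mu ∈ Finset.image d₀ Finset.univ, mu < lam → mu ≤ lb := fun mu h1 h2 =>
      Finset.le_max' ((Finset.image d₀ Finset.univ).filter (fun x => x < lam)) mu
        (Finset.mem_filter.mpr ⟨h1, h2⟩)
    have htd := hside lb ⟨hmem.1, hmem.2, h3⟩
    apply squeeze_zero_norm' (a := fun t => (∑ j, |S i j|) * (Real.exp ((lb - lam) * t) * ‖y t‖))
    · filter_upwards [eventually_ge_atTop (0:ℝ)] with t ht0
      have h4 : ‖Real.exp ((d₀ i - lam) * t) * z i t‖ = Real.exp ((d₀ i - lam) * t) * |z i t| := by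
        rw [Real.norm_eq_abs, abs_mul, abs_of_pos (Real.exp_pos _)]
      rw [h4]
      have h5 : d₀ i ≤ lb := h3 (d₀ i) (Finset.mem_image_of_mem d₀ (Finset.mem_univ i)) hdi
      have h6 : Real.exp ((d₀ i - lam) * t) ≤ Real.exp ((lb - lam) * t) :=
        Real.exp_le_exp.mpr (by nlinarith)
      calc Real.exp ((d₀ i - lam) * t) * |z i t|
          ≤ Real.exp ((lb - lam) * t) * ((∑ j, |S i j|) * ‖y t‖) :=
            mul_le_mul h6 (habs i t) (abs_nonneg _) (Real.exp_pos _).le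
        _ = (∑ j, |S i j|) * (Real.exp ((lb - lam) * t) * ‖y t‖) := by ring
    · rw [show (0:ℝ) = (∑ j, |S i j|) * 0 by ring]
      exact htd.const_mul _
  -- apply the scalar lemma
  have hkey : ∀ i : Fin d, ∃ cc ε C', 0 < ε ∧ 0 ≤ C' ∧
      (∀ t ≥ T₀, |z i t - cc| ≤ C' * Real.exp (-ε * t)) ∧ (d₀ i - lam ≠ 0 → cc = 0) := by
    intro i
    apply scalar_conv' (β := d₀ i - lam) (C := (∑ j, |S i j|) * Cg) hα
      (mul_nonneg (by positivity) hCg0) (hf i) (z i)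
    · exact (hfcont i).mono hIci
    · exact fun t ht => hfb i t ht
    · exact fun t ht => (hzderiv i t (hIci ht)).mono hIci
    · exact fun hb => hsidez i hb
  choose c εf Cf hεf hCf hbf hc0 using hkey
  -- the limit vector
  set ξ : EuclideanSpace ℝ (Fin d) := (WithLp.equiv 2 (Fin d → ℝ)).symm (S⁻¹ *ᵥ c) with hξ
  have hDc : (Matrix.diagonal d₀) *ᵥ c = lam • c := by
    funext i
    rw [Matrix.mulVec_diagonal]
    by_cases hi : d₀ i - lam = 0
    · have h1 : d₀ i = lam := by linarith
      simp [h1, Pi.smul_apply]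
    · simp [hc0 i hi, Pi.smul_apply]
  have hAeq : A *ᵥ (S⁻¹ *ᵥ c) = lam • (S⁻¹ *ᵥ c) := by
    rw [Matrix.mulVec_mulVec]
    have hAS : A * S⁻¹ = S⁻¹ * Matrix.diagonal d₀ := by
      rw [hA, Matrix.mul_assoc (S⁻¹ * Matrix.diagonal d₀) S S⁻¹, hSSinv, Matrix.mul_one]
    rw [hAS, ← Matrix.mulVec_mulVec, hDc, Matrix.mulVec_smul]
  have heig : Matrix.toEuclideanLin A ξ = lam • ξ := by
    rw [hξ, WithLp.equiv_symm_apply, Matrix.toEuclideanLin_apply_piLp_toLp, hAeq]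
    simp
  -- the rate
  haveI : Nonempty (Fin d) := Fin.pos_iff_nonempty.mp hd
  have hfinuniv : (Finset.univ : Finset (Fin d)).Nonempty := Finset.univ_nonempty
  set ε := Finset.univ.inf' hfinuniv εf with hε
  have hεpos : 0 < ε := (Finset.lt_inf'_iff _).mpr fun i _ => hεf i
  have hεle : ∀ i, ε ≤ εf i := fun i => Finset.inf'_le _ (Finset.mem_univ i)
  refine ⟨ξ, ε, heig, hεpos, ∑ k, ∑ i, |S⁻¹ k i| * Cf i, max T₀ 0, ?_⟩
  intro t ht
  have htT₀ : t ≥ T₀ := le_trans (le_max_left _ _) ht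
  have ht0 : (0:ℝ) ≤ t := le_trans (le_max_right _ _) ht
  have hyz : ∀ k, y t k = ∑ i, (S⁻¹) k i * z i t := by
    intro k
    have h1 : (S⁻¹ *ᵥ (S *ᵥ (fun j => y t j))) = fun j => y t j := by
      rw [Matrix.mulVec_mulVec, hSinvS, Matrix.one_mulVec]
    have h2 := congrFun h1 k
    simpa [Matrix.mulVec, dotProduct, hz] using h2.symm
  have hcoord : ∀ k, (y t - ξ) k = ∑ i, (S⁻¹) k i * (z i t - c i) := by
    intro k
    rw [PiLp.sub_apply]
    have hξk : ξ k = ∑ i, (S⁻¹) k i * c i := by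
      simp [hξ, Matrix.mulVec, dotProduct]
    rw [hyz k, hξk, ← Finset.sum_sub_distrib]
    exact Finset.sum_congr rfl fun i _ => by ring
  calc ‖y t - ξ‖ ≤ ∑ k, |(y t - ξ) k| := norm_le_sum_abs' _
    _ ≤ ∑ k, ∑ i, |(S⁻¹) k i| * (Cf i * Real.exp (-εf i * t)) := by
        apply Finset.sum_le_sum
        intro k _
        rw [hcoord k]
        calc |∑ i, (S⁻¹) k i * (z i t - c i)| ≤ ∑ i, |(S⁻¹) k i * (z i t - c i)| :=
              Finset.abs_sum_le_sum_abs _ _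
          _ ≤ _ := Finset.sum_le_sum fun i _ => by
              rw [abs_mul]
              exact mul_le_mul_of_nonneg_left (hbf i t htT₀) (abs_nonneg _)
    _ ≤ ∑ k, ∑ i, |(S⁻¹) k i| * (Cf i * Real.exp (-ε * t)) := by
        apply Finset.sum_le_sum
        intro k _
        apply Finset.sum_le_sum
        intro i _
        have hle : Real.exp (-εf i * t) ≤ Real.exp (-ε * t) :=
          Real.exp_le_exp.mpr (by nlinarith [hεle i])
        exact mul_le_mul_of_nonneg_left
          (mul_le_mul_of_nonneg_left hle (hCf i)) (abs_nonneg _)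
    _ = (∑ k, ∑ i, |(S⁻¹) k i| * Cf i) * Real.exp (-ε * t) := by
        rw [Finset.sum_mul]
        refine Finset.sum_congr rfl fun k _ => ?_
        rw [Finset.sum_mul]
        exact Finset.sum_congr rfl fun i _ => by ring
end

section
/- Let P₀ : ℝᵈ → ℝᵈ be a homogeneous polynomial of degree m₀ ≥ 0, s ≥ 1, and for j = 1,…,s let P_j : ℝᵈ → ℝ^{n_j} be a homogeneous polynomial of degree m_j ≥ 1 whose only zero is the origin, p_j ≥ 2 an even integer, and ν_j > 0 with min_j ν_j + m₀ > 1. Then F(x) = ‖P₁(x)‖_{p₁}^{ν₁} ⋯ ‖P_s(x)‖_{p_s}^{ν_s} P₀(x) is continuously differentiable on ℝᵈ with DF(0) = 0. -/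
open scoped BigOperators
open Filter Topology

/-- The `ℓ^p` norm of `y ∈ ℝⁿ` (for a real exponent `p ≥ 1`). -/
noncomputable def lpNorm {n : ℕ} (p : ℝ) (y : Fin n → ℝ) : ℝ :=
  (∑ i, |y i| ^ p) ^ (1 / p)


lemma aux_eval_smul {d : ℕ} (q : MvPolynomial (Fin d) ℝ) {k : ℕ} (hq : q.IsHomogeneous k)
    (c : ℝ) (x : Fin d → ℝ) :
    MvPolynomial.eval (c • x) q = c ^ k * MvPolynomial.eval x q := by
  rw [MvPolynomial.eval_eq, MvPolynomial.eval_eq, Finset.mul_sum]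
  refine Finset.sum_congr rfl fun e he => ?_
  have hc : MvPolynomial.coeff e q ≠ 0 := MvPolynomial.mem_support_iff.mp he
  have hdeg : ∑ i ∈ e.support, e i = k := by
    have := hq hc
    simpa [Finsupp.weight_apply, Finsupp.sum] using this
  simp only [Pi.smul_apply, smul_eq_mul, mul_pow, Finset.prod_mul_distrib,
    Finset.prod_pow_eq_pow_sum, hdeg]
  ring

lemma aux_contDiff_eval {d : ℕ} {N : WithTop ℕ∞} (q : MvPolynomial (Fin d) ℝ) :
    ContDiff ℝ N (fun x : Fin d → ℝ => MvPolynomial.eval x q) := by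
  induction q using MvPolynomial.induction_on with
  | C a => simpa using contDiff_const
  | add p q hp hq => simpa using hp.add hq
  | mul_X p i hp =>
      simpa using hp.mul ((ContinuousLinearMap.proj i : (Fin d → ℝ) →L[ℝ] ℝ).contDiff)

lemma aux_rpow_sum {ι : Type*} (t : Finset ι) {c : ℝ} (hc : 0 < c) (a : ι → ℝ) :
    c ^ (∑ j ∈ t, a j) = ∏ j ∈ t, c ^ (a j) := by
  classical
  induction t using Finset.induction_on with
  | empty => simp
  | insert _ _ h ih => rw [Finset.sum_insert h, Finset.prod_insert h, Real.rpow_add hc, ih]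
lemma aux_main {V W : Type*} [NormedAddCommGroup V] [NormedSpace ℝ V] [FiniteDimensional ℝ V]
    [NormedAddCommGroup W] [NormedSpace ℝ W]
    (F : V → W) (β : ℝ) (hβ : 1 < β)
    (hsm : ContDiffOn ℝ 2 F {(0 : V)}ᶜ)
    (hhom : ∀ c : ℝ, 0 < c → ∀ x, F (c • x) = (c ^ β) • F x)
    (hF0 : F 0 = 0) :
    ContDiff ℝ 1 F ∧ fderiv ℝ F 0 = 0 := by
  rcases subsingleton_or_nontrivial V with hV | hV
  · have hFz : F = fun _ => (0 : W) := funext fun x => by rw [Subsingleton.elim x 0, hF0]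
    subst hFz
    exact ⟨contDiff_const, fderiv_const_apply 0⟩
  have hsub : Metric.sphere (0 : V) 1 ⊆ {(0 : V)}ᶜ := fun x hx => by
    have : ‖x‖ = 1 := mem_sphere_zero_iff_norm.mp hx
    simp only [Set.mem_compl_iff, Set.mem_singleton_iff]
    intro h; rw [h] at this; simp at this
  have hmemS : ∀ x : V, x ≠ 0 → (‖x‖⁻¹ • x) ∈ Metric.sphere (0 : V) 1 := by
    intro x hx
    rw [mem_sphere_zero_iff_norm, norm_smul, norm_inv, norm_norm,
      inv_mul_cancel₀ (norm_ne_zero_iff.mpr hx)]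
  have hFx0 : ∀ x : V, x ≠ 0 → F x = ‖x‖ ^ β • F (‖x‖⁻¹ • x) := by
    intro x hx
    have hn : (0 : ℝ) < ‖x‖ := norm_pos_iff.mpr hx
    have := hhom ‖x‖ hn (‖x‖⁻¹ • x)
    rwa [smul_smul, mul_inv_cancel₀ hn.ne', one_smul] at this
  have hcontOn : ContinuousOn F {(0 : V)}ᶜ := hsm.continuousOn
  obtain ⟨C₀, hC₀⟩ := (isCompact_sphere (0 : V) 1).exists_bound_of_continuousOn
    (hcontOn.mono hsub)
  have hbound : ∀ x : V, ‖F x‖ ≤ C₀ * ‖x‖ ^ β := by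
    intro x
    by_cases hx : x = 0
    · subst hx
      simp [hF0, Real.zero_rpow (by linarith : β ≠ 0)]
    · have hn : (0 : ℝ) < ‖x‖ := norm_pos_iff.mpr hx
      rw [hFx0 x hx, norm_smul, Real.norm_eq_abs, abs_of_nonneg (Real.rpow_nonneg hn.le β),
        mul_comm]
      exact mul_le_mul_of_nonneg_right (hC₀ _ (hmemS x hx)) (Real.rpow_nonneg hn.le β)
  have hC₀' : 0 ≤ C₀ := by
    obtain ⟨u, hu⟩ := (NormedSpace.sphere_nonempty (E := V) (x := 0) (r := 1)).mpr zero_le_one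
    exact le_trans (norm_nonneg _) (hC₀ u hu)
  -- little-o estimate at 0 from a power bound
  have littleo : ∀ (f : V → W) (γ C : ℝ), 1 < γ → (∀ x, ‖f x‖ ≤ C * ‖x‖ ^ γ) →
      Filter.Tendsto (fun x : V => ‖f x‖ / ‖x‖) (𝓝 0) (𝓝 0) := by
    intro f γ C hγ hb
    have ht : Filter.Tendsto (fun x : V => C * ‖x‖ ^ (γ - 1)) (𝓝 0) (𝓝 0) := by
      have h1 : Filter.Tendsto (fun x : V => ‖x‖) (𝓝 0) (𝓝 0) := by
        simpa using tendsto_norm_zero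
      have h2 : Filter.Tendsto (fun t : ℝ => t ^ (γ - 1)) (𝓝 0) (𝓝 0) := by
        have := (Real.continuousAt_rpow_const 0 (γ - 1) (Or.inr (by linarith))).tendsto
        rwa [Real.zero_rpow (by linarith : γ - 1 ≠ 0)] at this
      have := (h2.comp h1).const_mul C
      simpa using this
    apply squeeze_zero_norm _ ht
    intro x
    rw [Real.norm_eq_abs, abs_of_nonneg (div_nonneg (norm_nonneg _) (norm_nonneg _))]
    by_cases hx : x = 0
    · subst hx
      simp [Real.zero_rpow (by linarith : γ - 1 ≠ 0)]
    · have hn : (0 : ℝ) < ‖x‖ := norm_pos_iff.mpr hx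
      rw [div_le_iff₀ hn]
      calc ‖f x‖ ≤ C * ‖x‖ ^ γ := hb x
        _ = C * ‖x‖ ^ (γ - 1) * ‖x‖ := by
            rw [mul_assoc, ← Real.rpow_add_one hn.ne']
            ring_nf
  have hder0 : HasFDerivAt F (0 : V →L[ℝ] W) 0 := by
    rw [hasFDerivAt_iff_tendsto]
    have := littleo F β C₀ hβ hbound
    simp only [sub_zero, hF0, map_zero] at this ⊢
    convert this using 2 with x
    simp [div_eq_inv_mul]
  have hf0 : fderiv ℝ F 0 = 0 := hder0.fderiv
  have hdiff : ∀ x : V, x ≠ 0 → DifferentiableAt ℝ F x := by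
    intro x hx
    have hmem : {(0 : V)}ᶜ ∈ 𝓝 x := isOpen_compl_singleton.mem_nhds (by simpa using hx)
    exact (hsm.contDiffAt hmem).differentiableAt (by norm_num)
  have hfhom : ∀ c : ℝ, 0 < c → ∀ x : V, x ≠ 0 →
      fderiv ℝ F (c • x) = (c ^ (β - 1)) • fderiv ℝ F x := by
    intro c hc x hx
    have hcx : c • x ≠ 0 := smul_ne_zero hc.ne' hx
    have h1 : HasFDerivAt F (fderiv ℝ F (c • x)) (c • x) := (hdiff _ hcx).hasFDerivAt
    have hsc : HasFDerivAt (fun y : V => c • y) (c • ContinuousLinearMap.id ℝ V) x :=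
      (hasFDerivAt_id x).const_smul c
    have h2 : HasFDerivAt (fun y => F (c • y))
        ((fderiv ℝ F (c • x)).comp (c • ContinuousLinearMap.id ℝ V)) x := h1.comp x hsc
    have h3 : HasFDerivAt (fun y => F (c • y)) ((c ^ β) • fderiv ℝ F x) x := by
      have h4 : HasFDerivAt (fun y => (c ^ β) • F y) ((c ^ β) • fderiv ℝ F x) x :=
        (hdiff x hx).hasFDerivAt.const_smul (c ^ β)
      have : (fun y => F (c • y)) = fun y => (c ^ β) • F y := funext (hhom c hc)
      rw [this]; exact h4
    have heq := h2.unique h3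
    ext v
    have hv := congrArg (fun L : V →L[ℝ] W => L v) heq
    simp only [ContinuousLinearMap.comp_apply, ContinuousLinearMap.smul_apply,
      ContinuousLinearMap.id_apply, map_smul] at hv ⊢
    have : fderiv ℝ F (c • x) v = c⁻¹ • ((c ^ β) • fderiv ℝ F x v) := by
      rw [← hv, smul_smul, inv_mul_cancel₀ hc.ne', one_smul]
    rw [this, smul_smul]
    congr 1
    rw [Real.rpow_sub hc, Real.rpow_one, div_eq_inv_mul]
  have hfx : ∀ x : V, x ≠ 0 →
      fderiv ℝ F x = ‖x‖ ^ (β - 1) • fderiv ℝ F (‖x‖⁻¹ • x) := by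
    intro x hx
    have hn : (0 : ℝ) < ‖x‖ := norm_pos_iff.mpr hx
    have hu : (‖x‖⁻¹ • x) ≠ 0 := by
      intro h
      apply hx
      have := congrArg (fun y => ‖x‖ • y) h
      simpa [smul_smul, mul_inv_cancel₀ hn.ne'] using this
    have := hfhom ‖x‖ hn (‖x‖⁻¹ • x) hu
    rwa [smul_smul, mul_inv_cancel₀ hn.ne', one_smul] at this
  have hfcontOn : ContinuousOn (fderiv ℝ F) {(0 : V)}ᶜ :=
    (hsm.fderiv_of_isOpen (m := 1) isOpen_compl_singleton (by norm_num)).continuousOn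
  obtain ⟨C₁, hC₁⟩ := (isCompact_sphere (0 : V) 1).exists_bound_of_continuousOn
    (hfcontOn.mono hsub)
  have hfbound : ∀ x : V, ‖fderiv ℝ F x‖ ≤ C₁ * ‖x‖ ^ (β - 1) := by
    intro x
    by_cases hx : x = 0
    · subst hx
      simp [hf0, Real.zero_rpow (by linarith : β - 1 ≠ 0)]
    · have hn : (0 : ℝ) < ‖x‖ := norm_pos_iff.mpr hx
      rw [hfx x hx, norm_smul (‖x‖ ^ (β - 1)) (fderiv ℝ F (‖x‖⁻¹ • x)), Real.norm_eq_abs,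
        abs_of_nonneg (Real.rpow_nonneg hn.le _), mul_comm]
      exact mul_le_mul_of_nonneg_right (hC₁ _ (hmemS x hx)) (Real.rpow_nonneg hn.le _)
  have hfcont0 : ContinuousAt (fderiv ℝ F) 0 := by
    rw [ContinuousAt, hf0]
    have ht : Filter.Tendsto (fun x : V => C₁ * ‖x‖ ^ (β - 1)) (𝓝 0) (𝓝 0) := by
      have h1 : Filter.Tendsto (fun x : V => ‖x‖) (𝓝 0) (𝓝 0) := by
        simpa using tendsto_norm_zero
      have h2 : Filter.Tendsto (fun t : ℝ => t ^ (β - 1)) (𝓝 0) (𝓝 0) := by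
        have := (Real.continuousAt_rpow_const 0 (β - 1) (Or.inr (by linarith))).tendsto
        rwa [Real.zero_rpow (by linarith : β - 1 ≠ 0)] at this
      have := (h2.comp h1).const_mul C₁
      simpa using this
    exact squeeze_zero_norm hfbound ht
  have hfcont : Continuous (fderiv ℝ F) := by
    rw [continuous_iff_continuousAt]
    intro x
    by_cases hx : x = 0
    · subst hx; exact hfcont0
    · exact hfcontOn.continuousAt (isOpen_compl_singleton.mem_nhds (by simpa using hx))
  have hdiffAll : Differentiable ℝ F := by
    intro x
    by_cases hx : x = 0
    · subst hx; exact hder0.differentiableAt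
    · exact hdiff x hx
  exact ⟨contDiff_one_iff_fderiv.mpr ⟨hdiffAll, hfcont⟩, hf0⟩

/-- For `F(x) = ‖P₁(x)‖_{p₁}^{ν₁} ⋯ ‖P_s(x)‖_{p_s}^{ν_s} • P₀(x)`, with each `P_j`
a homogeneous polynomial of degree `m_j ≥ 1` vanishing only at the origin, each
`p_j ≥ 2` even, and `min_j ν_j + m₀ > 1`, the function `F` is continuously
differentiable on `ℝᵈ` with `DF(0) = 0`. -/
theorem stmt_16 {d s : ℕ} (hs : 1 ≤ s) (n : Fin s → ℕ)
    (m₀ : ℕ) (Q₀ : Fin d → MvPolynomial (Fin d) ℝ)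
    (hQ₀hom : ∀ i, (Q₀ i).IsHomogeneous m₀)
    (P₀ : (Fin d → ℝ) → (Fin d → ℝ))
    (hP₀ : ∀ x i, P₀ x i = MvPolynomial.eval x (Q₀ i))
    (m : Fin s → ℕ) (hm : ∀ j, 1 ≤ m j)
    (Q : ∀ j : Fin s, Fin (n j) → MvPolynomial (Fin d) ℝ)
    (hQhom : ∀ j i, (Q j i).IsHomogeneous (m j))
    (P : ∀ j : Fin s, (Fin d → ℝ) → (Fin (n j) → ℝ))
    (hP : ∀ j x i, P j x i = MvPolynomial.eval x (Q j i))
    (hPzero : ∀ j x, P j x = 0 → x = 0)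
    (p : Fin s → ℕ) (hpeven : ∀ j, Even (p j)) (hp2 : ∀ j, 2 ≤ p j)
    (ν : Fin s → ℝ) (hν : ∀ j, 0 < ν j)
    (νbar : ℝ) (hνbar : (∀ j, νbar ≤ ν j) ∧ ∃ j, ν j = νbar)
    (hdeg : 1 < νbar + m₀)
    (F : (Fin d → ℝ) → (Fin d → ℝ))
    (hF : ∀ x, F x = (∏ j, lpNorm (p j : ℝ) (P j x) ^ ν j) • P₀ x) :
    ContDiff ℝ 1 F ∧ fderiv ℝ F 0 = 0 := by
  have hp0 : ∀ j, (p j : ℝ) ≠ 0 := fun j => by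
    have := hp2 j
    positivity
  set g : Fin s → (Fin d → ℝ) → ℝ :=
    fun j x => ∑ i, (MvPolynomial.eval x (Q j i)) ^ (p j) with hg
  have hgnonneg : ∀ j x, 0 ≤ g j x := fun j x =>
    Finset.sum_nonneg fun i _ => (hpeven j).pow_nonneg _
  have hgne : ∀ j (x : Fin d → ℝ), x ≠ 0 → g j x ≠ 0 := by
    intro j x hx h0
    apply hx
    apply hPzero j
    funext i
    have hterm := (Finset.sum_eq_zero_iff_of_nonneg
      (fun i _ => (hpeven j).pow_nonneg (MvPolynomial.eval x (Q j i)))).mp h0 i (Finset.mem_univ i)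
    have hpne : p j ≠ 0 := by have := hp2 j; omega
    have := (pow_eq_zero_iff hpne).mp hterm
    simp [hP, this]
  have hlp : ∀ j x, lpNorm (p j : ℝ) (P j x) ^ ν j = g j x ^ (ν j / (p j : ℝ)) := by
    intro j x
    have hsum : (∑ i, |P j x i| ^ ((p j : ℕ) : ℝ)) = g j x := by
      refine Finset.sum_congr rfl fun i _ => ?_
      rw [Real.rpow_natCast, (hpeven j).pow_abs, hP]
    rw [lpNorm, hsum, ← Real.rpow_mul (hgnonneg j x), one_div, inv_mul_eq_div]
  set G : (Fin d → ℝ) → ℝ := fun x => ∏ j, g j x ^ (ν j / (p j : ℝ)) with hG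
  have hFG : ∀ x, F x = G x • P₀ x := by
    intro x
    rw [hF]
    congr 1
    exact Finset.prod_congr rfl fun j _ => hlp j x
  set β : ℝ := (∑ j, (m j : ℝ) * ν j) + m₀ with hβdef
  have hνbarpos : 0 < νbar := by
    obtain ⟨j₀, hj₀⟩ := hνbar.2
    rw [← hj₀]
    exact hν j₀
  have hβ : 1 < β := by
    obtain ⟨j₀, hj₀⟩ := hνbar.2
    have h1 : νbar ≤ (m j₀ : ℝ) * ν j₀ := by
      rw [hj₀]
      nlinarith [hνbarpos, (by exact_mod_cast hm j₀ : (1 : ℝ) ≤ (m j₀ : ℝ))]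
    have h2 : (m j₀ : ℝ) * ν j₀ ≤ ∑ j, (m j : ℝ) * ν j :=
      Finset.single_le_sum (f := fun j => (m j : ℝ) * ν j)
        (fun j _ => mul_nonneg (Nat.cast_nonneg _) (hν j).le) (Finset.mem_univ j₀)
    rw [hβdef]
    linarith [hdeg]
  have hgsmul : ∀ j (c : ℝ) (x : Fin d → ℝ), g j (c • x) = c ^ (m j * p j) * g j x := by
    intro j c x
    simp only [hg, Finset.mul_sum]
    refine Finset.sum_congr rfl fun i _ => ?_
    rw [aux_eval_smul (Q j i) (hQhom j i), mul_pow, ← pow_mul]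
  have hP₀smul : ∀ (c : ℝ) (x : Fin d → ℝ), P₀ (c • x) = (c ^ m₀ : ℝ) • P₀ x := by
    intro c x
    funext i
    rw [Pi.smul_apply, hP₀, hP₀, aux_eval_smul (Q₀ i) (hQ₀hom i), smul_eq_mul]
  have hGsmul : ∀ (c : ℝ), 0 < c → ∀ x, G (c • x) = c ^ (∑ j, (m j : ℝ) * ν j) * G x := by
    intro c hc x
    simp only [hG]
    rw [aux_rpow_sum Finset.univ hc, ← Finset.prod_mul_distrib]
    refine Finset.prod_congr rfl fun j _ => ?_
    rw [hgsmul j c x, Real.mul_rpow (pow_nonneg hc.le _) (hgnonneg j x)]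
    congr 1
    rw [← Real.rpow_natCast c (m j * p j), ← Real.rpow_mul hc.le]
    congr 1
    push_cast
    field_simp [hp0 j]
  have hhom : ∀ c : ℝ, 0 < c → ∀ x, F (c • x) = (c ^ β) • F x := by
    intro c hc x
    rw [hFG, hFG, hGsmul c hc x, hP₀smul c x, smul_smul, smul_smul]
    congr 1
    rw [hβdef, Real.rpow_add hc, Real.rpow_natCast]
    ring
  have hF0 : F 0 = 0 := by
    have hg0 : g ⟨0, hs⟩ (0 : Fin d → ℝ) = 0 := by
      have h := hgsmul ⟨0, hs⟩ 0 0
      rw [zero_smul] at h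
      have hne : m ⟨0, hs⟩ * p ⟨0, hs⟩ ≠ 0 :=
        Nat.mul_ne_zero (by have := hm ⟨0, hs⟩; omega) (by have := hp2 ⟨0, hs⟩; omega)
      rw [h, zero_pow hne, zero_mul]
    rw [hFG]
    have hG0 : G 0 = 0 := by
      apply Finset.prod_eq_zero (Finset.mem_univ (⟨0, hs⟩ : Fin s))
      rw [hg0, Real.zero_rpow]
      exact div_ne_zero (hν _).ne' (hp0 _)
    rw [hG0, zero_smul]
  have hsm : ContDiffOn ℝ 2 F {(0 : Fin d → ℝ)}ᶜ := by
    intro x hx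
    have hx' : x ≠ 0 := hx
    apply ContDiffAt.contDiffWithinAt
    have hP₀c : ContDiffAt ℝ 2 P₀ x := by
      apply ContDiff.contDiffAt
      rw [show P₀ = fun x i => MvPolynomial.eval x (Q₀ i) from
        funext fun x => funext fun i => hP₀ x i]
      exact contDiff_pi.mpr fun i => aux_contDiff_eval (Q₀ i)
    have hGc : ContDiffAt ℝ 2 G x := by
      apply contDiffAt_prod
      intro j _
      apply ContDiffAt.rpow_const_of_ne
      · exact (ContDiff.sum fun i _ => (aux_contDiff_eval (Q j i)).pow (p j)).contDiffAt
      · exact hgne j x hx'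
    rw [show F = fun x => G x • P₀ x from funext hFG]
    exact hGc.smul hP₀c
  exact aux_main F β hβ hsm hhom hF0
end
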